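/- arXiv:1712.05549 — 8 statements merged into one kernel-verified Lean document; each statement's English description precedes it below -/
import Mathlib

section
/- Let d ≥ 2 be an integer. There exists a constant C = C(d) > 0 such that the following holds for every finite field F of odd characteristic and every nontrivial additive character e of F. Let g : F^d → ℂ satisfy |g(x)| ≤ 1 for all x, let G ⊆ F^d be the support of g, and for z ∈ F let G_z : P → {0,1} be defined by G_z(x̄, x̄·x̄) = 1 if (x̄, z) ∈ G and G_z(x̄, x̄·x̄) = 0 otherwise. Then ‖ĝ‖_{L²(P,dσ)} ≤ C ( |G|^{1/2} + |G|^{3/8} |F|^{(d-1)/4} ( ∑_{z∈F} ‖(G_z dσ)^∨‖_{L⁴(F^d)} )^{1/2} ). -/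
open Finset

/-- The finite field extension operator for the paraboloid
`P = {(x̄, x̄·x̄) : x̄ ∈ F^{d-1}} ⊆ F^d`, with a function on `P` parameterized by `x̄`:
`(f dσ)^∨(x) = |F|^{-(d-1)} ∑_{ξ ∈ P} f(ξ) e(x·ξ)`. -/
noncomputable def extOp {F : Type} [Field F] [Fintype F] {d : ℕ} (e : AddChar F ℂ)
    (f : (Fin (d - 1) → F) → ℂ) (x : (Fin (d - 1) → F) × F) : ℂ :=
  ((Fintype.card F : ℂ) ^ (d - 1))⁻¹ *
    ∑ y : Fin (d - 1) → F, f y * e (∑ i, x.1 i * y i + x.2 * ∑ i, y i * y i)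

/-- The Fourier transform `ĝ(ξ) = ∑_{x ∈ F^d} g(x) e(−x·ξ)` of `g : F^d → ℂ`, restricted
to the paraboloid and parameterized by `ȳ ∈ F^{d-1}` (i.e. evaluated at `ξ = (ȳ, ȳ·ȳ)`). -/
noncomputable def fourierP {F : Type} [Field F] [Fintype F] {d : ℕ} (e : AddChar F ℂ)
    (g : (Fin (d - 1) → F) × F → ℂ) (y : Fin (d - 1) → F) : ℂ :=
  ∑ x : (Fin (d - 1) → F) × F, g x * e (-(∑ i, x.1 i * y i + x.2 * ∑ i, y i * y i))

/-- `‖ĝ‖_{L²(P,dσ)} = (|F|^{-(d-1)} ∑_{ξ∈P} |ĝ(ξ)|²)^{1/2}`. -/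
noncomputable def l2P {F : Type} [Field F] [Fintype F] {d : ℕ} (e : AddChar F ℂ)
    (g : (Fin (d - 1) → F) × F → ℂ) : ℝ :=
  (((Fintype.card F : ℝ) ^ (d - 1))⁻¹ *
    ∑ y : Fin (d - 1) → F, ‖fourierP e g y‖ ^ 2) ^ ((1 : ℝ) / 2)

namespace MT4

open Complex

set_option linter.unusedSectionVars false

variable {F : Type} [Field F] [Fintype F] [DecidableEq F]

lemma map_sum' {M : Type*} [CommMonoid M] (e : AddChar F M) {ι : Type*} (s : Finset ι)
    (f : ι → F) : e (∑ i ∈ s, f i) = ∏ i ∈ s, e (f i) := by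
  induction s using Finset.cons_induction with
  | empty => simp
  | cons a s ha ih => rw [Finset.sum_cons, Finset.prod_cons, AddChar.map_add_eq_mul, ih]

lemma sum_e_mul (e : AddChar F ℂ) (he : e ≠ 1) (c : F) :
    ∑ t : F, e (c * t) = if c = 0 then (Fintype.card F : ℂ) else 0 := by
  split_ifs with h
  · subst h; simp [Finset.card_univ]
  · have h1 : e.mulShift c ≠ 1 := AddChar.IsPrimitive.of_ne_one he h
    have h0 : e.mulShift c ≠ 0 := by
      rw [AddChar.ne_zero_iff]
      exact AddChar.ne_one_iff.mp h1
    simpa using AddChar.sum_eq_zero_iff_ne_zero.mpr h0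

lemma sum_e_dot {m : ℕ} (e : AddChar F ℂ) (he : e ≠ 1) (v : Fin m → F) :
    ∑ y : Fin m → F, e (∑ i, v i * y i)
      = if v = 0 then ((Fintype.card F : ℂ) ^ m) else 0 := by
  calc ∑ y : Fin m → F, e (∑ i, v i * y i)
      = ∑ y : Fin m → F, ∏ i, e (v i * y i) :=
        Fintype.sum_congr _ _ fun y => map_sum' e univ _
    _ = ∏ i, ∑ t : F, e (v i * t) := by
        rw [← Fintype.piFinset_univ]
        exact Finset.sum_prod_piFinset (univ : Finset F) (fun i t => e (v i * t))
    _ = ∏ i, (if v i = 0 then (Fintype.card F : ℂ) else 0) :=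
        Finset.prod_congr rfl fun i _ => sum_e_mul e he (v i)
    _ = if v = 0 then ((Fintype.card F : ℂ) ^ m) else 0 := by
        by_cases h : v = 0
        · subst h; simp
        · rw [if_neg h]
          obtain ⟨i, hi⟩ : ∃ i, v i ≠ 0 := by
            by_contra hA; push_neg at hA; exact h (funext hA)
          exact Finset.prod_eq_zero (mem_univ i) (if_neg hi)

noncomputable def GS (e : AddChar F ℂ) (s : F) : ℂ := ∑ t : F, e (s * (t * t))

noncomputable def Kk (e : AddChar F ℂ) {m : ℕ} (u : Fin m → F) (s : F) : ℂ :=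
  ∑ y : Fin m → F, e (∑ i, u i * y i + s * ∑ i, y i * y i)

lemma Kk_zero {m : ℕ} (e : AddChar F ℂ) (he : e ≠ 1) (u : Fin m → F) :
    Kk e u 0 = if u = 0 then ((Fintype.card F : ℂ) ^ m) else 0 := by
  unfold Kk
  simp only [zero_mul, add_zero]
  exact sum_e_dot e he u

lemma sum_quad (e : AddChar F ℂ) (h2 : (2 : F) ≠ 0) {s : F} (hs : s ≠ 0) (c : F) :
    ∑ t : F, e (c * t + s * (t * t)) = e (-(c * c * (4 * s)⁻¹)) * GS e s := by
  have h4 : (4 : F) ≠ 0 := by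
    have : (4 : F) = 2 * 2 := by norm_num
    rw [this]; exact mul_ne_zero h2 h2
  rw [GS, Finset.mul_sum]
  refine Fintype.sum_equiv (Equiv.addRight (c * (2 * s)⁻¹)) _ _ fun t => ?_
  rw [← AddChar.map_add_eq_mul]
  congr 1
  show c * t + s * (t * t)
      = -(c * c * (4 * s)⁻¹)
        + s * ((t + c * (2 * s)⁻¹) * (t + c * (2 * s)⁻¹))
  field_simp
  ring

lemma Kk_gauss {m : ℕ} (e : AddChar F ℂ) (h2 : (2 : F) ≠ 0) {s : F} (hs : s ≠ 0)
    (u : Fin m → F) :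
    Kk e u s = e (-((∑ i, u i * u i) * (4 * s)⁻¹)) * GS e s ^ m := by
  unfold Kk
  calc ∑ y : Fin m → F, e (∑ i, u i * y i + s * ∑ i, y i * y i)
      = ∑ y : Fin m → F, ∏ i, e (u i * y i + s * (y i * y i)) := by
        refine Fintype.sum_congr _ _ fun y => ?_
        rw [← map_sum']
        congr 1
        rw [Finset.mul_sum, ← Finset.sum_add_distrib]
    _ = ∏ i, ∑ t : F, e (u i * t + s * (t * t)) := by
        rw [← Fintype.piFinset_univ]
        exact Finset.sum_prod_piFinset (univ : Finset F) (fun i t => e (u i * t + s * (t * t)))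
    _ = ∏ i : Fin m, (e (-(u i * u i * (4 * s)⁻¹)) * GS e s) :=
        Finset.prod_congr rfl fun i _ => sum_quad e h2 hs (u i)
    _ = (∏ i : Fin m, e (-(u i * u i * (4 * s)⁻¹))) * GS e s ^ m := by
        rw [Finset.prod_mul_distrib, Finset.prod_const, Finset.card_univ, Fintype.card_fin]
    _ = e (-((∑ i, u i * u i) * (4 * s)⁻¹)) * GS e s ^ m := by
        rw [← map_sum']
        congr 2
        rw [Finset.sum_mul]
        rw [← Finset.sum_neg_distrib]

lemma GS_mul_conj (e : AddChar F ℂ) (he : e ≠ 1) (h2 : (2 : F) ≠ 0) {s : F} (hs : s ≠ 0) :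
    GS e s * (starRingEnd ℂ) (GS e s) = (Fintype.card F : ℂ) := by
  have hconj : (starRingEnd ℂ) (GS e s) = ∑ t : F, e (-(s * (t * t))) := by
    rw [GS, map_sum]
    exact Finset.sum_congr rfl fun t _ => (AddChar.map_neg_eq_conj e _).symm
  rw [hconj, GS, Finset.sum_mul_sum]
  calc ∑ t : F, ∑ t' : F, e (s * (t * t)) * e (-(s * (t' * t')))
      = ∑ t' : F, ∑ h : F, e (s * (h * h) + (2 * s * h) * t') := by
        rw [Finset.sum_comm]
        refine Finset.sum_congr rfl fun t' _ => ?_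
        refine Fintype.sum_equiv (Equiv.subRight t') _ _ fun t => ?_
        rw [← AddChar.map_add_eq_mul]
        congr 1
        show s * (t * t) + -(s * (t' * t'))
            = s * ((t - t') * (t - t')) + 2 * s * (t - t') * t'
        ring
    _ = ∑ h : F, e (s * (h * h)) * (if 2 * s * h = 0 then (Fintype.card F : ℂ) else 0) := by
        rw [Finset.sum_comm]
        refine Finset.sum_congr rfl fun h _ => ?_
        rw [← sum_e_mul e he (2 * s * h), Finset.mul_sum]
        exact Finset.sum_congr rfl fun t' _ => (AddChar.map_add_eq_mul e _ _)
    _ = (Fintype.card F : ℂ) := by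
        rw [Finset.sum_eq_single 0]
        · simp
        · intro h _ hh
          rw [if_neg (by exact mul_ne_zero (mul_ne_zero h2 hs) hh), mul_zero]
        · intro h; exact absurd (Finset.mem_univ 0) h

lemma norm_GS_sq (e : AddChar F ℂ) (he : e ≠ 1) (h2 : (2 : F) ≠ 0) {s : F} (hs : s ≠ 0) :
    ‖GS e s‖ ^ 2 = (Fintype.card F : ℝ) := by
  have := GS_mul_conj e he h2 hs
  have h := congrArg norm this
  rwa [norm_mul, RCLike.norm_conj, ← sq, Complex.norm_natCast] at h

lemma sum_e_prod {m : ℕ} (e : AddChar F ℂ) (he : e ≠ 1) (v : Fin m → F) (c : F) :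
    ∑ x : (Fin m → F) × F, e (∑ i, v i * x.1 i + c * x.2)
      = (if v = 0 then ((Fintype.card F : ℂ) ^ m) else 0)
        * (if c = 0 then (Fintype.card F : ℂ) else 0) := by
  rw [Fintype.sum_prod_type, ← sum_e_dot e he v, ← sum_e_mul e he c, Finset.sum_mul_sum]
  exact Finset.sum_congr rfl fun u _ => Finset.sum_congr rfl fun t _ =>
    (AddChar.map_add_eq_mul e _ _)

/-- Real version of the orthogonality weight. -/
noncomputable def Wre {m : ℕ} [DecidableEq F] (y1 y2 y3 y4 : Fin m → F) : ℝ :=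
  (if y1 + y2 - y3 - y4 = (0 : Fin m → F) then ((Fintype.card F : ℝ) ^ m) else 0)
    * (if (∑ i, y1 i * y1 i) + (∑ i, y2 i * y2 i) - (∑ i, y3 i * y3 i) - (∑ i, y4 i * y4 i)
        = (0 : F) then (Fintype.card F : ℝ) else 0)

lemma Wre_nonneg {m : ℕ} (y1 y2 y3 y4 : Fin m → F) : 0 ≤ Wre y1 y2 y3 y4 := by
  unfold Wre
  have h1 : (0:ℝ) ≤ (Fintype.card F : ℝ) ^ m := by positivity
  have h2 : (0:ℝ) ≤ (Fintype.card F : ℝ) := by positivity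
  refine mul_nonneg ?_ ?_ <;> split_ifs <;> simp [h1, h2]

/-- The quadruple-sum expansion of the 4th moment of the unnormalized extension operator. -/
lemma fourth_moment {m : ℕ} (e : AddChar F ℂ) (he : e ≠ 1) (b : (Fin m → F) → ℂ) :
    (↑(∑ x : (Fin m → F) × F,
        ‖∑ y, b y * e (∑ i, x.1 i * y i + x.2 * ∑ i, y i * y i)‖ ^ 4) : ℂ)
      = ∑ y1, ∑ y2, ∑ y3, ∑ y4,
          (b y1 * b y2 * (starRingEnd ℂ) (b y3) * (starRingEnd ℂ) (b y4))
            * (Wre y1 y2 y3 y4 : ℂ) := by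
  classical
  have expand : ∀ (c1 c2 c3 c4 : (Fin m → F) → ℂ) (E1 E2 E3 E4 : (Fin m → F) → ℂ),
      (∑ y, c1 y * E1 y) * (∑ y, c2 y * E2 y) * (∑ y, c3 y * E3 y) * (∑ y, c4 y * E4 y)
        = ∑ y1, ∑ y2, ∑ y3, ∑ y4,
            (c1 y1 * c2 y2 * c3 y3 * c4 y4) * (E1 y1 * E2 y2 * E3 y3 * E4 y4) := by
    intro c1 c2 c3 c4 E1 E2 E3 E4
    have step : (∑ y, c1 y * E1 y) * (∑ y, c2 y * E2 y) * ((∑ y, c3 y * E3 y)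
        * (∑ y, c4 y * E4 y))
        = ∑ y1, ∑ y3, (∑ y2, (c1 y1 * E1 y1) * (c2 y2 * E2 y2))
            * (∑ y4, (c3 y3 * E3 y3) * (c4 y4 * E4 y4)) := by
      rw [Finset.sum_mul_sum, Finset.sum_mul_sum, Finset.sum_mul_sum]
    calc (∑ y, c1 y * E1 y) * (∑ y, c2 y * E2 y) * (∑ y, c3 y * E3 y) * (∑ y, c4 y * E4 y)
        = (∑ y, c1 y * E1 y) * (∑ y, c2 y * E2 y) * ((∑ y, c3 y * E3 y)
            * (∑ y, c4 y * E4 y)) := by ring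
      _ = ∑ y1, ∑ y3, (∑ y2, (c1 y1 * E1 y1) * (c2 y2 * E2 y2))
            * (∑ y4, (c3 y3 * E3 y3) * (c4 y4 * E4 y4)) := step
      _ = ∑ y1, ∑ y3, ∑ y2, ∑ y4,
            ((c1 y1 * E1 y1) * (c2 y2 * E2 y2)) * ((c3 y3 * E3 y3) * (c4 y4 * E4 y4)) := by
          refine Finset.sum_congr rfl fun y1 _ => Finset.sum_congr rfl fun y3 _ => ?_
          rw [Finset.sum_mul_sum]
      _ = ∑ y1, ∑ y2, ∑ y3, ∑ y4,
            (c1 y1 * c2 y2 * c3 y3 * c4 y4) * (E1 y1 * E2 y2 * E3 y3 * E4 y4) := by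
          refine Finset.sum_congr rfl fun y1 _ => ?_
          rw [Finset.sum_comm]
          refine Finset.sum_congr rfl fun y2 _ => Finset.sum_congr rfl fun y3 _ =>
            Finset.sum_congr rfl fun y4 _ => ?_
          ring
  have hconjS : ∀ x : (Fin m → F) × F,
      (starRingEnd ℂ) (∑ y, b y * e (∑ i, x.1 i * y i + x.2 * ∑ i, y i * y i))
        = ∑ y, (starRingEnd ℂ) (b y)
            * e (-(∑ i, x.1 i * y i + x.2 * ∑ i, y i * y i)) := by
    intro x
    rw [map_sum]
    refine Finset.sum_congr rfl fun y _ => ?_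
    rw [map_mul, AddChar.map_neg_eq_conj]
  have habs : ∀ z : ℂ, ((‖z‖ ^ 4 : ℝ) : ℂ) = z * z * (starRingEnd ℂ) z * (starRingEnd ℂ) z := by
    intro z
    have h1 : z * (starRingEnd ℂ) z = ((‖z‖ ^ 2 : ℝ) : ℂ) := by
      rw [Complex.mul_conj, Complex.normSq_eq_norm_sq]
    have h2 : z * z * (starRingEnd ℂ) z * (starRingEnd ℂ) z
        = (z * (starRingEnd ℂ) z) * (z * (starRingEnd ℂ) z) := by ring
    rw [h2, h1]
    push_cast
    ring
  push_cast
  calc ∑ x : (Fin m → F) × F,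
        ((‖∑ y, b y * e (∑ i, x.1 i * y i + x.2 * ∑ i, y i * y i)‖ : ℂ) ^ 4)
      = ∑ x : (Fin m → F) × F, ∑ y1, ∑ y2, ∑ y3, ∑ y4,
          (b y1 * b y2 * (starRingEnd ℂ) (b y3) * (starRingEnd ℂ) (b y4))
            * (e (∑ i, x.1 i * y1 i + x.2 * ∑ i, y1 i * y1 i)
              * e (∑ i, x.1 i * y2 i + x.2 * ∑ i, y2 i * y2 i)
              * e (-(∑ i, x.1 i * y3 i + x.2 * ∑ i, y3 i * y3 i))
              * e (-(∑ i, x.1 i * y4 i + x.2 * ∑ i, y4 i * y4 i))) := by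
        refine Finset.sum_congr rfl fun x _ => ?_
        have h0 : ∀ z : ℂ, ((‖z‖ : ℂ) ^ 4) = ((‖z‖ ^ 4 : ℝ) : ℂ) := by
          intro z; norm_cast
        rw [h0, habs, hconjS x]
        exact expand b b _ _ _ _ _ _
    _ = ∑ y1, ∑ y2, ∑ y3, ∑ y4,
          (b y1 * b y2 * (starRingEnd ℂ) (b y3) * (starRingEnd ℂ) (b y4))
            * (∑ x : (Fin m → F) × F,
                e (∑ i, x.1 i * y1 i + x.2 * ∑ i, y1 i * y1 i)
              * e (∑ i, x.1 i * y2 i + x.2 * ∑ i, y2 i * y2 i)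
              * e (-(∑ i, x.1 i * y3 i + x.2 * ∑ i, y3 i * y3 i))
              * e (-(∑ i, x.1 i * y4 i + x.2 * ∑ i, y4 i * y4 i))) := by
        rw [Finset.sum_comm]
        refine Finset.sum_congr rfl fun y1 _ => ?_
        rw [Finset.sum_comm]
        refine Finset.sum_congr rfl fun y2 _ => ?_
        rw [Finset.sum_comm]
        refine Finset.sum_congr rfl fun y3 _ => ?_
        rw [Finset.sum_comm]
        refine Finset.sum_congr rfl fun y4 _ => ?_
        rw [Finset.mul_sum]
    _ = ∑ y1, ∑ y2, ∑ y3, ∑ y4,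
          (b y1 * b y2 * (starRingEnd ℂ) (b y3) * (starRingEnd ℂ) (b y4))
            * (Wre y1 y2 y3 y4 : ℂ) := by
        refine Finset.sum_congr rfl fun y1 _ => Finset.sum_congr rfl fun y2 _ =>
          Finset.sum_congr rfl fun y3 _ => Finset.sum_congr rfl fun y4 _ => ?_
        congr 1
        have hv : ∀ x : (Fin m → F) × F, ∑ i, (y1 + y2 - y3 - y4) i * x.1 i
            = ∑ i, x.1 i * y1 i + ∑ i, x.1 i * y2 i
              - ∑ i, x.1 i * y3 i - ∑ i, x.1 i * y4 i := by
          intro x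
          calc ∑ i, (y1 + y2 - y3 - y4) i * x.1 i
              = ∑ i, (x.1 i * y1 i + x.1 i * y2 i - x.1 i * y3 i - x.1 i * y4 i) := by
                refine Finset.sum_congr rfl fun i _ => ?_
                simp only [Pi.add_apply, Pi.sub_apply]
                ring
            _ = ∑ i, x.1 i * y1 i + ∑ i, x.1 i * y2 i
                - ∑ i, x.1 i * y3 i - ∑ i, x.1 i * y4 i := by
                rw [Finset.sum_sub_distrib, Finset.sum_sub_distrib, Finset.sum_add_distrib]
        have hchars : ∀ x : (Fin m → F) × F,
            e (∑ i, x.1 i * y1 i + x.2 * ∑ i, y1 i * y1 i)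
              * e (∑ i, x.1 i * y2 i + x.2 * ∑ i, y2 i * y2 i)
              * e (-(∑ i, x.1 i * y3 i + x.2 * ∑ i, y3 i * y3 i))
              * e (-(∑ i, x.1 i * y4 i + x.2 * ∑ i, y4 i * y4 i))
              = e (∑ i, (y1 + y2 - y3 - y4) i * x.1 i
                  + ((∑ i, y1 i * y1 i) + (∑ i, y2 i * y2 i) - (∑ i, y3 i * y3 i)
                      - (∑ i, y4 i * y4 i)) * x.2) := by
          intro x
          rw [← AddChar.map_add_eq_mul, ← AddChar.map_add_eq_mul, ← AddChar.map_add_eq_mul]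
          congr 1
          rw [hv x]
          ring
        rw [Finset.sum_congr rfl fun x _ => hchars x, sum_e_prod e he _ _, Wre]
        rw [Complex.ofReal_mul, apply_ite (fun r : ℝ => (r : ℂ)),
          apply_ite (fun r : ℝ => (r : ℂ))]
        push_cast
        rfl

lemma l4_le {m : ℕ} (e : AddChar F ℂ) (he : e ≠ 1) (a : (Fin m → F) → ℂ)
    (r : (Fin m → F) → ℝ) (hr : ∀ w, 0 ≤ r w) (ha : ∀ w, ‖a w‖ ≤ r w) :
    ∑ x : (Fin m → F) × F, ‖∑ y, a y * e (∑ i, x.1 i * y i + x.2 * ∑ i, y i * y i)‖ ^ 4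
      ≤ ∑ x : (Fin m → F) × F,
          ‖∑ y, (r y : ℂ) * e (∑ i, x.1 i * y i + x.2 * ∑ i, y i * y i)‖ ^ 4 := by
  classical
  set Q : ℝ := ∑ y1, ∑ y2, ∑ y3, ∑ y4,
    (r y1 * r y2 * r y3 * r y4) * Wre y1 y2 y3 y4 with hQ
  have hR : ∑ x : (Fin m → F) × F,
      ‖∑ y, (r y : ℂ) * e (∑ i, x.1 i * y i + x.2 * ∑ i, y i * y i)‖ ^ 4 = Q := by
    have h := fourth_moment e he (fun w => (r w : ℂ))
    have h2 : (↑(∑ x : (Fin m → F) × F,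
        ‖∑ y, (r y : ℂ) * e (∑ i, x.1 i * y i + x.2 * ∑ i, y i * y i)‖ ^ 4) : ℂ)
        = (Q : ℂ) := by
      rw [h, hQ]
      push_cast
      refine Finset.sum_congr rfl fun y1 _ => Finset.sum_congr rfl fun y2 _ =>
        Finset.sum_congr rfl fun y3 _ => Finset.sum_congr rfl fun y4 _ => ?_
      rw [Complex.conj_ofReal, Complex.conj_ofReal]
    exact_mod_cast h2
  have hAbs : ∑ x : (Fin m → F) × F,
      ‖∑ y, a y * e (∑ i, x.1 i * y i + x.2 * ∑ i, y i * y i)‖ ^ 4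
      = ‖(∑ y1, ∑ y2, ∑ y3, ∑ y4,
          (a y1 * a y2 * (starRingEnd ℂ) (a y3) * (starRingEnd ℂ) (a y4))
            * (Wre y1 y2 y3 y4 : ℂ) : ℂ)‖ := by
    rw [← fourth_moment e he a, Complex.norm_real, Real.norm_eq_abs, _root_.abs_of_nonneg]
    exact Finset.sum_nonneg fun x _ => by positivity
  rw [hAbs, hR]
  have step : ∀ y1 y2 y3 y4 : Fin m → F,
      ‖(a y1 * a y2 * (starRingEnd ℂ) (a y3) * (starRingEnd ℂ) (a y4))
          * (Wre y1 y2 y3 y4 : ℂ)‖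
        ≤ (r y1 * r y2 * r y3 * r y4) * Wre y1 y2 y3 y4 := by
    intro y1 y2 y3 y4
    rw [norm_mul, norm_mul, norm_mul, norm_mul, RCLike.norm_conj, RCLike.norm_conj,
      Complex.norm_real, Real.norm_eq_abs, _root_.abs_of_nonneg (Wre_nonneg y1 y2 y3 y4)]
    have h4 : ‖a y1‖ * ‖a y2‖ * ‖a y3‖ * ‖a y4‖ ≤ r y1 * r y2 * r y3 * r y4 :=
      mul_le_mul (mul_le_mul (mul_le_mul (ha y1) (ha y2) (norm_nonneg _) (hr y1))
        (ha y3) (norm_nonneg _) (mul_nonneg (hr y1) (hr y2))) (ha y4) (norm_nonneg _)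
        (mul_nonneg (mul_nonneg (hr y1) (hr y2)) (hr y3))
    exact mul_le_mul_of_nonneg_right h4 (Wre_nonneg y1 y2 y3 y4)
  calc ‖(∑ y1, ∑ y2, ∑ y3, ∑ y4,
          (a y1 * a y2 * (starRingEnd ℂ) (a y3) * (starRingEnd ℂ) (a y4))
            * (Wre y1 y2 y3 y4 : ℂ) : ℂ)‖
      ≤ ∑ y1, ∑ y2, ∑ y3, ∑ y4,
          (r y1 * r y2 * r y3 * r y4) * Wre y1 y2 y3 y4 := by
        refine le_trans (norm_sum_le _ _) (Finset.sum_le_sum fun y1 _ => ?_)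
        refine le_trans (norm_sum_le _ _) (Finset.sum_le_sum fun y2 _ => ?_)
        refine le_trans (norm_sum_le _ _) (Finset.sum_le_sum fun y3 _ => ?_)
        refine le_trans (norm_sum_le _ _) (Finset.sum_le_sum fun y4 _ => ?_)
        exact step y1 y2 y3 y4
    _ = Q := hQ.symm

lemma extOp_l4_le {d : ℕ} (e : AddChar F ℂ) (he : e ≠ 1) (a : (Fin (d-1) → F) → ℂ)
    (r : (Fin (d-1) → F) → ℝ) (hr : ∀ w, 0 ≤ r w) (ha : ∀ w, ‖a w‖ ≤ r w) :
    ∑ x : (Fin (d-1) → F) × F, ‖extOp e a x‖ ^ 4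
      ≤ ∑ x : (Fin (d-1) → F) × F, ‖extOp e (fun w => (r w : ℂ)) x‖ ^ 4 := by
  have h := l4_le e he a r hr ha
  simp only [extOp, norm_mul, mul_pow, ← Finset.mul_sum]
  exact mul_le_mul_of_nonneg_left h (by positivity)

noncomputable def Bz {d : ℕ} (e : AddChar F ℂ) (g : (Fin (d-1) → F) × F → ℂ) (z : F)
    (x : (Fin (d-1) → F) × F) : ℂ :=
  if x.2 = z then 0
  else ((Fintype.card F : ℂ) ^ (d-1))⁻¹ * ∑ w, g (w, z) * Kk e (x.1 - w) (x.2 - z)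

lemma ext_fourier_eq {d : ℕ} (e : AddChar F ℂ) (g : (Fin (d-1) → F) × F → ℂ)
    (x : (Fin (d-1) → F) × F) :
    extOp e (fourierP e g) x = ((Fintype.card F : ℂ) ^ (d-1))⁻¹ *
      ∑ x' : (Fin (d-1) → F) × F, g x' * Kk e (x.1 - x'.1) (x.2 - x'.2) := by
  unfold extOp fourierP Kk
  congr 1
  calc ∑ y : Fin (d-1) → F, (∑ x' : (Fin (d-1) → F) × F,
          g x' * e (-(∑ i, x'.1 i * y i + x'.2 * ∑ i, y i * y i)))
            * e (∑ i, x.1 i * y i + x.2 * ∑ i, y i * y i)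
      = ∑ y : Fin (d-1) → F, ∑ x' : (Fin (d-1) → F) × F,
          g x' * (e (-(∑ i, x'.1 i * y i + x'.2 * ∑ i, y i * y i))
            * e (∑ i, x.1 i * y i + x.2 * ∑ i, y i * y i)) := by
        refine Finset.sum_congr rfl fun y _ => ?_
        rw [Finset.sum_mul]
        exact Finset.sum_congr rfl fun x' _ => by ring
    _ = ∑ x' : (Fin (d-1) → F) × F, ∑ y : Fin (d-1) → F,
          g x' * (e (-(∑ i, x'.1 i * y i + x'.2 * ∑ i, y i * y i))
            * e (∑ i, x.1 i * y i + x.2 * ∑ i, y i * y i)) := Finset.sum_comm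
    _ = ∑ x' : (Fin (d-1) → F) × F,
          g x' * ∑ y : Fin (d-1) → F,
            e (∑ i, (x.1 - x'.1) i * y i + (x.2 - x'.2) * ∑ i, y i * y i) := by
        refine Finset.sum_congr rfl fun x' _ => ?_
        rw [Finset.mul_sum]
        refine Finset.sum_congr rfl fun y _ => ?_
        congr 1
        rw [← AddChar.map_add_eq_mul]
        congr 1
        have hsub : ∑ i, (x.1 - x'.1) i * y i
            = ∑ i, x.1 i * y i - ∑ i, x'.1 i * y i := by
          rw [← Finset.sum_sub_distrib]
          refine Finset.sum_congr rfl fun i _ => ?_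
          simp only [Pi.sub_apply]
          ring
        rw [hsub]
        ring

lemma decomp {d : ℕ} (e : AddChar F ℂ) (he : e ≠ 1) (g : (Fin (d-1) → F) × F → ℂ)
    (x : (Fin (d-1) → F) × F) :
    extOp e (fourierP e g) x = g x + ∑ z : F, Bz e g z x := by
  classical
  have hcard : ((Fintype.card F : ℂ) ^ (d-1)) ≠ 0 := by
    have : (Fintype.card F : ℂ) ≠ 0 := by
      exact_mod_cast Nat.cast_ne_zero.mpr Fintype.card_ne_zero
    exact pow_ne_zero _ this
  rw [ext_fourier_eq e g x]
  have hsplit : ∑ x' : (Fin (d-1) → F) × F, g x' * Kk e (x.1 - x'.1) (x.2 - x'.2)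
      = ∑ z : F, ∑ w : Fin (d-1) → F, g (w, z) * Kk e (x.1 - w) (x.2 - z) := by
    rw [Fintype.sum_prod_type]
    exact Finset.sum_comm
  rw [hsplit]
  set T : F → ℂ := fun z => ∑ w : Fin (d-1) → F, g (w, z) * Kk e (x.1 - w) (x.2 - z) with hT
  have hTx2 : T x.2 = g x * ((Fintype.card F : ℂ) ^ (d-1)) := by
    rw [hT]
    simp only [sub_self]
    calc ∑ w : Fin (d-1) → F, g (w, x.2) * Kk e (x.1 - w) 0
        = ∑ w : Fin (d-1) → F,
            (if w = x.1 then g (w, x.2) * ((Fintype.card F : ℂ) ^ (d-1)) else 0) := by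
          refine Finset.sum_congr rfl fun w _ => ?_
          rw [Kk_zero e he]
          simp only [sub_eq_zero]
          by_cases h : w = x.1
          · subst h; rw [if_pos rfl, if_pos rfl]
          · rw [if_neg (fun hh => h hh.symm), if_neg h, mul_zero]
      _ = g (x.1, x.2) * ((Fintype.card F : ℂ) ^ (d-1)) := by
          rw [Finset.sum_ite_eq' univ x.1
            (fun w => g (w, x.2) * ((Fintype.card F : ℂ) ^ (d-1)))]
          simp
      _ = g x * ((Fintype.card F : ℂ) ^ (d-1)) := by rw [Prod.mk.eta]
  have hBz : ∑ z : F, Bz e g z x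
      = ((Fintype.card F : ℂ) ^ (d-1))⁻¹ * ∑ z ∈ univ.erase x.2, T z := by
    rw [← Finset.add_sum_erase _ _ (Finset.mem_univ x.2)]
    have h1 : Bz e g x.2 x = 0 := by rw [Bz, if_pos rfl]
    rw [h1, zero_add, Finset.mul_sum]
    refine Finset.sum_congr rfl fun z hz => ?_
    have hz2 : x.2 ≠ z := (Finset.ne_of_mem_erase hz).symm
    rw [Bz, if_neg hz2, hT]
  rw [← Finset.add_sum_erase _ T (Finset.mem_univ x.2), mul_add, hTx2, hBz]
  congr 1
  rw [mul_comm (g x), ← mul_assoc, inv_mul_cancel₀ hcard, one_mul]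

lemma parsevalC {d : ℕ} (e : AddChar F ℂ) (g : (Fin (d-1) → F) × F → ℂ) :
    ((((Fintype.card F : ℝ) ^ (d-1))⁻¹ * ∑ y, ‖fourierP e g y‖ ^ 2 : ℝ) : ℂ)
      = ∑ x : (Fin (d-1) → F) × F,
          g x * (starRingEnd ℂ) (extOp e (fourierP e g) x) := by
  have hconj : ∀ x : (Fin (d-1) → F) × F,
      (starRingEnd ℂ) (extOp e (fourierP e g) x)
        = ((Fintype.card F : ℂ) ^ (d-1))⁻¹ * ∑ y, (starRingEnd ℂ) (fourierP e g y)
            * e (-(∑ i, x.1 i * y i + x.2 * ∑ i, y i * y i)) := by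
    intro x
    rw [extOp, map_mul, map_inv₀, map_pow, Complex.conj_natCast, map_sum]
    congr 1
    refine Finset.sum_congr rfl fun y _ => ?_
    rw [map_mul, AddChar.map_neg_eq_conj]
  calc ((((Fintype.card F : ℝ) ^ (d-1))⁻¹ * ∑ y, ‖fourierP e g y‖ ^ 2 : ℝ) : ℂ)
      = ((Fintype.card F : ℂ) ^ (d-1))⁻¹
          * ∑ y, (starRingEnd ℂ) (fourierP e g y) * fourierP e g y := by
        push_cast
        congr 1
        refine Finset.sum_congr rfl fun y _ => ?_
        rw [mul_comm, Complex.mul_conj, Complex.normSq_eq_norm_sq]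
        push_cast
        ring
    _ = ((Fintype.card F : ℂ) ^ (d-1))⁻¹ * ∑ y, ∑ x : (Fin (d-1) → F) × F,
          g x * ((starRingEnd ℂ) (fourierP e g y)
            * e (-(∑ i, x.1 i * y i + x.2 * ∑ i, y i * y i))) := by
        congr 1
        refine Finset.sum_congr rfl fun y _ => ?_
        calc (starRingEnd ℂ) (fourierP e g y) * fourierP e g y
            = (starRingEnd ℂ) (fourierP e g y) * ∑ x : (Fin (d-1) → F) × F,
                g x * e (-(∑ i, x.1 i * y i + x.2 * ∑ i, y i * y i)) := by
              rw [fourierP]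
          _ = ∑ x : (Fin (d-1) → F) × F, g x * ((starRingEnd ℂ) (fourierP e g y)
                * e (-(∑ i, x.1 i * y i + x.2 * ∑ i, y i * y i))) := by
              rw [Finset.mul_sum]
              exact Finset.sum_congr rfl fun x _ => by ring
    _ = ((Fintype.card F : ℂ) ^ (d-1))⁻¹ * ∑ x : (Fin (d-1) → F) × F, ∑ y,
          g x * ((starRingEnd ℂ) (fourierP e g y)
            * e (-(∑ i, x.1 i * y i + x.2 * ∑ i, y i * y i))) := by
        rw [Finset.sum_comm]
    _ = ∑ x : (Fin (d-1) → F) × F,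
          g x * (starRingEnd ℂ) (extOp e (fourierP e g) x) := by
        rw [Finset.mul_sum]
        refine Finset.sum_congr rfl fun x _ => ?_
        rw [hconj x, Finset.mul_sum, Finset.mul_sum, Finset.mul_sum]
        refine Finset.sum_congr rfl fun y _ => ?_
        ring

lemma Bz_l4 {d : ℕ} (e : AddChar F ℂ) (he : e ≠ 1) (h2 : (2 : F) ≠ 0)
    (g : (Fin (d-1) → F) × F → ℂ) (z : F) :
    ∑ x : (Fin (d-1) → F) × F, ‖Bz e g z x‖ ^ 4
      ≤ (Fintype.card F : ℝ) ^ (2*(d-1))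
        * ∑ x : (Fin (d-1) → F) × F, ‖extOp e (fun w => g (w, z)) x‖ ^ 4 := by
  classical
  set a : (Fin (d-1) → F) → ℂ := fun w => g (w, z) with haa
  set h : F → ℝ := fun t' => ∑ u : Fin (d-1) → F, ‖extOp e a (u, t')‖ ^ 4 with hh
  have hh0 : ∀ t', 0 ≤ h t' := fun t' => Finset.sum_nonneg fun u _ => by positivity
  have key : ∀ t : F, t ≠ z → ∀ u : Fin (d-1) → F,
      ‖Bz e g z (u, t)‖ ^ 4
        = (Fintype.card F : ℝ) ^ (2*(d-1)) * ‖extOp e a (((2*(t-z))⁻¹) • u, -(4*(t-z))⁻¹)‖ ^ 4 := by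
    intro t ht u
    set s : F := t - z with hs
    have hs0 : s ≠ 0 := sub_ne_zero.mpr ht
    have hBz : Bz e g z (u, t)
        = GS e s ^ (d-1) * (e (-((∑ i, u i * u i) * (4*s)⁻¹))
            * extOp e a (((2*s)⁻¹) • u, -(4*s)⁻¹)) := by
      rw [Bz, if_neg ht]
      have hKk : ∀ w : Fin (d-1) → F, Kk e (u - w) s
          = e (-((∑ i, (u - w) i * (u - w) i) * (4*s)⁻¹)) * GS e s ^ (d-1) :=
        fun w => Kk_gauss e h2 hs0 (u - w)
      have harg : ∀ w : Fin (d-1) → F,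
          -((∑ i, (u - w) i * (u - w) i) * (4*s)⁻¹)
            = -((∑ i, u i * u i) * (4*s)⁻¹)
              + (∑ i, (((2*s)⁻¹) • u) i * w i + (-(4*s)⁻¹) * ∑ i, w i * w i) := by
        intro w
        have h1 : ∑ i, (u - w) i * (u - w) i
            = ∑ i, u i * u i - 2 * ∑ i, u i * w i + ∑ i, w i * w i := by
          have : ∀ i, (u - w) i * (u - w) i
              = u i * u i - 2 * (u i * w i) + w i * w i := by
            intro i; simp only [Pi.sub_apply]; ring
          rw [Finset.sum_congr rfl fun i _ => this i]
          rw [Finset.sum_add_distrib, Finset.sum_sub_distrib, ← Finset.mul_sum]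
        have h2' : ∑ i, (((2*s)⁻¹) • u) i * w i = (2*s)⁻¹ * ∑ i, u i * w i := by
          rw [Finset.mul_sum]
          refine Finset.sum_congr rfl fun i _ => ?_
          simp only [Pi.smul_apply, smul_eq_mul]
          ring
        rw [h1, h2']
        have h4 : (4:F) * s ≠ 0 := by
          have h40 : (4:F) ≠ 0 := by
            have : (4 : F) = 2 * 2 := by norm_num
            rw [this]; exact mul_ne_zero h2 h2
          exact mul_ne_zero h40 hs0
        have h2s : (2:F) * s ≠ 0 := mul_ne_zero h2 hs0
        have h40' : (4:F) ≠ 0 := by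
          have : (4 : F) = 2 * 2 := by norm_num
          rw [this]; exact mul_ne_zero h2 h2
        field_simp
        ring
      calc ((Fintype.card F : ℂ) ^ (d-1))⁻¹ * ∑ w, g (w, z) * Kk e (u - w) (t - z)
          = ((Fintype.card F : ℂ) ^ (d-1))⁻¹ * ∑ w, a w
              * (e (-((∑ i, u i * u i) * (4*s)⁻¹))
                * (e (∑ i, (((2*s)⁻¹) • u) i * w i + (-(4*s)⁻¹) * ∑ i, w i * w i)
                  * GS e s ^ (d-1))) := by
            congr 1
            refine Finset.sum_congr rfl fun w _ => ?_
            rw [← hs, hKk w, harg w, AddChar.map_add_eq_mul]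
            rw [haa]
            ring
        _ = GS e s ^ (d-1) * (e (-((∑ i, u i * u i) * (4*s)⁻¹))
              * (((Fintype.card F : ℂ) ^ (d-1))⁻¹
                * ∑ w, a w * e (∑ i, (((2*s)⁻¹) • u) i * w i
                    + (-(4*s)⁻¹) * ∑ i, w i * w i))) := by
            rw [Finset.mul_sum, Finset.mul_sum, Finset.mul_sum]
            rw [Finset.mul_sum]
            refine Finset.sum_congr rfl fun w _ => ?_
            ring
        _ = GS e s ^ (d-1) * (e (-((∑ i, u i * u i) * (4*s)⁻¹))
              * extOp e a (((2*s)⁻¹) • u, -(4*s)⁻¹)) := by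
            rw [extOp]
    rw [hBz]
    rw [norm_mul, norm_mul, norm_pow, AddChar.norm_apply, one_mul]
    rw [mul_pow, ← pow_mul]
    have e1 : ‖GS e s‖ ^ ((d-1) * 4) = (‖GS e s‖ ^ 2) ^ (2*(d-1)) := by
      rw [← pow_mul]
      congr 1
      ring
    rw [e1, norm_GS_sq e he h2 hs0]
  calc ∑ x : (Fin (d-1) → F) × F, ‖Bz e g z x‖ ^ 4
      = ∑ t : F, ∑ u : Fin (d-1) → F, ‖Bz e g z (u, t)‖ ^ 4 := by
        rw [Fintype.sum_prod_type]
        exact Finset.sum_comm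
    _ = ∑ t ∈ univ.erase z, ∑ u : Fin (d-1) → F, ‖Bz e g z (u, t)‖ ^ 4 := by
        rw [← Finset.add_sum_erase _ _ (Finset.mem_univ z)]
        have : ∀ u : Fin (d-1) → F, ‖Bz e g z (u, z)‖ ^ 4 = 0 := by
          intro u
          rw [Bz, if_pos rfl, norm_zero]
          norm_num
        rw [Finset.sum_congr rfl fun u _ => this u, Finset.sum_const_zero, zero_add]
    _ = ∑ t ∈ univ.erase z, (Fintype.card F : ℝ) ^ (2*(d-1)) * h (-(4*(t-z))⁻¹) := by
        refine Finset.sum_congr rfl fun t ht => ?_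
        have htz : t ≠ z := Finset.ne_of_mem_erase ht
        rw [Finset.sum_congr rfl fun u _ => key t htz u, ← Finset.mul_sum]
        congr 1
        rw [hh]
        have hc : (2*(t-z))⁻¹ ≠ 0 := by
          have : (2:F) * (t - z) ≠ 0 := mul_ne_zero h2 (sub_ne_zero.mpr htz)
          exact inv_ne_zero this
        exact Fintype.sum_equiv
          (Equiv.piCongrRight fun _ => Equiv.mulLeft₀ ((2*(t-z))⁻¹) hc) _ _
          (fun u => rfl)
    _ = (Fintype.card F : ℝ) ^ (2*(d-1)) * ∑ t ∈ univ.erase z, h (-(4*(t-z))⁻¹) := by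
        rw [Finset.mul_sum]
    _ ≤ (Fintype.card F : ℝ) ^ (2*(d-1)) * ∑ t' : F, h t' := by
        refine mul_le_mul_of_nonneg_left ?_ (by positivity)
        have hinj : ∀ t1 ∈ univ.erase z, ∀ t2 ∈ univ.erase z,
            -(4*(t1-z))⁻¹ = -(4*(t2-z))⁻¹ → t1 = t2 := by
          intro t1 h1 t2 h2'
          intro hi
          have := neg_injective hi
          have := inv_injective this
          have h4 : (4:F) ≠ 0 := by
            have : (4 : F) = 2 * 2 := by norm_num
            rw [this]; exact mul_ne_zero h2 h2
          have := mul_left_cancel₀ h4 this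
          exact sub_left_injective this
        rw [← Finset.sum_image hinj]
        exact Finset.sum_le_sum_of_subset_of_nonneg (Finset.subset_univ _)
          (fun t' _ _ => hh0 t')
    _ = (Fintype.card F : ℝ) ^ (2*(d-1))
        * ∑ x : (Fin (d-1) → F) × F, ‖extOp e a x‖ ^ 4 := by
        have hx : ∑ x : (Fin (d-1) → F) × F, ‖extOp e a x‖ ^ 4 = ∑ t' : F, h t' := by
          rw [Fintype.sum_prod_type]
          exact Finset.sum_comm
        rw [hx]

lemma Lp_sum_le {ι κ : Type*} [Fintype ι] (s : Finset κ) (f : κ → ι → ℝ)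
    (hf : ∀ k i, 0 ≤ f k i) {p : ℝ} (hp : 1 ≤ p) :
    (∑ i, (∑ k ∈ s, f k i) ^ p) ^ (1/p) ≤ ∑ k ∈ s, (∑ i, (f k i) ^ p) ^ (1/p) := by
  have hp0 : p ≠ 0 := by positivity
  induction s using Finset.cons_induction with
  | empty =>
    simp only [Finset.sum_empty]
    rw [Real.zero_rpow hp0]
    simp only [Finset.sum_const_zero]
    rw [Real.zero_rpow (by positivity : (1:ℝ)/p ≠ 0)]
  | cons k s hk ih =>
    simp only [Finset.sum_cons]
    calc (∑ i, (f k i + ∑ k' ∈ s, f k' i) ^ p) ^ (1/p)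
        ≤ (∑ i, (f k i) ^ p) ^ (1/p) + (∑ i, (∑ k' ∈ s, f k' i) ^ p) ^ (1/p) :=
          Real.Lp_add_le_of_nonneg (s := Finset.univ) (f := fun i => f k i)
            (g := fun i => ∑ k' ∈ s, f k' i) hp (fun i _ => hf k i)
            (fun i _ => Finset.sum_nonneg fun k' _ => hf k' i)
      _ ≤ (∑ i, (f k i) ^ p) ^ (1/p) + ∑ k' ∈ s, (∑ i, (f k' i) ^ p) ^ (1/p) :=
          add_le_add_right ih _

end MT4

/-- The Mockenhaupt–Tao machine: for `g : F^d → ℂ` with `|g| ≤ 1`, support `G`, and slices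
`G_z` (the indicator on the paraboloid of `{x̄ : (x̄, z) ∈ G}`),
`‖ĝ‖_{L²(P,dσ)} ≤ C (|G|^{1/2} + |G|^{3/8} |F|^{(d-1)/4} (∑_{z∈F} ‖(G_z dσ)^∨‖_{L⁴(F^d)})^{1/2})`. -/
theorem stmt4 (d : ℕ) (hd : 2 ≤ d) :
    ∃ C : ℝ, 0 < C ∧
      ∀ (F : Type) [Field F] [Fintype F] [DecidableEq F], ringChar F ≠ 2 →
      ∀ (e : AddChar F ℂ), e ≠ 1 →
      ∀ g : (Fin (d - 1) → F) × F → ℂ, (∀ x, ‖g x‖ ≤ 1) →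
      ∀ G : Finset ((Fin (d - 1) → F) × F), (∀ x, x ∈ G ↔ g x ≠ 0) →
        l2P e g ≤ C * ((G.card : ℝ) ^ ((1 : ℝ) / 2) +
          (G.card : ℝ) ^ ((3 : ℝ) / 8) * (Fintype.card F : ℝ) ^ (((d : ℝ) - 1) / 4) *
            (∑ z : F, (∑ x : (Fin (d - 1) → F) × F,
                ‖extOp e (fun w => if (w, z) ∈ G then (1 : ℂ) else 0) x‖ ^ 4)
              ^ ((1 : ℝ) / 4)) ^ ((1 : ℝ) / 2)) := by
  classical
  refine ⟨1, one_pos, ?_⟩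
  intro F _ _ _ hF e he g hg G hG
  have h2 : (2 : F) ≠ 0 := Ring.two_ne_zero hF
  set q : ℝ := (Fintype.card F : ℝ) with hq
  have hq1 : (1 : ℝ) ≤ q := by
    rw [hq]; exact_mod_cast Fintype.card_pos
  have hq0 : (0 : ℝ) ≤ q := le_trans zero_le_one hq1
  set Gc : ℝ := (G.card : ℝ) with hGc
  have hGc0 : (0 : ℝ) ≤ Gc := by rw [hGc]; positivity
  set B : (Fin (d-1) → F) × F → ℂ := fun x => ∑ z : F, MT4.Bz e g z x with hB
  set R2 : ℝ := ((q : ℝ) ^ (d-1))⁻¹ * ∑ y, ‖fourierP e g y‖ ^ 2 with hR2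
  have hR2nn : 0 ≤ R2 := by
    rw [hR2]
    have : (0:ℝ) ≤ ∑ y : Fin (d-1) → F, ‖fourierP e g y‖ ^ 2 :=
      Finset.sum_nonneg fun y _ => by positivity
    positivity
  -- the slice L⁴ quantities
  set Az : F → ℝ := fun z => (∑ x : (Fin (d - 1) → F) × F,
      ‖extOp e (fun w => if (w, z) ∈ G then (1 : ℂ) else 0) x‖ ^ 4) ^ ((1 : ℝ) / 4) with hAz
  have hAz0 : ∀ z, 0 ≤ Az z := by
    intro z
    rw [hAz]
    exact Real.rpow_nonneg (Finset.sum_nonneg fun x _ => by positivity) _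
  have hSz0 : 0 ≤ ∑ z : F, Az z := Finset.sum_nonneg fun z _ => hAz0 z
  -- off-support vanishing
  have hg0 : ∀ x, x ∉ G → g x = 0 := by
    intro x hx
    by_contra hne
    exact hx ((hG x).mpr hne)
  -- Step 1: R2 = ∑ ‖g‖² + Re(∑ g conj B)
  have hC : (R2 : ℂ) = ((∑ x : (Fin (d-1) → F) × F, ‖g x‖ ^ 2 : ℝ) : ℂ)
      + ∑ x : (Fin (d-1) → F) × F, g x * (starRingEnd ℂ) (B x) := by
    have h1 := MT4.parsevalC e g
    rw [hR2, hq]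
    rw [h1]
    calc ∑ x : (Fin (d-1) → F) × F, g x * (starRingEnd ℂ) (extOp e (fourierP e g) x)
        = ∑ x : (Fin (d-1) → F) × F,
            (g x * (starRingEnd ℂ) (g x) + g x * (starRingEnd ℂ) (B x)) := by
          refine Finset.sum_congr rfl fun x _ => ?_
          rw [MT4.decomp e he g x, map_add]
          ring
      _ = ∑ x : (Fin (d-1) → F) × F, g x * (starRingEnd ℂ) (g x)
          + ∑ x : (Fin (d-1) → F) × F, g x * (starRingEnd ℂ) (B x) :=
          Finset.sum_add_distrib
      _ = ((∑ x : (Fin (d-1) → F) × F, ‖g x‖ ^ 2 : ℝ) : ℂ)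
          + ∑ x : (Fin (d-1) → F) × F, g x * (starRingEnd ℂ) (B x) := by
          congr 1
          push_cast
          refine Finset.sum_congr rfl fun x _ => ?_
          rw [Complex.mul_conj, Complex.normSq_eq_norm_sq]
          push_cast
          ring
  have hRe : R2 = (∑ x : (Fin (d-1) → F) × F, ‖g x‖ ^ 2)
      + (∑ x : (Fin (d-1) → F) × F, g x * (starRingEnd ℂ) (B x)).re := by
    have h := congrArg Complex.re hC
    rwa [Complex.ofReal_re, Complex.add_re, Complex.ofReal_re] at h
  have hR2le : R2 ≤ Gc + ∑ x : (Fin (d-1) → F) × F, ‖g x‖ * ‖B x‖ := by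
    rw [hRe]
    have ha : ∑ x : (Fin (d-1) → F) × F, ‖g x‖ ^ 2 ≤ Gc := by
      have hzero : ∀ x ∈ (univ : Finset ((Fin (d-1) → F) × F)), x ∉ G → ‖g x‖ ^ 2 = 0 := by
        intro x _ hx
        rw [hg0 x hx, norm_zero]
        norm_num
      rw [← Finset.sum_subset (Finset.subset_univ G) hzero]
      calc ∑ x ∈ G, ‖g x‖ ^ 2 ≤ ∑ x ∈ G, 1 := by
            refine Finset.sum_le_sum fun x _ => ?_
            have := hg x
            nlinarith [norm_nonneg (g x)]
        _ = Gc := by rw [Finset.sum_const, nsmul_eq_mul, mul_one, hGc]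
    have hb : (∑ x : (Fin (d-1) → F) × F, g x * (starRingEnd ℂ) (B x)).re
        ≤ ∑ x : (Fin (d-1) → F) × F, ‖g x‖ * ‖B x‖ := by
      refine le_trans (Complex.re_le_norm _) ?_
      refine le_trans (norm_sum_le _ _) ?_
      refine Finset.sum_le_sum fun x _ => ?_
      rw [norm_mul, RCLike.norm_conj]
    exact add_le_add ha hb
  -- Hölder
  have hpq : Real.HolderConjugate ((4:ℝ)/3) 4 := ⟨by norm_num, by norm_num, by norm_num⟩
  have hhold := Real.inner_le_Lp_mul_Lq (univ : Finset ((Fin (d-1) → F) × F))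
    (fun x => ‖g x‖) (fun x => ‖B x‖) hpq
  simp only [abs_norm] at hhold
  have hA34 : (∑ x : (Fin (d-1) → F) × F, ‖g x‖ ^ ((4:ℝ)/3)) ^ (1/((4:ℝ)/3))
      ≤ Gc ^ ((3:ℝ)/4) := by
    have hA : ∑ x : (Fin (d-1) → F) × F, ‖g x‖ ^ ((4:ℝ)/3) ≤ Gc := by
      have hzero : ∀ x ∈ (univ : Finset ((Fin (d-1) → F) × F)), x ∉ G →
          ‖g x‖ ^ ((4:ℝ)/3) = 0 := by
        intro x _ hx
        rw [hg0 x hx, norm_zero, Real.zero_rpow (by norm_num)]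
      rw [← Finset.sum_subset (Finset.subset_univ G) hzero]
      calc ∑ x ∈ G, ‖g x‖ ^ ((4:ℝ)/3) ≤ ∑ x ∈ G, 1 := by
            refine Finset.sum_le_sum fun x _ => ?_
            exact Real.rpow_le_one (norm_nonneg _) (hg x) (by norm_num)
        _ = Gc := by rw [Finset.sum_const, nsmul_eq_mul, mul_one, hGc]
    have h34 : (1:ℝ)/((4:ℝ)/3) = (3:ℝ)/4 := by norm_num
    rw [h34]
    refine Real.rpow_le_rpow ?_ hA (by norm_num)
    exact Finset.sum_nonneg fun x _ => Real.rpow_nonneg (norm_nonneg _) _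
  -- Minkowski + slice bounds
  have hcast : ((d - 1 : ℕ) : ℝ) = (d : ℝ) - 1 := by
    have h1d : 1 ≤ d := by omega
    push_cast [Nat.cast_sub h1d]
    ring
  have hL4B : (∑ x : (Fin (d-1) → F) × F, ‖B x‖ ^ (4:ℝ)) ^ ((1:ℝ)/4)
      ≤ q ^ (((d:ℝ)-1)/2) * ∑ z : F, Az z := by
    have step1 : (∑ x : (Fin (d-1) → F) × F, ‖B x‖ ^ (4:ℝ)) ^ ((1:ℝ)/4)
        ≤ (∑ x : (Fin (d-1) → F) × F, (∑ z : F, ‖MT4.Bz e g z x‖) ^ (4:ℝ)) ^ ((1:ℝ)/4) := by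
      refine Real.rpow_le_rpow ?_ ?_ (by norm_num)
      · exact Finset.sum_nonneg fun x _ => Real.rpow_nonneg (norm_nonneg _) _
      refine Finset.sum_le_sum fun x _ => ?_
      refine Real.rpow_le_rpow (norm_nonneg _) ?_ (by norm_num)
      rw [hB]
      exact norm_sum_le _ _
    have step2 : (∑ x : (Fin (d-1) → F) × F, (∑ z : F, ‖MT4.Bz e g z x‖) ^ (4:ℝ)) ^ ((1:ℝ)/4)
        ≤ ∑ z : F, (∑ x : (Fin (d-1) → F) × F, ‖MT4.Bz e g z x‖ ^ (4:ℝ)) ^ ((1:ℝ)/4) := by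
      have := MT4.Lp_sum_le (univ : Finset F)
        (fun z x => ‖MT4.Bz e g z x‖) (fun z x => norm_nonneg _) (by norm_num : (1:ℝ) ≤ 4)
      simpa using this
    have step3 : ∀ z : F, (∑ x : (Fin (d-1) → F) × F, ‖MT4.Bz e g z x‖ ^ (4:ℝ)) ^ ((1:ℝ)/4)
        ≤ q ^ (((d:ℝ)-1)/2) * Az z := by
      intro z
      have hb1 : ∑ x : (Fin (d-1) → F) × F, ‖MT4.Bz e g z x‖ ^ (4:ℝ)
          ≤ q ^ (2*(d-1) : ℕ) * ∑ x : (Fin (d - 1) → F) × F,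
              ‖extOp e (fun w => if (w, z) ∈ G then (1 : ℂ) else 0) x‖ ^ (4:ℕ) := by
        have e1 : ∑ x : (Fin (d-1) → F) × F, ‖MT4.Bz e g z x‖ ^ (4:ℝ)
            = ∑ x : (Fin (d-1) → F) × F, ‖MT4.Bz e g z x‖ ^ (4:ℕ) := by
          refine Finset.sum_congr rfl fun x _ => ?_
          rw [← Real.rpow_natCast ‖MT4.Bz e g z x‖ 4]
          norm_num
        rw [e1]
        refine le_trans (MT4.Bz_l4 e he h2 g z) ?_
        rw [hq]
        refine mul_le_mul_of_nonneg_left ?_ (by positivity)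
        have hind : (fun w => (((if (w, z) ∈ G then (1:ℝ) else 0) : ℝ) : ℂ))
            = (fun w => if (w, z) ∈ G then (1 : ℂ) else 0) := by
          funext w
          by_cases h : (w, z) ∈ G <;> simp [h]
        have := MT4.extOp_l4_le e he (fun w => g (w, z))
          (fun w => if (w, z) ∈ G then (1:ℝ) else 0)
          (fun w => by by_cases h : (w, z) ∈ G <;> simp [h])
          (fun w => by
            by_cases h : (w, z) ∈ G
            · simp only [if_pos h]; exact hg (w, z)
            · simp only [if_neg h]; rw [hg0 (w, z) h, norm_zero])
        rwa [hind] at this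
      have hb2 : ((q : ℝ) ^ (2*(d-1) : ℕ)) ^ ((1:ℝ)/4) = q ^ (((d:ℝ)-1)/2) := by
        rw [← Real.rpow_natCast q (2*(d-1)), ← Real.rpow_mul hq0]
        congr 1
        push_cast [hcast]
        ring
      calc (∑ x : (Fin (d-1) → F) × F, ‖MT4.Bz e g z x‖ ^ (4:ℝ)) ^ ((1:ℝ)/4)
          ≤ (q ^ (2*(d-1) : ℕ) * ∑ x : (Fin (d - 1) → F) × F,
              ‖extOp e (fun w => if (w, z) ∈ G then (1 : ℂ) else 0) x‖ ^ (4:ℕ)) ^ ((1:ℝ)/4) := by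
            refine Real.rpow_le_rpow ?_ hb1 (by norm_num)
            exact Finset.sum_nonneg fun x _ => Real.rpow_nonneg (norm_nonneg _) _
        _ = q ^ (((d:ℝ)-1)/2) * Az z := by
            rw [Real.mul_rpow (by positivity) (Finset.sum_nonneg fun x _ => by positivity),
              hb2, hAz]

    refine le_trans step1 (le_trans step2 ?_)
    rw [Finset.mul_sum]
    exact Finset.sum_le_sum fun z _ => step3 z
  -- combine
  have hmain : R2 ≤ Gc + Gc ^ ((3:ℝ)/4) * (q ^ (((d:ℝ)-1)/2) * ∑ z : F, Az z) := by
    refine le_trans hR2le ?_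
    refine add_le_add_right ?_ Gc
    refine le_trans hhold ?_
    have h14 : (1:ℝ)/(4:ℝ) = ((1:ℝ)/4) := by norm_num
    refine mul_le_mul hA34 hL4B ?_ (Real.rpow_nonneg hGc0 _)
    exact Real.rpow_nonneg
      (Finset.sum_nonneg fun x _ => Real.rpow_nonneg (norm_nonneg _) _) _
  -- take square roots
  have hsqrt_add : ∀ a b : ℝ, 0 ≤ a → 0 ≤ b →
      (a + b) ^ ((1:ℝ)/2) ≤ a ^ ((1:ℝ)/2) + b ^ ((1:ℝ)/2) := by
    intro a b ha hb
    rw [← Real.sqrt_eq_rpow, ← Real.sqrt_eq_rpow, ← Real.sqrt_eq_rpow]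
    have hsq : a + b ≤ (Real.sqrt a + Real.sqrt b) ^ 2 := by
      have h1 := Real.sq_sqrt ha
      have h2 := Real.sq_sqrt hb
      nlinarith [Real.sqrt_nonneg a, Real.sqrt_nonneg b]
    have := Real.sqrt_le_sqrt hsq
    rwa [Real.sqrt_sq (by positivity)] at this
  have hfinal : R2 ^ ((1:ℝ)/2)
      ≤ Gc ^ ((1:ℝ)/2) + Gc ^ ((3:ℝ)/8) * q ^ (((d:ℝ)-1)/4) * (∑ z : F, Az z) ^ ((1:ℝ)/2) := by
    have h1 : R2 ^ ((1:ℝ)/2)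
        ≤ (Gc + Gc ^ ((3:ℝ)/4) * (q ^ (((d:ℝ)-1)/2) * ∑ z : F, Az z)) ^ ((1:ℝ)/2) :=
      Real.rpow_le_rpow hR2nn hmain (by norm_num)
    have h2' : (Gc + Gc ^ ((3:ℝ)/4) * (q ^ (((d:ℝ)-1)/2) * ∑ z : F, Az z)) ^ ((1:ℝ)/2)
        ≤ Gc ^ ((1:ℝ)/2)
          + (Gc ^ ((3:ℝ)/4) * (q ^ (((d:ℝ)-1)/2) * ∑ z : F, Az z)) ^ ((1:ℝ)/2) := by
      refine hsqrt_add _ _ hGc0 ?_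
      exact mul_nonneg (Real.rpow_nonneg hGc0 _)
        (mul_nonneg (Real.rpow_nonneg hq0 _) hSz0)
    have h3 : (Gc ^ ((3:ℝ)/4) * (q ^ (((d:ℝ)-1)/2) * ∑ z : F, Az z)) ^ ((1:ℝ)/2)
        = Gc ^ ((3:ℝ)/8) * q ^ (((d:ℝ)-1)/4) * (∑ z : F, Az z) ^ ((1:ℝ)/2) := by
      rw [Real.mul_rpow (Real.rpow_nonneg hGc0 _)
        (mul_nonneg (Real.rpow_nonneg hq0 _) hSz0)]
      rw [Real.mul_rpow (Real.rpow_nonneg hq0 _) hSz0]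
      rw [← Real.rpow_mul hGc0, ← Real.rpow_mul hq0]
      have ea : (3:ℝ)/4 * (1/2) = 3/8 := by norm_num
      have eb : (((d:ℝ)-1)/2) * (1/2) = ((d:ℝ)-1)/4 := by ring
      rw [ea, eb]
      ring
    rw [h3] at h2'
    exact le_trans h1 h2'
  rw [one_mul]
  have hl2P : l2P e g = R2 ^ ((1:ℝ)/2) := by rw [l2P, hR2, hq]
  rw [hl2P]
  exact hfinal
end

section
/- Let n ≥ 3 be an odd integer. There exists a constant C = C(n) > 0 such that for every finite field F of odd characteristic and every nontrivial additive character e of F, the 0-sphere S₀ = {ξ ∈ F^n : ξ·ξ = 0} satisfies: | ∑_{ξ∈S₀} e(α·ξ) | ≤ C |F|^{(n-1)/2} for every α ∈ F^n with α ≠ 0, and C^{-1} |F|^{n-1} ≤ |S₀| ≤ C |F|^{n-1}. -/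
open Finset

private lemma stmt7_map_sum {F : Type} [Field F] (e : AddChar F ℂ)
    {ι : Type} (s : Finset ι) (f : ι → F) :
    e (∑ i ∈ s, f i) = ∏ i ∈ s, e (f i) := by
  classical
  induction s using Finset.cons_induction with
  | empty => simp
  | cons a s ha ih => rw [Finset.sum_cons, Finset.prod_cons, AddChar.map_add_eq_mul, ih]

private def stmt7_qc (F : Type) [Field F] [Fintype F] [DecidableEq F] : MulChar F ℂ :=
  (quadraticChar F).ringHomComp (Int.castRingHom ℂ)

section

variable {F : Type} [Field F] [Fintype F] [DecidableEq F]

private lemma stmt7_qc_apply (b : F) : stmt7_qc F b = ((quadraticChar F b : ℤ) : ℂ) := rfl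

private lemma stmt7_qc_ne_one (hF : ringChar F ≠ 2) : stmt7_qc F ≠ 1 :=
  (MulChar.ringHomComp_ne_one_iff (f := Int.castRingHom ℂ)
    (fun a b h => by simpa using h)).mpr (quadraticChar_ne_one hF)

private lemma stmt7_qc_sq {b : F} (hb : b ≠ 0) : stmt7_qc F b * stmt7_qc F b = 1 := by
  rcases quadraticChar_dichotomy hb with h | h <;> simp [stmt7_qc_apply, h]

private lemma stmt7_qc_norm {b : F} (hb : b ≠ 0) : ‖stmt7_qc F b‖ = 1 := by
  rcases quadraticChar_dichotomy hb with h | h <;> simp [stmt7_qc_apply, h]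

private lemma stmt7_four_ne_zero (hF : ringChar F ≠ 2) : (4 : F) ≠ 0 := by
  have h2 : (2 : F) ≠ 0 := Ring.two_ne_zero hF
  intro h
  apply h2
  have : (4 : F) = 2 * 2 := by norm_num
  rw [this] at h
  exact (mul_self_eq_zero).mp h

/-- Sum of `e (b x²)` equals `χ b` times the Gauss sum. -/
private lemma stmt7_sumsq (hF : ringChar F ≠ 2) {e : AddChar F ℂ} (he : e ≠ 1)
    {b : F} (hb : b ≠ 0) :
    ∑ x : F, e (b * (x * x)) = stmt7_qc F b * gaussSum (stmt7_qc F) e := by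
  set χ := stmt7_qc F with hχ
  have hprim := AddChar.IsPrimitive.of_ne_one he
  have step1 : ∑ x : F, e (b * (x * x)) =
      ∑ y : F, (({x : F | x ^ 2 = y}.toFinset.card : ℂ)) * e (b * y) := by
    have := Finset.sum_fiberwise' (univ : Finset F) (fun x : F => x ^ 2)
      (fun y => e (b * y))
    simp only [← sq]
    rw [← this]
    refine Finset.sum_congr rfl fun y _ => ?_
    rw [Finset.sum_const, nsmul_eq_mul]
    have hset : ({x : F | x ^ 2 = y}.toFinset) = univ.filter (fun x : F => x ^ 2 = y) := by
      ext x; simp [Set.mem_toFinset]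
    rw [hset]
  have step2 : ∀ y : F, (({x : F | x ^ 2 = y}.toFinset.card : ℂ)) = χ y + 1 := by
    intro y
    have h := quadraticChar_card_sqrts hF y
    have h2 : (({x : F | x ^ 2 = y}.toFinset.card : ℤ) : ℂ) =
        ((quadraticChar F y + 1 : ℤ) : ℂ) := by rw [h]
    push_cast at h2
    rw [h2, hχ, stmt7_qc, MulChar.ringHomComp_apply]
    simp
  rw [step1]
  simp only [step2, add_mul, one_mul, Finset.sum_add_distrib]
  have hz : ∑ y : F, e (b * y) = 0 := by
    simp_rw [mul_comm b]
    rw [AddChar.sum_mulShift b hprim]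
    simp [hb]
  rw [hz, add_zero]
  have hgs : ∑ y : F, χ y * e (b * y) = gaussSum χ (e.mulShift b) := by
    refine Finset.sum_congr rfl fun y _ => ?_
    rw [AddChar.mulShift_apply]
  rw [hgs]
  have hms := gaussSum_mulShift χ e (Units.mk0 b hb)
  simp only [Units.val_mk0] at hms
  calc gaussSum χ (e.mulShift b) = (χ b * χ b) * gaussSum χ (e.mulShift b) := by
        rw [stmt7_qc_sq hb, one_mul]
    _ = χ b * (χ b * gaussSum χ (e.mulShift b)) := by ring
    _ = χ b * gaussSum χ e := by rw [hms]

/-- Completing the square. -/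
private lemma stmt7_complete (hF : ringChar F ≠ 2) {e : AddChar F ℂ} (he : e ≠ 1)
    {t : F} (ht : t ≠ 0) (a : F) :
    ∑ x : F, e (t * (x * x) + a * x) =
      e (-(a * a) / (4 * t)) * (stmt7_qc F t * gaussSum (stmt7_qc F) e) := by
  have h2 : (2 : F) ≠ 0 := Ring.two_ne_zero hF
  have h4 : (4 : F) ≠ 0 := stmt7_four_ne_zero hF
  set c := a / (2 * t) with hc
  have key : ∀ x : F, t * (x * x) + a * x = -(a * a) / (4 * t) + t * ((x + c) * (x + c)) := by
    intro x
    rw [hc]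
    field_simp
    ring
  calc ∑ x : F, e (t * (x * x) + a * x)
      = ∑ x : F, e (-(a * a) / (4 * t)) * e (t * ((x + c) * (x + c))) := by
        refine Finset.sum_congr rfl fun x _ => ?_
        rw [key x, AddChar.map_add_eq_mul]
    _ = e (-(a * a) / (4 * t)) * ∑ x : F, e (t * ((x + c) * (x + c))) := by
        rw [Finset.mul_sum]
    _ = e (-(a * a) / (4 * t)) * ∑ x : F, e (t * (x * x)) := by
        congr 1
        exact Fintype.sum_equiv (Equiv.addRight c)
          (fun x => e (t * ((x + c) * (x + c)))) (fun x => e (t * (x * x)))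
          (fun x => rfl)
    _ = _ := by rw [stmt7_sumsq hF he ht]

/-- Factorization of the `ξ`-sum. -/
private lemma stmt7_factor (n : ℕ) (e : AddChar F ℂ) (t : F) (α : Fin n → F) :
    ∑ ξ : Fin n → F, e (t * (∑ i, ξ i * ξ i) + ∑ i, α i * ξ i) =
      ∏ i, ∑ x : F, e (t * (x * x) + α i * x) := by
  rw [Fintype.prod_sum]
  refine Finset.sum_congr rfl fun ξ _ => ?_
  rw [← stmt7_map_sum]
  congr 1
  rw [Finset.mul_sum, ← Finset.sum_add_distrib]

/-- The main completion-of-sum identity. -/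
private lemma stmt7_main_id (n : ℕ) {e : AddChar F ℂ} (he : e ≠ 1) (α : Fin n → F) :
    (Fintype.card F : ℂ) *
        ∑ ξ ∈ Finset.univ.filter (fun ξ : Fin n → F => ∑ i, ξ i * ξ i = 0),
          e (∑ i, α i * ξ i) =
      ∑ t : F, ∏ i, ∑ x : F, e (t * (x * x) + α i * x) := by
  have hprim := AddChar.IsPrimitive.of_ne_one he
  calc (Fintype.card F : ℂ) * ∑ ξ ∈ Finset.univ.filter (fun ξ : Fin n → F => ∑ i, ξ i * ξ i = 0),
          e (∑ i, α i * ξ i)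
      = ∑ ξ : Fin n → F, (if ∑ i, ξ i * ξ i = 0 then (Fintype.card F : ℂ) else 0) *
          e (∑ i, α i * ξ i) := by
        rw [Finset.mul_sum, Finset.sum_filter]
        refine Finset.sum_congr rfl fun ξ _ => ?_
        split_ifs <;> simp
    _ = ∑ ξ : Fin n → F, (∑ t : F, e (t * (∑ i, ξ i * ξ i))) * e (∑ i, α i * ξ i) := by
        refine Finset.sum_congr rfl fun ξ _ => ?_
        congr 1
        rw [AddChar.sum_mulShift _ hprim]
        split_ifs with h <;> simp [h]
    _ = ∑ t : F, ∑ ξ : Fin n → F, e (t * (∑ i, ξ i * ξ i) + ∑ i, α i * ξ i) := by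
        rw [Finset.sum_comm]
        refine Finset.sum_congr rfl fun ξ _ => ?_
        rw [Finset.sum_mul]
        refine Finset.sum_congr rfl fun t _ => ?_
        rw [AddChar.map_add_eq_mul]
    _ = _ := Finset.sum_congr rfl fun t _ => stmt7_factor n e t α

/-- Norm of the quadratic Gauss sum. -/
private lemma stmt7_gauss_norm (hF : ringChar F ≠ 2) {e : AddChar F ℂ} (he : e ≠ 1) :
    ‖gaussSum (stmt7_qc F) e‖ = Real.sqrt (Fintype.card F) := by
  have hprim := AddChar.IsPrimitive.of_ne_one he
  have hsq := gaussSum_sq (stmt7_qc_ne_one hF) ((quadraticChar_isQuadratic F).comp _) hprim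
  have hm1 : (-1 : F) ≠ 0 := by
    intro h; exact one_ne_zero (neg_eq_zero.mp h)
  have h1 : ‖gaussSum (stmt7_qc F) e‖ ^ 2 = (Fintype.card F : ℝ) := by
    rw [← norm_pow, hsq, norm_mul, stmt7_qc_norm hm1, one_mul, Complex.norm_natCast]
  rw [← Real.sqrt_sq (norm_nonneg (gaussSum (stmt7_qc F) e)), h1]

/-- The `t`-sum for nonzero `c`. -/
private lemma stmt7_Tsum (hF : ringChar F ≠ 2) (e : AddChar F ℂ) {c : F} (hc : c ≠ 0) :
    ∑ t ∈ Finset.univ.erase (0 : F), stmt7_qc F t * e (-c / (4 * t)) =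
      stmt7_qc F (-(c / 4)) * gaussSum (stmt7_qc F) e := by
  set χ := stmt7_qc F with hχdef
  have h4 : (4 : F) ≠ 0 := stmt7_four_ne_zero hF
  have himg : ∀ t : F, t ≠ 0 → -c / (4 * t) ≠ 0 := fun t ht =>
    div_ne_zero (neg_ne_zero.mpr hc) (mul_ne_zero h4 ht)
  have step : ∑ t ∈ Finset.univ.erase (0 : F), χ t * e (-c / (4 * t)) =
      ∑ u ∈ Finset.univ.erase (0 : F), χ (-(c / 4)) * (χ u * e u) := by
    refine Finset.sum_nbij' (fun t => -c / (4 * t)) (fun u => -c / (4 * u))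
      (fun t ht => ?_) (fun u hu => ?_) (fun t ht => ?_) (fun u hu => ?_) (fun t ht => ?_)
    · simp only [mem_erase, mem_univ, and_true] at *
      exact himg t ht
    · simp only [mem_erase, mem_univ, and_true] at *
      exact himg u hu
    · simp only [mem_erase, mem_univ, and_true] at ht
      field_simp
    · simp only [mem_erase, mem_univ, and_true] at hu
      field_simp
    · simp only [mem_erase, mem_univ, and_true] at ht
      have hu := himg t ht
      have hmul : t * (-c / (4 * t)) = -(c / 4) := by field_simp
      have hfact : χ (-(c / 4)) = χ t * χ (-c / (4 * t)) := by rw [← map_mul, hmul]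
      rw [hfact]
      have hsq := stmt7_qc_sq hu
      calc χ t * e (-c / (4 * t))
          = χ t * (χ (-c / (4 * t)) * χ (-c / (4 * t))) * e (-c / (4 * t)) := by
            rw [hsq, mul_one]
        _ = χ t * χ (-c / (4 * t)) * (χ (-c / (4 * t)) * e (-c / (4 * t))) := by ring
  rw [step, ← Finset.mul_sum]
  congr 1
  have h0 : χ (0 : F) * e 0 = 0 := by
    rw [MulChar.map_zero, zero_mul]
  rw [gaussSum, ← Finset.add_sum_erase _ (fun u => χ u * e u) (mem_univ (0 : F)), h0, zero_add]

/-- Sum of the quadratic character over nonzero elements vanishes. -/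
private lemma stmt7_qc_sum_zero (hF : ringChar F ≠ 2) :
    ∑ t ∈ Finset.univ.erase (0 : F), stmt7_qc F t = 0 := by
  have h := MulChar.sum_eq_zero_of_ne_one (stmt7_qc_ne_one hF)
  rw [← Finset.add_sum_erase _ (stmt7_qc F) (mem_univ (0 : F)), MulChar.map_zero, zero_add] at h
  exact h

/-- Evaluation of the product for `t ≠ 0`, `n` odd. -/
private lemma stmt7_prod_eval (n : ℕ) (hnodd : Odd n) (hF : ringChar F ≠ 2)
    {e : AddChar F ℂ} (he : e ≠ 1) {t : F} (ht : t ≠ 0) (α : Fin n → F) :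
    ∏ i, ∑ x : F, e (t * (x * x) + α i * x) =
      stmt7_qc F t * e (-(∑ i, α i * α i) / (4 * t)) * (gaussSum (stmt7_qc F) e) ^ n := by
  set χ := stmt7_qc F
  set g := gaussSum (stmt7_qc F) e with hg
  calc ∏ i, ∑ x : F, e (t * (x * x) + α i * x)
      = ∏ i, (e (-(α i * α i) / (4 * t)) * (χ t * g)) :=
        Finset.prod_congr rfl fun i _ => stmt7_complete hF he ht (α i)
    _ = (∏ i, e (-(α i * α i) / (4 * t))) * (χ t * g) ^ n := by
        rw [Finset.prod_mul_distrib, Finset.prod_const, card_univ, Fintype.card_fin]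
    _ = e (-(∑ i, α i * α i) / (4 * t)) * (χ t * g) ^ n := by
        congr 1
        rw [← stmt7_map_sum]
        congr 1
        rw [neg_div, ← Finset.sum_div, Finset.sum_neg_distrib, neg_div]
    _ = _ := by
        obtain ⟨m, hm⟩ := hnodd
        have : (χ t * g) ^ n = χ t * g ^ n := by
          rw [mul_pow, hm, pow_add, pow_mul, pow_two, stmt7_qc_sq ht, one_pow, pow_one, one_mul]
        rw [this]
        ring

end

/-- Let `n ≥ 3` be odd. There is `C = C(n) > 0` such that for every finite field `F` of
odd characteristic and every nontrivial additive character `e` of `F`, the 0-sphere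
`S₀ = {ξ ∈ F^n : ξ·ξ = 0}` satisfies `|∑_{ξ∈S₀} e(α·ξ)| ≤ C |F|^{(n-1)/2}` for all
`α ≠ 0`, and `C⁻¹ |F|^{n-1} ≤ |S₀| ≤ C |F|^{n-1}`. -/
theorem stmt7 (n : ℕ) (hn : 3 ≤ n) (hnodd : Odd n) :
    ∃ C : ℝ, 0 < C ∧
      ∀ (F : Type) [Field F] [Fintype F] [DecidableEq F], ringChar F ≠ 2 →
      ∀ (e : AddChar F ℂ), e ≠ 1 →
        (∀ α : Fin n → F, α ≠ 0 →
          ‖∑ ξ ∈ Finset.univ.filter (fun ξ : Fin n → F => ∑ i, ξ i * ξ i = 0),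
              e (∑ i, α i * ξ i)‖
            ≤ C * (Fintype.card F : ℝ) ^ (((n : ℝ) - 1) / 2)) ∧
        C⁻¹ * (Fintype.card F : ℝ) ^ (n - 1) ≤
          ((Finset.univ.filter (fun ξ : Fin n → F => ∑ i, ξ i * ξ i = 0)).card : ℝ) ∧
        ((Finset.univ.filter (fun ξ : Fin n → F => ∑ i, ξ i * ξ i = 0)).card : ℝ) ≤
          C * (Fintype.card F : ℝ) ^ (n - 1) := by
  refine ⟨1, one_pos, ?_⟩
  intro F _ _ _ hF e he
  have hprim := AddChar.IsPrimitive.of_ne_one he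
  set χ := stmt7_qc F with hχ
  set g := gaussSum (stmt7_qc F) e with hg
  set q : ℕ := Fintype.card F with hq
  have hq1 : 1 ≤ q := Fintype.card_pos
  have hq0R : (0 : ℝ) < (q : ℝ) := by exact_mod_cast hq1
  have hq0C : (q : ℂ) ≠ 0 := Nat.cast_ne_zero.mpr (by omega)
  constructor
  · -- the character sum bound
    intro α hα
    set c : F := ∑ i, α i * α i with hc
    set S := ∑ ξ ∈ Finset.univ.filter (fun ξ : Fin n → F => ∑ i, ξ i * ξ i = 0),
      e (∑ i, α i * ξ i) with hS
    have hid := stmt7_main_id n he α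
    -- split off the `t = 0` term
    have hsplit : ∑ t : F, ∏ i, ∑ x : F, e (t * (x * x) + α i * x) =
        (∏ i, ∑ x : F, e ((0 : F) * (x * x) + α i * x)) +
          ∑ t ∈ Finset.univ.erase (0 : F), ∏ i, ∑ x : F, e (t * (x * x) + α i * x) :=
      (Finset.add_sum_erase _ _ (mem_univ (0 : F))).symm
    -- the `t = 0` term vanishes since `α ≠ 0`
    obtain ⟨i0, hi0⟩ : ∃ i, α i ≠ 0 := by
      rcases Function.ne_iff.mp hα with ⟨i, hi⟩
      exact ⟨i, by simpa using hi⟩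
    have hzero : (∏ i, ∑ x : F, e ((0 : F) * (x * x) + α i * x)) = 0 := by
      refine Finset.prod_eq_zero (mem_univ i0) ?_
      simp only [zero_mul, zero_add]
      simp_rw [mul_comm (α i0)]
      rw [AddChar.sum_mulShift _ hprim]
      simp [hi0]
    have hrest : ∑ t ∈ Finset.univ.erase (0 : F), ∏ i, ∑ x : F, e (t * (x * x) + α i * x) =
        (∑ t ∈ Finset.univ.erase (0 : F), χ t * e (-c / (4 * t))) * g ^ n := by
      rw [Finset.sum_mul]
      refine Finset.sum_congr rfl fun t ht => ?_
      have ht0 : t ≠ 0 := (mem_erase.mp ht).1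
      rw [stmt7_prod_eval n hnodd hF he ht0 α]
    set T := ∑ t ∈ Finset.univ.erase (0 : F), χ t * e (-c / (4 * t)) with hT
    have hkey : (q : ℂ) * S = T * g ^ n := by
      rw [hS, hid, hsplit, hzero, zero_add, hrest]
    have hTnorm : ‖T‖ ≤ Real.sqrt q := by
      by_cases hcz : c = 0
      · have : T = 0 := by
          rw [hT]
          have : ∀ t ∈ Finset.univ.erase (0 : F), χ t * e (-c / (4 * t)) = χ t := by
            intro t _
            rw [hcz]
            simp
          rw [Finset.sum_congr rfl this, stmt7_qc_sum_zero hF]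
        rw [this, norm_zero]
        exact Real.sqrt_nonneg _
      · rw [hT, stmt7_Tsum hF e hcz, norm_mul]
        have hc4 : -((c : F) / 4) ≠ 0 := by
          simp only [neg_ne_zero, div_ne_zero_iff]
          exact ⟨hcz, stmt7_four_ne_zero hF⟩
        rw [stmt7_qc_norm hc4, one_mul, ← hg, stmt7_gauss_norm hF he]
    -- take norms
    have hnorm : (q : ℝ) * ‖S‖ ≤ Real.sqrt q ^ (n + 1) := by
      have h1 : ‖(q : ℂ) * S‖ = (q : ℝ) * ‖S‖ := by
        rw [norm_mul, Complex.norm_natCast]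
      have h2 : ‖T * g ^ n‖ = ‖T‖ * Real.sqrt q ^ n := by
        rw [norm_mul, norm_pow, hg, stmt7_gauss_norm hF he]
      calc (q : ℝ) * ‖S‖ = ‖T‖ * Real.sqrt q ^ n := by rw [← h1, hkey, h2]
        _ ≤ Real.sqrt q * Real.sqrt q ^ n := by
            apply mul_le_mul_of_nonneg_right hTnorm (pow_nonneg (Real.sqrt_nonneg _) n)
        _ = Real.sqrt q ^ (n + 1) := by rw [pow_succ, mul_comm]
    have hexp : Real.sqrt q ^ (n + 1) = (q : ℝ) * ((q : ℝ) ^ (((n : ℝ) - 1) / 2)) := by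
      rw [Real.sqrt_eq_rpow, ← Real.rpow_natCast ((q : ℝ) ^ ((1 : ℝ)/2)) (n + 1),
        ← Real.rpow_mul hq0R.le]
      have harith : ((1 : ℝ)/2) * ((n + 1 : ℕ) : ℝ) = 1 + ((n : ℝ) - 1) / 2 := by
        push_cast
        ring
      rw [harith, Real.rpow_add hq0R, Real.rpow_one]
    rw [hexp] at hnorm
    have := (mul_le_mul_iff_right₀ hq0R).mp hnorm
    rw [one_mul]
    exact this
  · -- cardinality: exactly q^(n-1)
    have hid := stmt7_main_id n he (fun _ : Fin n => (0 : F))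
    have hLHS : ∑ ξ ∈ Finset.univ.filter (fun ξ : Fin n → F => ∑ i, ξ i * ξ i = 0),
        e (∑ i, (0 : F) * ξ i) =
        ((Finset.univ.filter (fun ξ : Fin n → F => ∑ i, ξ i * ξ i = 0)).card : ℂ) := by
      have hone : ∀ ξ ∈ Finset.univ.filter (fun ξ : Fin n → F => ∑ i, ξ i * ξ i = 0),
          e (∑ i, (0 : F) * ξ i) = 1 := fun ξ _ => by simp
      rw [Finset.sum_congr rfl hone, Finset.sum_const, nsmul_eq_mul, mul_one]
    have hsplit : ∑ t : F, ∏ i : Fin n, ∑ x : F, e (t * (x * x) + (0 : F) * x) =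
        (∏ i : Fin n, ∑ x : F, e ((0 : F) * (x * x) + (0 : F) * x)) +
          ∑ t ∈ Finset.univ.erase (0 : F), ∏ i : Fin n, ∑ x : F, e (t * (x * x) + (0 : F) * x) :=
      (Finset.add_sum_erase _ _ (mem_univ (0 : F))).symm
    have hzero : (∏ i : Fin n, ∑ x : F, e ((0 : F) * (x * x) + (0 : F) * x)) = (q : ℂ) ^ n := by
      have : ∀ i : Fin n, ∑ x : F, e ((0 : F) * (x * x) + (0 : F) * x) = (q : ℂ) := by
        intro i
        simp [hq]
      rw [Finset.prod_congr rfl fun i _ => this i, Finset.prod_const, card_univ, Fintype.card_fin]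
    have hrest : ∑ t ∈ Finset.univ.erase (0 : F),
        ∏ i : Fin n, ∑ x : F, e (t * (x * x) + (0 : F) * x) = 0 := by
      have heval : ∀ t ∈ Finset.univ.erase (0 : F),
          ∏ i : Fin n, ∑ x : F, e (t * (x * x) + (0 : F) * x) = χ t * g ^ n := by
        intro t ht
        have ht0 : t ≠ 0 := (mem_erase.mp ht).1
        rw [stmt7_prod_eval n hnodd hF he ht0 (fun _ => (0 : F))]
        have hc0 : (∑ i : Fin n, (0 : F) * 0) = 0 := by simp
        rw [hc0]
        simp
        rfl
      rw [Finset.sum_congr rfl heval, ← Finset.sum_mul, stmt7_qc_sum_zero hF, zero_mul]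
    have hcard : (q : ℂ) *
        ((Finset.univ.filter (fun ξ : Fin n → F => ∑ i, ξ i * ξ i = 0)).card : ℂ) =
        (q : ℂ) ^ n := by
      rw [← hLHS, hid, hsplit, hzero, hrest, add_zero]
    have hpow : (q : ℂ) ^ n = (q : ℂ) * (q : ℂ) ^ (n - 1) := by
      conv_lhs => rw [show n = (n - 1) + 1 by omega]
      rw [pow_succ, mul_comm]
    rw [hpow] at hcard
    have hqC : (q : ℂ) ≠ 0 := Nat.cast_ne_zero.mpr (by omega)
    have hcard2 : ((Finset.univ.filter (fun ξ : Fin n → F => ∑ i, ξ i * ξ i = 0)).card : ℂ) =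
        (q : ℂ) ^ (n - 1) := mul_left_cancel₀ hqC hcard
    have hcardN : ((Finset.univ.filter (fun ξ : Fin n → F => ∑ i, ξ i * ξ i = 0)).card : ℕ) =
        q ^ (n - 1) := by
      have : ((Finset.univ.filter (fun ξ : Fin n → F => ∑ i, ξ i * ξ i = 0)).card : ℂ) =
          ((q ^ (n - 1) : ℕ) : ℂ) := by push_cast; exact hcard2
      exact_mod_cast this
    have hcardR : ((Finset.univ.filter (fun ξ : Fin n → F => ∑ i, ξ i * ξ i = 0)).card : ℝ) =
        (q : ℝ) ^ (n - 1) := by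
      rw [hcardN]
      push_cast
      rfl
    rw [hcardR]
    constructor
    · rw [inv_one, one_mul]
    · rw [one_mul]
end

section
/- Let n ≥ 4 be an even integer. There exists a constant C = C(n) > 0 such that for every finite field F of odd characteristic and every nontrivial additive character e of F, the 0-sphere S₀ = {ξ ∈ F^n : ξ·ξ = 0} satisfies: | ∑_{ξ∈S₀} e(α·ξ) | ≤ C |F|^{n/2} for every α ∈ F^n with α ≠ 0, and C^{-1} |F|^{n-1} ≤ |S₀| ≤ C |F|^{n-1}. -/
open Finset

lemma my_addChar_sum {F : Type} [Field F] (e : AddChar F ℂ)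
    {ι : Type*} (s : Finset ι) (f : ι → F) :
    e (∑ i ∈ s, f i) = ∏ i ∈ s, e (f i) := by
  induction s using Finset.cons_induction with
  | empty => simp
  | cons a s ha ih => rw [Finset.sum_cons, Finset.prod_cons, AddChar.map_add_eq_mul, ih]

lemma my_gauss_norm {F : Type} [Field F] [Fintype F] [DecidableEq F]
    (hF : ringChar F ≠ 2) {e : AddChar F ℂ} (he : e ≠ 1) {t : F} (ht : t ≠ 0) (a : F) :
    ‖∑ x : F, e (t * (x * x) + a * x)‖ = Real.sqrt (Fintype.card F) := by
  have hprim : e.IsPrimitive := AddChar.IsPrimitive.of_ne_one he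
  have hchar : 0 < ringChar F :=
    Nat.pos_of_ne_zero (CharP.char_ne_zero_of_finite F (ringChar F))
  have h2 : (2 : F) ≠ 0 := Ring.two_ne_zero hF
  set S := ∑ x : F, e (t * (x * x) + a * x) with hS
  have h1 : (starRingEnd ℂ) S = ∑ y : F, e (-(t * (y * y) + a * y)) := by
    rw [map_sum]
    exact Finset.sum_congr rfl fun y _ => by
      rw [AddChar.starComp_apply hchar, AddChar.inv_apply]
  have key : S * (starRingEnd ℂ) S = (Fintype.card F : ℂ) := by
    calc S * (starRingEnd ℂ) S
        = ∑ x : F, ∑ y : F, e (t * (x * x) + a * x) * e (-(t * (y * y) + a * y)) := by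
          rw [h1, hS, Finset.sum_mul_sum]
      _ = ∑ y : F, ∑ x : F, e ((t * (x * x) + a * x) - (t * (y * y) + a * y)) := by
          rw [Finset.sum_comm]
          exact Finset.sum_congr rfl fun y _ => Finset.sum_congr rfl fun x _ => by
            rw [← AddChar.map_add_eq_mul]; congr 1; ring
      _ = ∑ y : F, ∑ u : F, e (t * (u * u) + a * u) * e (y * (2 * t * u)) := by
          refine Finset.sum_congr rfl fun y _ => ?_
          refine (Fintype.sum_equiv (Equiv.addRight y)
            (fun u => e (t * (u * u) + a * u) * e (y * (2 * t * u)))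
            (fun x => e ((t * (x * x) + a * x) - (t * (y * y) + a * y))) fun u => ?_).symm
          simp only [Equiv.coe_addRight]
          rw [← AddChar.map_add_eq_mul]
          congr 1
          ring
      _ = ∑ u : F, e (t * (u * u) + a * u) * ∑ y : F, e (y * (2 * t * u)) := by
          rw [Finset.sum_comm]
          exact Finset.sum_congr rfl fun u _ => by rw [Finset.mul_sum]
      _ = (Fintype.card F : ℂ) := by
          rw [Finset.sum_eq_single (0 : F)]
          · simp [AddChar.sum_mulShift _ hprim]
          · intro u _ hu
            rw [AddChar.sum_mulShift _ hprim]
            simp [h2, ht, hu]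
          · simp
  have hnormSq : Complex.normSq S = (Fintype.card F : ℝ) := by
    have := key
    rw [Complex.mul_conj] at this
    exact_mod_cast this
  rw [Complex.norm_def, hnormSq]

lemma my_identity {F : Type} [Field F] [Fintype F] [DecidableEq F]
    {e : AddChar F ℂ} (he : e ≠ 1) (n : ℕ) (α : Fin n → F) :
    (Fintype.card F : ℂ) *
        ∑ ξ ∈ Finset.univ.filter (fun ξ : Fin n → F => ∑ i, ξ i * ξ i = 0),
          e (∑ i, α i * ξ i)
      = ∑ t : F, ∏ i, ∑ x : F, e (t * (x * x) + α i * x) := by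
  have hprim : e.IsPrimitive := AddChar.IsPrimitive.of_ne_one he
  symm
  calc ∑ t : F, ∏ i, ∑ x : F, e (t * (x * x) + α i * x)
      = ∑ t : F, ∑ ξ : Fin n → F, ∏ i, e (t * (ξ i * ξ i) + α i * ξ i) := by
        refine Finset.sum_congr rfl fun t _ => ?_
        rw [Finset.prod_univ_sum, Fintype.piFinset_univ]
    _ = ∑ ξ : Fin n → F, ∑ t : F, e (t * (∑ i, ξ i * ξ i) + ∑ i, α i * ξ i) := by
        rw [Finset.sum_comm]
        refine Finset.sum_congr rfl fun ξ _ => Finset.sum_congr rfl fun t _ => ?_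
        rw [← my_addChar_sum]
        congr 1
        rw [Finset.sum_add_distrib, Finset.mul_sum]
    _ = ∑ ξ : Fin n → F, (∑ t : F, e (t * (∑ i, ξ i * ξ i))) * e (∑ i, α i * ξ i) := by
        refine Finset.sum_congr rfl fun ξ _ => ?_
        rw [Finset.sum_mul]
        exact Finset.sum_congr rfl fun t _ => (AddChar.map_add_eq_mul e _ _)
    _ = ∑ ξ : Fin n → F,
          (if (∑ i, ξ i * ξ i) = 0 then (Fintype.card F : ℂ) else 0) * e (∑ i, α i * ξ i) := by
        refine Finset.sum_congr rfl fun ξ _ => ?_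
        rw [AddChar.sum_mulShift _ hprim]
        split_ifs <;> simp
    _ = (Fintype.card F : ℂ) *
          ∑ ξ ∈ Finset.univ.filter (fun ξ : Fin n → F => ∑ i, ξ i * ξ i = 0),
            e (∑ i, α i * ξ i) := by
        rw [Finset.mul_sum, Finset.sum_filter]
        refine Finset.sum_congr rfl fun ξ _ => ?_
        split_ifs <;> simp

lemma my_err_bound {F : Type} [Field F] [Fintype F] [DecidableEq F]
    (hF : ringChar F ≠ 2) {e : AddChar F ℂ} (he : e ≠ 1) (n : ℕ) (α : Fin n → F) :
    ‖∑ t ∈ Finset.univ.erase (0 : F), ∏ i, ∑ x : F, e (t * (x * x) + α i * x)‖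
      ≤ (Fintype.card F : ℝ) * Real.sqrt (Fintype.card F) ^ n := by
  calc ‖∑ t ∈ Finset.univ.erase (0 : F), ∏ i, ∑ x : F, e (t * (x * x) + α i * x)‖
      ≤ ∑ t ∈ Finset.univ.erase (0 : F), ‖∏ i, ∑ x : F, e (t * (x * x) + α i * x)‖ :=
        norm_sum_le _ _
    _ ≤ ∑ t ∈ Finset.univ.erase (0 : F), Real.sqrt (Fintype.card F) ^ n := by
        refine Finset.sum_le_sum fun t ht => ?_
        have ht0 : t ≠ 0 := Finset.ne_of_mem_erase ht
        rw [norm_prod]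
        rw [Finset.prod_congr rfl fun i _ => my_gauss_norm hF he ht0 (α i)]
        simp
    _ ≤ (Fintype.card F : ℝ) * Real.sqrt (Fintype.card F) ^ n := by
        rw [Finset.sum_const, nsmul_eq_mul]
        have hle : ((Finset.univ.erase (0:F)).card : ℝ) ≤ (Fintype.card F : ℝ) := by
          exact_mod_cast (Finset.card_le_card (Finset.erase_subset _ _)).trans
            (le_of_eq Finset.card_univ)
        exact mul_le_mul_of_nonneg_right hle (by positivity)

/-- Let `n ≥ 4` be even. There is `C = C(n) > 0` such that for every finite field `F` of
odd characteristic and every nontrivial additive character `e` of `F`, the 0-sphere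
`S₀ = {ξ ∈ F^n : ξ·ξ = 0}` satisfies `|∑_{ξ∈S₀} e(α·ξ)| ≤ C |F|^{n/2}` for all
`α ≠ 0`, and `C⁻¹ |F|^{n-1} ≤ |S₀| ≤ C |F|^{n-1}`. -/
theorem stmt8 (n : ℕ) (hn : 4 ≤ n) (hneven : Even n) :
    ∃ C : ℝ, 0 < C ∧
      ∀ (F : Type) [Field F] [Fintype F] [DecidableEq F], ringChar F ≠ 2 →
      ∀ (e : AddChar F ℂ), e ≠ 1 →
        (∀ α : Fin n → F, α ≠ 0 →
          ‖∑ ξ ∈ Finset.univ.filter (fun ξ : Fin n → F => ∑ i, ξ i * ξ i = 0),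
              e (∑ i, α i * ξ i)‖
            ≤ C * (Fintype.card F : ℝ) ^ ((n : ℝ) / 2)) ∧
        C⁻¹ * (Fintype.card F : ℝ) ^ (n - 1) ≤
          ((Finset.univ.filter (fun ξ : Fin n → F => ∑ i, ξ i * ξ i = 0)).card : ℝ) ∧
        ((Finset.univ.filter (fun ξ : Fin n → F => ∑ i, ξ i * ξ i = 0)).card : ℝ) ≤
          C * (Fintype.card F : ℝ) ^ (n - 1) := by
  obtain ⟨m, hm⟩ := hneven
  refine ⟨2, by norm_num, ?_⟩
  intro F _ _ _ hF e he
  have hprim : e.IsPrimitive := AddChar.IsPrimitive.of_ne_one he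
  have hq3 : 3 ≤ Fintype.card F := by
    have h1 : Fintype.card F % 2 = 1 := FiniteField.odd_card_of_char_ne_two hF
    have h2 : 1 < Fintype.card F := Fintype.one_lt_card
    omega
  have hqR : (3 : ℝ) ≤ (Fintype.card F : ℝ) := by exact_mod_cast hq3
  have hq0 : (0 : ℝ) < (Fintype.card F : ℝ) := by linarith
  have hsqa : Real.sqrt (Fintype.card F : ℝ) ^ n = (Fintype.card F : ℝ) ^ ((n : ℝ) / 2) := by
    rw [Real.sqrt_eq_rpow, ← Real.rpow_natCast ((Fintype.card F : ℝ) ^ ((1:ℝ)/2)) n,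
      ← Real.rpow_mul (le_of_lt hq0)]
    congr 1
    ring
  have hsqb : Real.sqrt (Fintype.card F : ℝ) ^ n ≤ (Fintype.card F : ℝ) ^ (n - 2) := by
    have : Real.sqrt (Fintype.card F : ℝ) ^ n = (Fintype.card F : ℝ) ^ m := by
      rw [hm, ← two_mul, pow_mul, Real.sq_sqrt (le_of_lt hq0)]
    rw [this]
    exact pow_le_pow_right₀ (by linarith) (by omega)
  constructor
  · -- Weyl sum bound
    intro α hα
    have hid := my_identity he n α
    rw [← Finset.add_sum_erase _ _ (Finset.mem_univ (0 : F))] at hid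
    have h0 : ∏ i, ∑ x : F, e ((0 : F) * (x * x) + α i * x) = 0 := by
      obtain ⟨i, hi⟩ : ∃ i, α i ≠ 0 := by
        by_contra h; push_neg at h; exact hα (funext h)
      refine Finset.prod_eq_zero (Finset.mem_univ i) ?_
      calc ∑ x : F, e ((0 : F) * (x * x) + α i * x)
          = ∑ x : F, e (x * α i) := Finset.sum_congr rfl fun x _ => congrArg e (by ring)
        _ = 0 := by rw [AddChar.sum_mulShift _ hprim, if_neg hi]; simp
    rw [h0, zero_add] at hid
    have hb := my_err_bound hF he n α
    rw [← hid, norm_mul, Complex.norm_natCast] at hb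
    have hS := le_of_mul_le_mul_left hb hq0
    calc ‖∑ ξ ∈ Finset.univ.filter (fun ξ : Fin n → F => ∑ i, ξ i * ξ i = 0),
            e (∑ i, α i * ξ i)‖
        ≤ Real.sqrt (Fintype.card F : ℝ) ^ n := hS
      _ = (Fintype.card F : ℝ) ^ ((n : ℝ) / 2) := hsqa
      _ ≤ 2 * (Fintype.card F : ℝ) ^ ((n : ℝ) / 2) := by
          nlinarith [Real.rpow_nonneg (le_of_lt hq0) ((n : ℝ) / 2)]
  · -- cardinality
    have hid := my_identity he n (0 : Fin n → F)
    rw [← Finset.add_sum_erase _ _ (Finset.mem_univ (0 : F))] at hid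
    have hL : ∑ ξ ∈ Finset.univ.filter (fun ξ : Fin n → F => ∑ i, ξ i * ξ i = 0),
        e (∑ i, (0 : Fin n → F) i * ξ i)
        = ((Finset.univ.filter (fun ξ : Fin n → F => ∑ i, ξ i * ξ i = 0)).card : ℂ) := by
      simp
    have h0 : ∏ _i : Fin n, ∑ x : F, e ((0 : F) * (x * x) + (0 : Fin n → F) _i * x)
        = (Fintype.card F : ℂ) ^ n := by
      simp
    rw [hL, h0] at hid
    set Kr : ℝ := ((Finset.univ.filter (fun ξ : Fin n → F => ∑ i, ξ i * ξ i = 0)).card : ℝ)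
      with hKr
    have hb := my_err_bound hF he n (0 : Fin n → F)
    have hreal : |(Fintype.card F : ℝ) * Kr - (Fintype.card F : ℝ) ^ n|
        ≤ (Fintype.card F : ℝ) * Real.sqrt (Fintype.card F : ℝ) ^ n := by
      calc |(Fintype.card F : ℝ) * Kr - (Fintype.card F : ℝ) ^ n|
          = ‖(((Fintype.card F : ℝ) * Kr - (Fintype.card F : ℝ) ^ n : ℝ) : ℂ)‖ := by
            rw [Complex.norm_real, Real.norm_eq_abs]
        _ = ‖∑ t ∈ Finset.univ.erase (0 : F),
              ∏ i, ∑ x : F, e (t * (x * x) + (0 : Fin n → F) i * x)‖ := by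
            congr 1
            push_cast [hKr]
            linear_combination hid
        _ ≤ _ := hb
    -- derive bounds
    have hpow1 : (Fintype.card F : ℝ) ^ n = (Fintype.card F : ℝ) * (Fintype.card F : ℝ) ^ (n-1) := by
      rw [← pow_succ']
      congr 1
      omega
    have hpow2 : (Fintype.card F : ℝ) ^ (n-1)
        = (Fintype.card F : ℝ) * (Fintype.card F : ℝ) ^ (n-2) := by
      rw [← pow_succ']
      congr 1
      omega
    have habs : |Kr - (Fintype.card F : ℝ) ^ (n-1)| ≤ (Fintype.card F : ℝ) ^ (n-2) := by
      have h1 : |(Fintype.card F : ℝ) * (Kr - (Fintype.card F : ℝ) ^ (n-1))|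
          ≤ (Fintype.card F : ℝ) * (Fintype.card F : ℝ) ^ (n-2) := by
        calc |(Fintype.card F : ℝ) * (Kr - (Fintype.card F : ℝ) ^ (n-1))|
            = |(Fintype.card F : ℝ) * Kr - (Fintype.card F : ℝ) ^ n| := by
              rw [hpow1]; ring_nf
          _ ≤ (Fintype.card F : ℝ) * Real.sqrt (Fintype.card F : ℝ) ^ n := hreal
          _ ≤ (Fintype.card F : ℝ) * (Fintype.card F : ℝ) ^ (n-2) := by
              exact mul_le_mul_of_nonneg_left hsqb (le_of_lt hq0)
      rw [abs_mul, abs_of_pos hq0] at h1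
      exact le_of_mul_le_mul_left h1 hq0
    have hAB := abs_le.mp habs
    have hq2 : (0:ℝ) ≤ (Fintype.card F : ℝ) ^ (n-2) := by positivity
    constructor
    · rw [inv_eq_one_div]
      nlinarith [hAB.1, hpow2]
    · nlinarith [hAB.2, hpow2]
end

section
/- Let F be a finite field of odd characteristic and d ≥ 2 an integer. Let P ⊆ F^d be the paraboloid, let A ⊆ P, and let B ⊆ P be such that every y = (ȳ, y_d) ∈ B satisfies ȳ·ȳ ≠ 0. Then the number of pairs (x,y) ∈ A × B with x − y ∈ P is at most |F|^{-1} |A| |B| + |F|^{(d-2)/2} |A|^{1/2} |B|^{1/2}. -/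
open Finset

namespace Stmt12Aux

private lemma fiber_card {V W : Type*} [AddCommGroup V] [Fintype V] [DecidableEq V]
    [AddCommGroup W] [Fintype W] [DecidableEq W]
    (φ : V →+ W) (hs : Function.Surjective φ) (c : W) :
    (univ.filter (fun x => φ x = c)).card * Fintype.card W = Fintype.card V := by
  have key : ∀ w : W, (univ.filter (fun x => φ x = w)).card
      = (univ.filter (fun x => φ x = c)).card := by
    intro w
    obtain ⟨xc, hxc⟩ := hs c
    obtain ⟨xw, hxw⟩ := hs w
    refine Finset.card_bij' (fun x _ => x - xw + xc) (fun x _ => x - xc + xw) ?_ ?_ ?_ ?_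
    · intro a ha
      simp only [mem_filter, mem_univ, true_and] at ha ⊢
      simp [map_add, map_sub, ha, hxc, hxw]
    · intro a ha
      simp only [mem_filter, mem_univ, true_and] at ha ⊢
      simp [map_add, map_sub, ha, hxc, hxw]
    · intro a _; simp only [sub_add_eq_add_sub, add_sub_cancel_right, sub_add_cancel]
    · intro a _; simp only [sub_add_eq_add_sub, add_sub_cancel_right, sub_add_cancel]
  have htot : Fintype.card V = ∑ w : W, (univ.filter (fun x => φ x = w)).card := by
    rw [← Finset.card_univ]
    exact Finset.card_eq_sum_card_fiberwise (fun x _ => Finset.mem_univ (φ x))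
  rw [htot]
  rw [Finset.sum_congr rfl (fun w _ => key w), Finset.sum_const, Finset.card_univ, smul_eq_mul,
    mul_comm]

set_option linter.unusedSectionVars false
variable {F : Type} [Field F] [Fintype F] [DecidableEq F] {n : ℕ}

def ipHom (a : Fin n → F) : (Fin n → F) →+ F where
  toFun x := ∑ i, a i * x i
  map_zero' := by simp
  map_add' x y := by simp [mul_add, Finset.sum_add_distrib]

lemma ipHom_apply (a x : Fin n → F) : ipHom a x = ∑ i, a i * x i := rfl

lemma ipHom_surj {a : Fin n → F} (ha : a ≠ 0) : Function.Surjective (ipHom a) := by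
  obtain ⟨j, hj⟩ := Function.ne_iff.mp ha
  intro t
  refine ⟨fun k => if k = j then t / a j else 0, ?_⟩
  rw [ipHom_apply]
  have hj' : a j ≠ 0 := hj
  simp only [mul_ite, mul_zero, Finset.sum_ite_eq', Finset.mem_univ, if_true]
  exact mul_div_cancel₀ t hj'

lemma card_one {a : Fin n → F} (ha : a ≠ 0) (c : F) :
    (univ.filter (fun x : Fin n → F => ∑ i, a i * x i = c)).card * Fintype.card F
      = Fintype.card F ^ n := by
  have := fiber_card (ipHom a) (ipHom_surj ha) c
  rw [Fintype.card_fun, Fintype.card_fin] at this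
  convert this using 3
  ext x
  exact ⟨fun h => Finset.mem_filter.mpr ⟨Finset.mem_univ _, (Finset.mem_filter.mp h).2⟩,
    fun h => Finset.mem_filter.mpr ⟨Finset.mem_univ _, (Finset.mem_filter.mp h).2⟩⟩


lemma card_two_indep {a b : Fin n → F} {i j : Fin n}
    (hD : a i * b j ≠ a j * b i) (ca cb : F) :
    (univ.filter (fun x : Fin n → F =>
        ∑ k, a k * x k = ca ∧ ∑ k, b k * x k = cb)).card
      * (Fintype.card F * Fintype.card F) = Fintype.card F ^ n := by
  have hij : i ≠ j := by rintro rfl; exact hD rfl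
  have hDne : a i * b j - a j * b i ≠ 0 := sub_ne_zero.mpr hD
  set D := a i * b j - a j * b i with hDdef
  have hsurj : Function.Surjective ((ipHom a).prod (ipHom b)) := by
    rintro ⟨s, t⟩
    set x : Fin n → F := fun k =>
      if k = i then (s * b j - t * a j) / D else if k = j then (t * a i - s * b i) / D else 0
      with hxdef
    refine ⟨x, ?_⟩
    have hsupp : ∀ w : Fin n → F, ∑ k, w k * x k = w i * x i + w j * x j := by
      intro w
      rw [← Finset.sum_subset (Finset.subset_univ ({i, j} : Finset (Fin n)))
        (fun k _ hk => ?_), Finset.sum_pair hij]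
      have h1 : k ≠ i := fun h => hk (by simp [h])
      have h2 : k ≠ j := fun h => hk (by simp [h])
      simp [hxdef, h1, h2]
    have hxi : x i = (s * b j - t * a j) / D := by simp [hxdef]
    have hxj : x j = (t * a i - s * b i) / D := by
      simp [hxdef, Ne.symm hij]
    have h1 : ∑ k, a k * x k = s := by
      rw [hsupp, hxi, hxj]; field_simp; ring
    have h2 : ∑ k, b k * x k = t := by
      rw [hsupp, hxi, hxj]; field_simp; ring
    simp [AddMonoidHom.prod_apply, ipHom_apply, h1, h2, Prod.ext_iff]
  have := fiber_card ((ipHom a).prod (ipHom b)) hsurj (ca, cb)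
  simpa [AddMonoidHom.prod_apply, ipHom_apply, Fintype.card_fun, Fintype.card_prod,
    Prod.ext_iff] using this

lemma card_two {a b : Fin n → F} (ha : ∑ k, a k * a k ≠ 0) (hb : ∑ k, b k * b k ≠ 0)
    (hab : a ≠ b) :
    (univ.filter (fun x : Fin n → F =>
        ∑ k, a k * x k = ∑ k, a k * a k ∧ ∑ k, b k * x k = ∑ k, b k * b k)).card
      * (Fintype.card F * Fintype.card F) ≤ Fintype.card F ^ n := by
  by_cases hD : ∃ i j, a i * b j ≠ a j * b i
  · obtain ⟨i, j, hD⟩ := hD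
    exact le_of_eq (card_two_indep hD _ _)
  · push_neg at hD
    have ha0 : a ≠ 0 := fun h => ha (by simp [h])
    have hb0 : b ≠ 0 := fun h => hb (by simp [h])
    obtain ⟨i0, hi0⟩ := Function.ne_iff.mp ha0
    have hi0' : a i0 ≠ 0 := hi0
    set lam := b i0 / a i0 with hlam
    have hba : ∀ k, b k = lam * a k := by
      intro k
      have h := hD i0 k
      rw [hlam, div_mul_eq_mul_div, eq_div_iff hi0']
      linear_combination h
    have hempty : (univ.filter (fun x : Fin n → F =>
        ∑ k, a k * x k = ∑ k, a k * a k ∧ ∑ k, b k * x k = ∑ k, b k * b k)) = ∅ := by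
      rw [Finset.filter_eq_empty_iff]
      rintro x - ⟨h1, h2⟩
      have e1 : ∑ k, b k * x k = lam * ∑ k, a k * x k := by
        rw [Finset.mul_sum]; exact Finset.sum_congr rfl fun k _ => by rw [hba k]; ring
      have e2 : ∑ k, b k * b k = lam * lam * ∑ k, a k * a k := by
        rw [Finset.mul_sum]; exact Finset.sum_congr rfl fun k _ => by rw [hba k]; ring
      rw [e1, e2, h1] at h2
      have hlam01 : lam = 0 ∨ lam = 1 := by
        have : lam * (lam - 1) * (∑ k, a k * a k) = 0 := by linear_combination -h2
        rcases mul_eq_zero.mp this with h | h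
        · rcases mul_eq_zero.mp h with h | h
          · exact Or.inl h
          · exact Or.inr (sub_eq_zero.mp h)
        · exact absurd h ha
      rcases hlam01 with h | h
      · exact hb0 (funext fun k => by rw [hba k, h, zero_mul]; rfl)
      · exact hab (funext fun k => by rw [hba k, h, one_mul]).symm
    rw [hempty]
    simp


noncomputable def f (a v : Fin n → F) : ℝ :=
  (if ∑ k, a k * v k = ∑ k, a k * a k then 1 else 0) - (Fintype.card F : ℝ)⁻¹

lemma T_eq (a b : Fin n → F) :
    ∑ v : Fin n → F, f a v * f b v
      = ((univ.filter (fun v : Fin n → F =>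
            ∑ k, a k * v k = ∑ k, a k * a k ∧
            ∑ k, b k * v k = ∑ k, b k * b k)).card : ℝ)
        - ((univ.filter (fun v : Fin n → F =>
            ∑ k, a k * v k = ∑ k, a k * a k)).card : ℝ) * (Fintype.card F : ℝ)⁻¹
        - ((univ.filter (fun v : Fin n → F =>
            ∑ k, b k * v k = ∑ k, b k * b k)).card : ℝ) * (Fintype.card F : ℝ)⁻¹
        + (Fintype.card F : ℝ) ^ n * ((Fintype.card F : ℝ)⁻¹ * (Fintype.card F : ℝ)⁻¹) := by
  have key : ∀ v : Fin n → F, f a v * f b v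
      = (if (∑ k, a k * v k = ∑ k, a k * a k ∧ ∑ k, b k * v k = ∑ k, b k * b k)
          then (1:ℝ) else 0)
        - (if ∑ k, a k * v k = ∑ k, a k * a k then (1:ℝ) else 0) * (Fintype.card F : ℝ)⁻¹
        - (if ∑ k, b k * v k = ∑ k, b k * b k then (1:ℝ) else 0) * (Fintype.card F : ℝ)⁻¹
        + (Fintype.card F : ℝ)⁻¹ * (Fintype.card F : ℝ)⁻¹ := by
    intro v
    unfold f
    by_cases hP : ∑ k, a k * v k = ∑ k, a k * a k <;>
      by_cases hQ : ∑ k, b k * v k = ∑ k, b k * b k <;>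
      simp [hP, hQ] <;> ring
  rw [Finset.sum_congr rfl (fun v _ => key v)]
  rw [Finset.sum_add_distrib, Finset.sum_sub_distrib, Finset.sum_sub_distrib,
    ← Finset.sum_mul, ← Finset.sum_mul, Finset.sum_boole, Finset.sum_boole, Finset.sum_boole,
    Finset.sum_const, Finset.card_univ, Fintype.card_fun, Fintype.card_fin, nsmul_eq_mul]
  push_cast
  ring

lemma T_diag {a : Fin n → F} (ha : ∑ k, a k * a k ≠ 0) :
    ∑ v : Fin n → F, f a v * f a v
      ≤ (Fintype.card F : ℝ) ^ n * (Fintype.card F : ℝ)⁻¹ := by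
  have hq0 : (0:ℝ) < (Fintype.card F : ℝ) := by
    exact_mod_cast Fintype.card_pos
  have ha0 : a ≠ 0 := fun h => ha (by simp [h])
  have hK : ((univ.filter (fun v : Fin n → F =>
      ∑ k, a k * v k = ∑ k, a k * a k)).card : ℝ)
      = (Fintype.card F : ℝ) ^ n * (Fintype.card F : ℝ)⁻¹ := by
    have h' : ((univ.filter (fun v : Fin n → F =>
        ∑ k, a k * v k = ∑ k, a k * a k)).card : ℝ) * (Fintype.card F : ℝ)
        = (Fintype.card F : ℝ) ^ n := by exact_mod_cast card_one ha0 (∑ k, a k * a k)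
    rw [← h', mul_assoc, mul_inv_cancel₀ (ne_of_gt hq0), mul_one]
  rw [T_eq]
  simp only [and_self]
  rw [hK]
  have h1 : (0:ℝ) ≤ (Fintype.card F : ℝ) ^ n * (Fintype.card F : ℝ)⁻¹ * (Fintype.card F : ℝ)⁻¹ := by
    positivity
  nlinarith [h1]

lemma T_off {a b : Fin n → F} (ha : ∑ k, a k * a k ≠ 0) (hb : ∑ k, b k * b k ≠ 0)
    (hab : a ≠ b) :
    ∑ v : Fin n → F, f a v * f b v ≤ 0 := by
  have hq0 : (0:ℝ) < (Fintype.card F : ℝ) := by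
    exact_mod_cast Fintype.card_pos
  have ha0 : a ≠ 0 := fun h => ha (by simp [h])
  have hb0 : b ≠ 0 := fun h => hb (by simp [h])
  have hKa : ((univ.filter (fun v : Fin n → F =>
      ∑ k, a k * v k = ∑ k, a k * a k)).card : ℝ)
      = (Fintype.card F : ℝ) ^ n * (Fintype.card F : ℝ)⁻¹ := by
    have h' : ((univ.filter (fun v : Fin n → F =>
        ∑ k, a k * v k = ∑ k, a k * a k)).card : ℝ) * (Fintype.card F : ℝ)
        = (Fintype.card F : ℝ) ^ n := by exact_mod_cast card_one ha0 (∑ k, a k * a k)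
    rw [← h', mul_assoc, mul_inv_cancel₀ (ne_of_gt hq0), mul_one]
  have hKb : ((univ.filter (fun v : Fin n → F =>
      ∑ k, b k * v k = ∑ k, b k * b k)).card : ℝ)
      = (Fintype.card F : ℝ) ^ n * (Fintype.card F : ℝ)⁻¹ := by
    have h' : ((univ.filter (fun v : Fin n → F =>
        ∑ k, b k * v k = ∑ k, b k * b k)).card : ℝ) * (Fintype.card F : ℝ)
        = (Fintype.card F : ℝ) ^ n := by exact_mod_cast card_one hb0 (∑ k, b k * b k)
    rw [← h', mul_assoc, mul_inv_cancel₀ (ne_of_gt hq0), mul_one]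
  have hK2 : ((univ.filter (fun v : Fin n → F =>
      ∑ k, a k * v k = ∑ k, a k * a k ∧ ∑ k, b k * v k = ∑ k, b k * b k)).card : ℝ)
      ≤ (Fintype.card F : ℝ) ^ n * ((Fintype.card F : ℝ)⁻¹ * (Fintype.card F : ℝ)⁻¹) := by
    have h := card_two ha hb hab
    have h' : (((univ.filter (fun v : Fin n → F =>
        ∑ k, a k * v k = ∑ k, a k * a k ∧ ∑ k, b k * v k = ∑ k, b k * b k)).card : ℝ))
        * ((Fintype.card F : ℝ) * (Fintype.card F : ℝ)) ≤ (Fintype.card F : ℝ) ^ n := by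
      exact_mod_cast h
    have hqne : (Fintype.card F : ℝ) ≠ 0 := ne_of_gt hq0
    calc (((univ.filter (fun v : Fin n → F =>
          ∑ k, a k * v k = ∑ k, a k * a k ∧ ∑ k, b k * v k = ∑ k, b k * b k)).card : ℝ))
        = (((univ.filter (fun v : Fin n → F =>
            ∑ k, a k * v k = ∑ k, a k * a k ∧ ∑ k, b k * v k = ∑ k, b k * b k)).card : ℝ))
          * ((Fintype.card F : ℝ) * (Fintype.card F : ℝ))
          * ((Fintype.card F : ℝ)⁻¹ * (Fintype.card F : ℝ)⁻¹) := by field_simp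
      _ ≤ (Fintype.card F : ℝ) ^ n * ((Fintype.card F : ℝ)⁻¹ * (Fintype.card F : ℝ)⁻¹) :=
          mul_le_mul_of_nonneg_right h' (by positivity)
  rw [T_eq, hKa, hKb]
  linarith [hK2]

lemma sum_sq_bound (Bs : Finset (Fin n → F)) (hBs : ∀ a ∈ Bs, ∑ k, a k * a k ≠ 0) :
    ∑ v : Fin n → F, (∑ a ∈ Bs, f a v) ^ 2
      ≤ (Bs.card : ℝ) * ((Fintype.card F : ℝ) ^ n * (Fintype.card F : ℝ)⁻¹) := by
  have expand : ∑ v : Fin n → F, (∑ a ∈ Bs, f a v) ^ 2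
      = ∑ a ∈ Bs, ∑ b ∈ Bs, ∑ v : Fin n → F, f a v * f b v := by
    have h1 : ∀ v : Fin n → F, (∑ a ∈ Bs, f a v) ^ 2
        = ∑ a ∈ Bs, ∑ b ∈ Bs, f a v * f b v := by
      intro v
      rw [sq, Finset.sum_mul_sum]
    rw [Finset.sum_congr rfl (fun v _ => h1 v), Finset.sum_comm]
    exact Finset.sum_congr rfl (fun a _ => Finset.sum_comm)
  rw [expand]
  calc ∑ a ∈ Bs, ∑ b ∈ Bs, ∑ v : Fin n → F, f a v * f b v
      ≤ ∑ a ∈ Bs, ((Fintype.card F : ℝ) ^ n * (Fintype.card F : ℝ)⁻¹) := by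
        apply Finset.sum_le_sum
        intro a haBs
        rw [← Finset.add_sum_erase _ _ haBs]
        have h1 : ∑ b ∈ Bs.erase a, ∑ v : Fin n → F, f a v * f b v ≤ 0 := by
          apply Finset.sum_nonpos
          intro b hb
          exact T_off (hBs a haBs) (hBs b (Finset.mem_of_mem_erase hb))
            (Ne.symm (Finset.ne_of_mem_erase hb))
        linarith [T_diag (hBs a haBs)]
    _ = (Bs.card : ℝ) * ((Fintype.card F : ℝ) ^ n * (Fintype.card F : ℝ)⁻¹) := by
        rw [Finset.sum_const, nsmul_eq_mul]

end Stmt12Aux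

open Stmt12Aux in
/-- Let `F` be a finite field of odd characteristic, `d ≥ 2`, `P ⊆ F^d` the paraboloid
(points of `F^d` modeled as pairs `(x̄, x_d) ∈ F^{d-1} × F`), `A ⊆ P`, and `B ⊆ P` such
that every `y = (ȳ, y_d) ∈ B` has `ȳ·ȳ ≠ 0`. Then the number of pairs `(x,y) ∈ A × B`
with `x − y ∈ P` is at most `|F|⁻¹ |A||B| + |F|^{(d-2)/2} |A|^{1/2} |B|^{1/2}`. -/
theorem stmt12 (F : Type) [Field F] [Fintype F] [DecidableEq F]
    (hchar : ringChar F ≠ 2) (d : ℕ) (hd : 2 ≤ d)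
    (A B : Finset ((Fin (d - 1) → F) × F))
    (hA : ∀ p ∈ A, p.2 = ∑ i, p.1 i * p.1 i)
    (hB : ∀ p ∈ B, p.2 = ∑ i, p.1 i * p.1 i ∧ (∑ i, p.1 i * p.1 i) ≠ 0) :
    ((((A ×ˢ B).filter
        (fun p => (p.1 - p.2).2 = ∑ i, (p.1 - p.2).1 i * (p.1 - p.2).1 i)).card : ℝ))
      ≤ (Fintype.card F : ℝ)⁻¹ * (A.card : ℝ) * (B.card : ℝ) +
        (Fintype.card F : ℝ) ^ (((d : ℝ) - 2) / 2) *
          Real.sqrt (A.card : ℝ) * Real.sqrt (B.card : ℝ) := by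
  classical
  have hq0 : (0:ℝ) < (Fintype.card F : ℝ) := by exact_mod_cast Fintype.card_pos
  have hqne : (Fintype.card F : ℝ) ≠ 0 := ne_of_gt hq0
  have h2 : (2:F) ≠ 0 := Ring.two_ne_zero hchar
  -- Step 1 : rewrite the incidence condition
  have hfilter : (A ×ˢ B).filter
      (fun p => (p.1 - p.2).2 = ∑ i, (p.1 - p.2).1 i * (p.1 - p.2).1 i)
      = (A ×ˢ B).filter
      (fun p => ∑ i, p.2.1 i * p.1.1 i = ∑ i, p.2.1 i * p.2.1 i) := by
    apply Finset.filter_congr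
    intro p hp
    rw [Finset.mem_product] at hp
    have hx := hA _ hp.1
    have hy := (hB _ hp.2).1
    simp only [Prod.fst_sub, Prod.snd_sub, Pi.sub_apply]
    have expand : ∑ i, (p.1.1 i - p.2.1 i) * (p.1.1 i - p.2.1 i)
        = ∑ i, p.1.1 i * p.1.1 i - 2 * ∑ i, p.2.1 i * p.1.1 i
          + ∑ i, p.2.1 i * p.2.1 i := by
      rw [Finset.mul_sum, ← Finset.sum_sub_distrib, ← Finset.sum_add_distrib]
      exact Finset.sum_congr rfl fun i _ => by ring
    rw [← hx, ← hy] at expand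
    constructor
    · intro h
      rw [expand] at h
      have h2' : 2 * (∑ i, p.2.1 i * p.1.1 i) = 2 * (∑ i, p.2.1 i * p.2.1 i) := by
        linear_combination h + 2 * hy
      exact mul_left_cancel₀ h2 h2'
    · intro h
      rw [expand]
      linear_combination 2 * h - 2 * hy
  rw [hfilter]
  -- Step 2 : projections to the base
  set Ab := A.image Prod.fst with hAbdef
  set Bb := B.image Prod.fst with hBbdef
  have hAinj : Set.InjOn (Prod.fst : ((Fin (d-1) → F) × F) → (Fin (d-1) → F)) (A : Set ((Fin (d-1) → F) × F)) := by
    intro u hu v hv huv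
    exact Prod.ext huv (by rw [hA u (Finset.mem_coe.mp hu), hA v (Finset.mem_coe.mp hv), huv])
  have hBinj : Set.InjOn (Prod.fst : ((Fin (d-1) → F) × F) → (Fin (d-1) → F)) (B : Set ((Fin (d-1) → F) × F)) := by
    intro u hu v hv huv
    exact Prod.ext huv
      (by rw [(hB u (Finset.mem_coe.mp hu)).1, (hB v (Finset.mem_coe.mp hv)).1, huv])
  have hAcard : Ab.card = A.card := Finset.card_image_of_injOn hAinj
  have hBcard : Bb.card = B.card := Finset.card_image_of_injOn hBinj
  have hBs : ∀ a ∈ Bb, ∑ k, a k * a k ≠ 0 := by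
    intro a ha
    rw [hBbdef, Finset.mem_image] at ha
    obtain ⟨y, hy, rfl⟩ := ha
    exact (hB y hy).2
  -- Step 3 : the count as a double sum over the projections
  have hcount : ((((A ×ˢ B).filter
      (fun p => ∑ i, p.2.1 i * p.1.1 i = ∑ i, p.2.1 i * p.2.1 i)).card : ℝ))
      = ∑ u ∈ Ab, ∑ w ∈ Bb,
          (if ∑ k, w k * u k = ∑ k, w k * w k then (1:ℝ) else 0) := by
    rw [Finset.card_filter, Finset.sum_product]
    push_cast
    rw [hAbdef, Finset.sum_image (fun x hx y hy h => hAinj hx hy h)]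
    refine Finset.sum_congr rfl fun x _ => ?_
    rw [hBbdef, Finset.sum_image (fun u hu v hv h => hBinj hu hv h)]
  have hsplit : ∑ u ∈ Ab, ∑ w ∈ Bb,
        (if ∑ k, w k * u k = ∑ k, w k * w k then (1:ℝ) else 0)
      = (Ab.card : ℝ) * (Bb.card : ℝ) * (Fintype.card F : ℝ)⁻¹
        + ∑ u ∈ Ab, ∑ w ∈ Bb, f w u := by
    have key : ∀ u w : Fin (d-1) → F,
        (if ∑ k, w k * u k = ∑ k, w k * w k then (1:ℝ) else 0)
          = (Fintype.card F : ℝ)⁻¹ + f w u := by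
      intro u w
      unfold Stmt12Aux.f
      ring
    rw [Finset.sum_congr rfl fun u _ => Finset.sum_congr rfl fun w _ => key u w]
    rw [Finset.sum_congr rfl fun u (_ : u ∈ Ab) => Finset.sum_add_distrib,
      Finset.sum_add_distrib, Finset.sum_const, Finset.sum_const, nsmul_eq_mul,
      nsmul_eq_mul]
    ring
  -- Step 4 : Cauchy-Schwarz and the second moment bound
  set E := ∑ u ∈ Ab, ∑ w ∈ Bb, f w u with hEdef
  have hCS : E ^ 2 ≤ (Ab.card : ℝ) *
      ((Bb.card : ℝ) * ((Fintype.card F : ℝ) ^ (d-1) * (Fintype.card F : ℝ)⁻¹)) := by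
    have c1 : E ^ 2 ≤ (∑ u ∈ Ab, (1:ℝ) ^ 2) * ∑ u ∈ Ab, (∑ w ∈ Bb, f w u) ^ 2 := by
      have := Finset.sum_mul_sq_le_sq_mul_sq Ab (fun _ => (1:ℝ))
        (fun u => ∑ w ∈ Bb, f w u)
      simpa [hEdef] using this
    have c2 : ∑ u ∈ Ab, (∑ w ∈ Bb, f w u) ^ 2
        ≤ ∑ v : Fin (d-1) → F, (∑ w ∈ Bb, f w v) ^ 2 :=
      Finset.sum_le_sum_of_subset_of_nonneg (Finset.subset_univ _)
        (fun v _ _ => sq_nonneg _)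
    have c3 := sum_sq_bound Bb hBs
    have c4 : (0:ℝ) ≤ (Ab.card : ℝ) := by positivity
    calc E ^ 2 ≤ (∑ u ∈ Ab, (1:ℝ) ^ 2) * ∑ u ∈ Ab, (∑ w ∈ Bb, f w u) ^ 2 := c1
      _ = (Ab.card : ℝ) * ∑ u ∈ Ab, (∑ w ∈ Bb, f w u) ^ 2 := by
          rw [Finset.sum_const, nsmul_eq_mul]; ring
      _ ≤ (Ab.card : ℝ) * ((Bb.card : ℝ)
            * ((Fintype.card F : ℝ) ^ (d-1) * (Fintype.card F : ℝ)⁻¹)) := by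
          apply mul_le_mul_of_nonneg_left _ c4
          exact le_trans c2 c3
  -- Step 5 : identify the power of q
  have hpow : (Fintype.card F : ℝ) ^ (d-1) * (Fintype.card F : ℝ)⁻¹
      = ((Fintype.card F : ℝ) ^ (((d:ℝ) - 2) / 2)) ^ 2 := by
    rw [← Real.rpow_natCast (Fintype.card F : ℝ) (d-1)]
    rw [← Real.rpow_neg_one (Fintype.card F : ℝ)]
    rw [← Real.rpow_add hq0]
    rw [← Real.rpow_natCast ((Fintype.card F : ℝ) ^ (((d:ℝ) - 2) / 2)) 2]
    rw [← Real.rpow_mul (le_of_lt hq0)]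
    congr 1
    have : ((d - 1 : ℕ) : ℝ) = (d : ℝ) - 1 := by
      have : (1:ℕ) ≤ d := le_trans one_le_two hd
      push_cast [Nat.cast_sub this]
      ring
    rw [this]
    push_cast
    ring
  have hEbound : E ≤ (Fintype.card F : ℝ) ^ (((d:ℝ) - 2) / 2)
      * Real.sqrt (A.card : ℝ) * Real.sqrt (B.card : ℝ) := by
    have hqpow0 : (0:ℝ) ≤ (Fintype.card F : ℝ) ^ (((d:ℝ) - 2) / 2) :=
      Real.rpow_nonneg (le_of_lt hq0) _
    have habs : |E| ≤ Real.sqrt ((Ab.card : ℝ) *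
        ((Bb.card : ℝ) * ((Fintype.card F : ℝ) ^ (d-1) * (Fintype.card F : ℝ)⁻¹))) := by
      rw [← Real.sqrt_sq_eq_abs]
      exact Real.sqrt_le_sqrt hCS
    have hsqrt : Real.sqrt ((Ab.card : ℝ) *
        ((Bb.card : ℝ) * ((Fintype.card F : ℝ) ^ (d-1) * (Fintype.card F : ℝ)⁻¹)))
        = (Fintype.card F : ℝ) ^ (((d:ℝ) - 2) / 2)
          * Real.sqrt (A.card : ℝ) * Real.sqrt (B.card : ℝ) := by
      rw [hAcard, hBcard, hpow]
      rw [Real.sqrt_mul (by positivity), Real.sqrt_mul (by positivity),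
        Real.sqrt_sq hqpow0]
      ring
    calc E ≤ |E| := le_abs_self E
      _ ≤ _ := habs
      _ = _ := by rw [hsqrt]
  -- Step 6 : final assembly
  rw [hcount, hsplit, hAcard, hBcard]
  have : (A.card : ℝ) * (B.card : ℝ) * (Fintype.card F : ℝ)⁻¹
      = (Fintype.card F : ℝ)⁻¹ * (A.card : ℝ) * (B.card : ℝ) := by ring
  rw [this]
  linarith [hEbound]
end

section
/- Let d ≥ 2 be an integer. For every finite field F of odd characteristic, every nontrivial additive character e of F, and every g : F^d → ℂ, one has ‖ĝ‖_{L²(P,dσ)} ≤ ‖g‖_{L²(F^d)} + |F|^{(1-d)/4} ‖g‖_{L¹(F^d)}, i.e. (|F|^{-(d-1)} ∑_{ξ∈P} |ĝ(ξ)|²)^{1/2} ≤ (∑_{x∈F^d} |g(x)|²)^{1/2} + |F|^{(1-d)/4} ∑_{x∈F^d} |g(x)|. -/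
open Finset

namespace Stmt13Aux

open scoped Classical

variable {F : Type} [Field F] [Fintype F]

lemma sqrt_add_le' (a b : ℝ) (ha : 0 ≤ a) (hb : 0 ≤ b) :
    Real.sqrt (a + b) ≤ Real.sqrt a + Real.sqrt b := by
  have h := Real.sqrt_le_sqrt (show a + b ≤ (Real.sqrt a + Real.sqrt b) ^ 2 by
    nlinarith [Real.sq_sqrt ha, Real.sq_sqrt hb, Real.sqrt_nonneg a, Real.sqrt_nonneg b])
  simpa [Real.sqrt_sq (by positivity : (0:ℝ) ≤ Real.sqrt a + Real.sqrt b)] using h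

lemma map_sum' {ι : Type*} (e : AddChar F ℂ) (s : Finset ι) (f : ι → F) :
    e (∑ i ∈ s, f i) = ∏ i ∈ s, e (f i) := by
  classical
  induction s using Finset.cons_induction with
  | empty => simp
  | cons a s ha ih => rw [Finset.sum_cons, Finset.prod_cons, AddChar.map_add_eq_mul, ih]

lemma sum_linear {n : ℕ} (e : AddChar F ℂ) (he : e ≠ 1) (b : Fin n → F) :
    ∑ y : Fin n → F, e (∑ i, b i * y i) =
      if b = 0 then ((Fintype.card F : ℂ)) ^ n else 0 := by
  classical
  have hprim := AddChar.IsPrimitive.of_ne_one he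
  have h1 : ∑ y : Fin n → F, e (∑ i, b i * y i)
      = ∏ i, ∑ c : F, e (b i * c) := by
    simp_rw [map_sum']
    exact (Fintype.prod_sum fun i c => e (b i * c)).symm
  have h2 : ∀ i, ∑ c : F, e (b i * c) = if b i = 0 then (Fintype.card F : ℂ) else 0 := by
    intro i
    simp_rw [mul_comm (b i)]
    rw [AddChar.sum_mulShift (b i) hprim]
    split_ifs <;> simp
  rw [h1]
  by_cases hb : b = 0
  · simp [hb, h2, Finset.prod_const]
  · rw [if_neg hb]
    obtain ⟨i, hi⟩ : ∃ i, b i ≠ 0 := by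
      by_contra h; push_neg at h; exact hb (funext h)
    exact Finset.prod_eq_zero (Finset.mem_univ i) (by rw [h2 i, if_neg hi])

noncomputable def KK {n : ℕ} (e : AddChar F ℂ) (b : Fin n → F) (t : F) : ℂ :=
  ∑ y : Fin n → F, e (∑ i, b i * y i + t * ∑ i, y i * y i)

lemma KK_t_zero {n : ℕ} (e : AddChar F ℂ) (he : e ≠ 1) (b : Fin n → F) :
    KK e b 0 = if b = 0 then ((Fintype.card F : ℂ)) ^ n else 0 := by
  rw [← sum_linear e he b]
  unfold KK
  simp

lemma phi_diff {n : ℕ} (b : Fin n → F) (t : F) (u y : Fin n → F) :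
    (∑ i, b i * (u i + y i) + t * ∑ i, (u i + y i) * (u i + y i))
      - (∑ i, b i * y i + t * ∑ i, y i * y i)
    = (∑ i, b i * u i + t * ∑ i, u i * u i) + ∑ i, (2 * t * u i) * y i := by
  have e1 : ∀ z : Fin n → F, (∑ i, b i * z i + t * ∑ i, z i * z i)
      = ∑ i, (b i * z i + t * (z i * z i)) := by
    intro z; rw [Finset.mul_sum, Finset.sum_add_distrib]
  rw [e1, e1, e1, ← Finset.sum_sub_distrib, ← Finset.sum_add_distrib]
  exact Finset.sum_congr rfl fun i _ => by ring

lemma KK_mul_conj {n : ℕ} (e : AddChar F ℂ) (he : e ≠ 1) (hchar : ringChar F ≠ 2)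
    (b : Fin n → F) {t : F} (ht : t ≠ 0) :
    KK e b t * (starRingEnd ℂ) (KK e b t) = (Fintype.card F : ℂ) ^ n := by
  classical
  have h2 : (2 : F) ≠ 0 := Ring.two_ne_zero hchar
  unfold KK
  rw [map_sum, Finset.sum_mul_sum]
  have hterm : ∀ y y' : Fin n → F,
      e (∑ i, b i * y i + t * ∑ i, y i * y i) *
        (starRingEnd ℂ) (e (∑ i, b i * y' i + t * ∑ i, y' i * y' i))
      = e ((∑ i, b i * y i + t * ∑ i, y i * y i)
            - (∑ i, b i * y' i + t * ∑ i, y' i * y' i)) := by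
    intro y y'
    rw [← AddChar.map_neg_eq_conj, ← AddChar.map_add_eq_mul, sub_eq_add_neg]
  simp_rw [hterm]
  rw [Finset.sum_comm]
  have hre : ∀ y' : Fin n → F,
      ∑ y : Fin n → F, e ((∑ i, b i * y i + t * ∑ i, y i * y i)
          - (∑ i, b i * y' i + t * ∑ i, y' i * y' i))
      = ∑ u : Fin n → F,
          e (∑ i, b i * u i + t * ∑ i, u i * u i) * e (∑ i, (2 * t * u i) * y' i) := by
    intro y'
    refine (Fintype.sum_equiv (Equiv.addRight y') _ _ fun u => ?_).symm
    rw [← AddChar.map_add_eq_mul, ← phi_diff]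
    rfl
  simp_rw [hre]
  rw [Finset.sum_comm]
  simp_rw [← Finset.mul_sum]
  have hlin : ∀ u : Fin n → F,
      ∑ y' : Fin n → F, e (∑ i, (2 * t * u i) * y' i)
        = if u = 0 then ((Fintype.card F : ℂ)) ^ n else 0 := by
    intro u
    rw [sum_linear e he fun i => 2 * t * u i]
    congr 1
    · simp only [eq_iff_iff]
      constructor
      · intro h; funext i
        have := congrFun h i
        simp only [Pi.zero_apply] at this ⊢
        rcases mul_eq_zero.mp this with h' | h'
        · exact absurd h' (mul_ne_zero h2 ht)
        · exact h'
      · intro h; funext i; simp [h]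
  simp_rw [hlin, mul_ite, mul_zero]
  rw [Finset.sum_ite_eq' Finset.univ (0 : Fin n → F)]
  simp

lemma norm_KK_le {n : ℕ} (e : AddChar F ℂ) (he : e ≠ 1) (hchar : ringChar F ≠ 2)
    (b : Fin n → F) (t : F) :
    ‖KK e b t‖ ≤ (if b = 0 ∧ t = 0 then ((Fintype.card F : ℝ)) ^ n else 0)
      + Real.sqrt ((Fintype.card F : ℝ) ^ n) := by
  have hsqrt : (0:ℝ) ≤ Real.sqrt ((Fintype.card F : ℝ) ^ n) := Real.sqrt_nonneg _
  by_cases ht : t = 0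
  · subst ht
    rw [KK_t_zero e he b]
    by_cases hb : b = 0
    · simp only [hb, if_pos rfl, and_self, if_pos]
      rw [norm_pow]
      simp only [Complex.norm_natCast]
      linarith
    · simp [hb, hsqrt]
  · have hm := KK_mul_conj e he hchar b ht
    rw [Complex.mul_conj] at hm
    have hnsq : ‖KK e b t‖ ^ 2 = (Fintype.card F : ℝ) ^ n := by
      have h' : Complex.normSq (KK e b t) = (Fintype.card F : ℝ) ^ n := by
        exact_mod_cast hm
      rw [Complex.sq_norm, h']
    have : ‖KK e b t‖ = Real.sqrt ((Fintype.card F : ℝ) ^ n) := by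
      rw [← hnsq, Real.sqrt_sq (norm_nonneg _)]
    rw [this, if_neg (fun h => ht h.2)]
    linarith

lemma phi_sub {n : ℕ} (a a' : Fin n → F) (s s' : F) (y : Fin n → F) :
    (∑ i, a' i * y i + s' * ∑ i, y i * y i) - (∑ i, a i * y i + s * ∑ i, y i * y i)
      = ∑ i, (a' i - a i) * y i + (s' - s) * ∑ i, y i * y i := by
  simp only [sub_mul, Finset.sum_sub_distrib]
  ring

lemma expansion {d : ℕ} (e : AddChar F ℂ) (g : (Fin (d - 1) → F) × F → ℂ) :
    ((∑ y : Fin (d - 1) → F, ‖fourierP e g y‖ ^ 2 : ℝ) : ℂ)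
      = ∑ x : (Fin (d - 1) → F) × F, ∑ x' : (Fin (d - 1) → F) × F,
          g x * (starRingEnd ℂ) (g x') *
            KK e (fun i => x'.1 i - x.1 i) (x'.2 - x.2) := by
  classical
  have hz : ∀ z : ℂ, ((‖z‖ ^ 2 : ℝ) : ℂ) = z * (starRingEnd ℂ) z := by
    intro z
    rw [Complex.mul_conj]
    norm_cast
    rw [Complex.sq_norm]
  calc ((∑ y : Fin (d - 1) → F, ‖fourierP e g y‖ ^ 2 : ℝ) : ℂ)
      = ∑ y : Fin (d - 1) → F, fourierP e g y * (starRingEnd ℂ) (fourierP e g y) := by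
        rw [Complex.ofReal_sum]
        exact Finset.sum_congr rfl fun y _ => hz _
    _ = ∑ y : Fin (d - 1) → F, ∑ x : (Fin (d - 1) → F) × F, ∑ x' : (Fin (d - 1) → F) × F,
          g x * (starRingEnd ℂ) (g x') *
            e ((∑ i, x'.1 i * y i + x'.2 * ∑ i, y i * y i)
               - (∑ i, x.1 i * y i + x.2 * ∑ i, y i * y i)) := by
        refine Finset.sum_congr rfl fun y _ => ?_
        unfold fourierP
        rw [map_sum, Finset.sum_mul_sum]
        refine Finset.sum_congr rfl fun x _ => Finset.sum_congr rfl fun x' _ => ?_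
        rw [map_mul, ← AddChar.map_neg_eq_conj, neg_neg, mul_mul_mul_comm,
          ← AddChar.map_add_eq_mul, neg_add_eq_sub]
    _ = ∑ x : (Fin (d - 1) → F) × F, ∑ x' : (Fin (d - 1) → F) × F,
          g x * (starRingEnd ℂ) (g x') *
            KK e (fun i => x'.1 i - x.1 i) (x'.2 - x.2) := by
        rw [Finset.sum_comm]
        refine Finset.sum_congr rfl fun x _ => ?_
        rw [Finset.sum_comm]
        refine Finset.sum_congr rfl fun x' _ => ?_
        rw [← Finset.mul_sum]
        congr 1
        unfold KK
        refine Finset.sum_congr rfl fun y _ => ?_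
        congr 1
        simpa using phi_sub x.1 x'.1 x.2 x'.2 y

end Stmt13Aux

/-- For `d ≥ 2`, every finite field `F` of odd characteristic, every nontrivial additive
character `e`, and every `g : F^d → ℂ`:
`‖ĝ‖_{L²(P,dσ)} ≤ ‖g‖_{L²(F^d)} + |F|^{(1-d)/4} ‖g‖_{L¹(F^d)}`. -/
theorem stmt13 (d : ℕ) (hd : 2 ≤ d)
    (F : Type) [Field F] [Fintype F] (hchar : ringChar F ≠ 2)
    (e : AddChar F ℂ) (he : e ≠ 1) (g : (Fin (d - 1) → F) × F → ℂ) :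
    (((Fintype.card F : ℝ) ^ (d - 1))⁻¹ *
        ∑ y : Fin (d - 1) → F, ‖fourierP e g y‖ ^ 2) ^ ((1 : ℝ) / 2)
      ≤ (∑ x : (Fin (d - 1) → F) × F, ‖g x‖ ^ 2) ^ ((1 : ℝ) / 2) +
        (Fintype.card F : ℝ) ^ ((1 - (d : ℝ)) / 4) *
          ∑ x : (Fin (d - 1) → F) × F, ‖g x‖ := by
  classical
  have hcard : (0:ℝ) < (Fintype.card F : ℝ) := by exact_mod_cast Fintype.card_pos
  set c : ℝ := (Fintype.card F : ℝ) with hcdef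
  set Q : ℝ := c ^ (d - 1) with hQdef
  have hQ : (0:ℝ) < Q := by positivity
  set S : ℝ := Real.sqrt Q with hSdef
  have hS : (0:ℝ) < S := Real.sqrt_pos.mpr hQ
  have hSS : S * S = Q := Real.mul_self_sqrt hQ.le
  set A : ℝ := ∑ x : (Fin (d - 1) → F) × F, ‖g x‖ ^ 2 with hAdef
  set L : ℝ := ∑ x : (Fin (d - 1) → F) × F, ‖g x‖ with hLdef
  have hA : (0:ℝ) ≤ A := Finset.sum_nonneg fun x _ => sq_nonneg _
  have hL : (0:ℝ) ≤ L := Finset.sum_nonneg fun x _ => norm_nonneg _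
  set T : ℝ := ∑ y : Fin (d - 1) → F, ‖fourierP e g y‖ ^ 2 with hTdef
  have hT0 : (0:ℝ) ≤ T := Finset.sum_nonneg fun y _ => sq_nonneg _
  -- the main estimate
  have hT : T ≤ Q * A + S * L ^ 2 := by
    calc T = ‖((T : ℝ) : ℂ)‖ := by
            rw [Complex.norm_real, Real.norm_eq_abs, abs_of_nonneg hT0]
      _ = ‖∑ x : (Fin (d - 1) → F) × F, ∑ x' : (Fin (d - 1) → F) × F,
            g x * (starRingEnd ℂ) (g x') *
              Stmt13Aux.KK e (fun i => x'.1 i - x.1 i) (x'.2 - x.2)‖ := by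
            rw [hTdef, Stmt13Aux.expansion e g]
      _ ≤ ∑ x : (Fin (d - 1) → F) × F, ∑ x' : (Fin (d - 1) → F) × F,
            ‖g x * (starRingEnd ℂ) (g x') *
              Stmt13Aux.KK e (fun i => x'.1 i - x.1 i) (x'.2 - x.2)‖ :=
            (norm_sum_le _ _).trans (Finset.sum_le_sum fun x _ => norm_sum_le _ _)
      _ ≤ ∑ x : (Fin (d - 1) → F) × F, ∑ x' : (Fin (d - 1) → F) × F,
            ‖g x‖ * ‖g x'‖ * ((if x' = x then Q else 0) + S) := by
            refine Finset.sum_le_sum fun x _ => Finset.sum_le_sum fun x' _ => ?_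
            rw [norm_mul, norm_mul, RCLike.norm_conj]
            refine mul_le_mul_of_nonneg_left ?_ (by positivity)
            refine (Stmt13Aux.norm_KK_le e he hchar
              (fun i => x'.1 i - x.1 i) (x'.2 - x.2)).trans (le_of_eq ?_)
            congr 1
            refine if_congr ?_ rfl rfl
            constructor
            · rintro ⟨h1, h2⟩
              refine Prod.ext ?_ (sub_eq_zero.mp h2)
              funext i
              exact sub_eq_zero.mp (congrFun h1 i)
            · rintro rfl
              exact ⟨funext fun i => sub_self _, sub_self _⟩
      _ = Q * A + S * L ^ 2 := by
            have e1 : ∀ x ∈ (Finset.univ : Finset ((Fin (d - 1) → F) × F)),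
                ∑ x' : (Fin (d - 1) → F) × F,
                  ‖g x‖ * ‖g x'‖ * ((if x' = x then Q else 0) + S)
                = ‖g x‖ ^ 2 * Q + ‖g x‖ * L * S := by
              intro x _
              calc ∑ x' : (Fin (d - 1) → F) × F,
                    ‖g x‖ * ‖g x'‖ * ((if x' = x then Q else 0) + S)
                  = ∑ x' : (Fin (d - 1) → F) × F,
                      ((if x' = x then ‖g x‖ * ‖g x'‖ * Q else 0) + ‖g x‖ * ‖g x'‖ * S) :=
                    Finset.sum_congr rfl fun x' _ => by
                      by_cases hx : x' = x <;> simp [hx] <;> ring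
                _ = (∑ x' : (Fin (d - 1) → F) × F, if x' = x then ‖g x‖ * ‖g x'‖ * Q else 0)
                      + ∑ x' : (Fin (d - 1) → F) × F, ‖g x‖ * ‖g x'‖ * S :=
                    Finset.sum_add_distrib
                _ = ‖g x‖ ^ 2 * Q + ‖g x‖ * L * S := by
                    rw [Finset.sum_ite_eq' Finset.univ x]
                    simp only [Finset.mem_univ, if_pos]
                    simp_rw [mul_assoc]
                    rw [← Finset.mul_sum, ← Finset.sum_mul, ← hLdef]
                    ring
            rw [Finset.sum_congr rfl e1, Finset.sum_add_distrib, ← Finset.sum_mul]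
            simp_rw [mul_assoc]
            rw [← Finset.sum_mul, ← hAdef, ← hLdef]
            ring
  -- final arithmetic
  have step1 : Q⁻¹ * T ≤ A + S⁻¹ * L ^ 2 := by
    have h1 : Q⁻¹ * T ≤ Q⁻¹ * (Q * A + S * L ^ 2) :=
      mul_le_mul_of_nonneg_left hT (by positivity)
    have h2 : Q⁻¹ * (Q * A + S * L ^ 2) = A + S⁻¹ * L ^ 2 := by
      rw [← hSS]
      field_simp
    linarith
  have hfinal : Real.sqrt S⁻¹ = c ^ ((1 - (d : ℝ)) / 4) := by
    have hd1 : ((d - 1 : ℕ) : ℝ) = (d : ℝ) - 1 := by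
      have h1d : (1:ℕ) ≤ d := le_trans one_le_two hd
      push_cast [Nat.cast_sub h1d]
      ring
    calc Real.sqrt S⁻¹ = ((Q ^ ((1:ℝ)/2))⁻¹) ^ ((1:ℝ)/2) := by
          rw [hSdef, Real.sqrt_eq_rpow, Real.sqrt_eq_rpow]
      _ = (Q ^ (-((1:ℝ)/2))) ^ ((1:ℝ)/2) := by rw [← Real.rpow_neg hQ.le]
      _ = Q ^ (-((1:ℝ)/2) * ((1:ℝ)/2)) := (Real.rpow_mul hQ.le _ _).symm
      _ = (c ^ (((d - 1 : ℕ)) : ℝ)) ^ (-((1:ℝ)/2) * ((1:ℝ)/2)) := by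
          rw [Real.rpow_natCast, ← hQdef]
      _ = c ^ ((((d - 1 : ℕ)) : ℝ) * (-((1:ℝ)/2) * ((1:ℝ)/2))) :=
          (Real.rpow_mul hcard.le _ _).symm
      _ = c ^ ((1 - (d : ℝ)) / 4) := by
          congr 1
          rw [hd1]
          ring
  calc (Q⁻¹ * T) ^ ((1:ℝ)/2)
      ≤ (A + S⁻¹ * L ^ 2) ^ ((1:ℝ)/2) :=
        Real.rpow_le_rpow (by positivity) step1 (by norm_num)
    _ = Real.sqrt (A + S⁻¹ * L ^ 2) := (Real.sqrt_eq_rpow _).symm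
    _ ≤ Real.sqrt A + Real.sqrt (S⁻¹ * L ^ 2) :=
        Stmt13Aux.sqrt_add_le' _ _ hA (by positivity)
    _ = A ^ ((1:ℝ)/2) + c ^ ((1 - (d : ℝ)) / 4) * L := by
        rw [Real.sqrt_mul (by positivity) (L ^ 2), Real.sqrt_sq hL,
          Real.sqrt_eq_rpow A, hfinal]
end

section
/- Let F be a finite field of odd characteristic, e a nontrivial additive character of F, d ≥ 2, and P ⊆ F^d the paraboloid. Define (dσ)^∨(x) = |F|^{-(d-1)} ∑_{ξ∈P} e(x·ξ) and the Gauss sum 𝒢(t) = ∑_{s∈F} e(t s²) for t ∈ F. Then: (dσ)^∨(x) = 1 if x = 0; (dσ)^∨(x) = 0 if x_d = 0 and x ≠ 0; and (dσ)^∨(x) = |F|^{-(d-1)} e( x̄·x̄ / (−4 x_d) ) 𝒢(x_d)^{d-1} if x_d ≠ 0. Consequently |(dσ)^∨(x)| ≤ |F|^{(1-d)/2} for every x ≠ 0. -/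
open Finset

section Aux
variable {F : Type} [Field F] [Fintype F]

omit [Fintype F] in
private lemma addChar_map_sum (e : AddChar F ℂ) {ι : Type*} (s : Finset ι) (f : ι → F) :
    e (∑ i ∈ s, f i) = ∏ i ∈ s, e (f i) := by
  classical
  induction s using Finset.cons_induction with
  | empty => simp
  | cons a s ha ih => rw [Finset.sum_cons, Finset.prod_cons, AddChar.map_add_eq_mul, ih]

private lemma sum_e_mul (e : AddChar F ℂ) (he : e ≠ 1) {c : F} (hc : c ≠ 0) :
    ∑ s : F, e (c * s) = 0 := by
  have hp := AddChar.IsPrimitive.of_ne_one (R' := ℂ) he hc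
  have := AddChar.sum_eq_zero_of_ne_one hp
  simpa [AddChar.mulShift_apply] using this

private lemma factorize (e : AddChar F ℂ) {n : ℕ} (a : Fin n → F) (b : F) :
    ∑ y : Fin n → F, e (∑ i, a i * y i + b * ∑ i, y i * y i)
      = ∏ i, ∑ s : F, e (a i * s + b * (s * s)) := by
  rw [Finset.prod_univ_sum, Fintype.piFinset_univ]
  refine Finset.sum_congr rfl fun y _ => ?_
  rw [← addChar_map_sum]
  congr 1
  rw [Finset.mul_sum, ← Finset.sum_add_distrib]

private lemma complete_square (e : AddChar F ℂ) (hchar : ringChar F ≠ 2) (a : F) {b : F}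
    (hb : b ≠ 0) :
    ∑ s : F, e (a * s + b * (s * s))
      = e (a * a * (-(4 * b))⁻¹) * ∑ s : F, e (b * s ^ 2) := by
  have h2 : (2 : F) ≠ 0 := Ring.two_ne_zero hchar
  have h4 : (4 : F) ≠ 0 := by
    rw [show (4 : F) = 2 * 2 by norm_num]; exact mul_ne_zero h2 h2
  rw [Finset.mul_sum]
  refine Fintype.sum_equiv (Equiv.addRight (a * (2 * b)⁻¹)) _ _ fun s => ?_
  rw [← AddChar.map_add_eq_mul]
  congr 1
  simp only [Equiv.coe_addRight]
  field_simp
  ring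

private lemma gauss_norm (e : AddChar F ℂ) (he : e ≠ 1) (hchar : ringChar F ≠ 2)
    {t : F} (ht : t ≠ 0) :
    ‖∑ s : F, e (t * s ^ 2)‖ = Real.sqrt (Fintype.card F) := by
  have h2 : (2 : F) ≠ 0 := Ring.two_ne_zero hchar
  have key : (∑ s : F, e (t * s ^ 2)) * (starRingEnd ℂ) (∑ s : F, e (t * s ^ 2))
      = (Fintype.card F : ℂ) := by
    rw [map_sum, Finset.sum_mul_sum]
    have step1 : ∀ s' : F, ∑ s : F, e (t * s ^ 2) * (starRingEnd ℂ) (e (t * s' ^ 2))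
        = ∑ h : F, e ((2 * t * s') * h + t * h ^ 2) := by
      intro s'
      refine Fintype.sum_equiv (Equiv.subRight s') _ _ fun h => ?_
      simp only [Equiv.subRight_apply]
      rw [← AddChar.map_neg_eq_conj, ← AddChar.map_add_eq_mul]
      congr 1
      ring
    calc ∑ s : F, ∑ s' : F, e (t * s ^ 2) * (starRingEnd ℂ) (e (t * s' ^ 2))
        = ∑ s' : F, ∑ s : F, e (t * s ^ 2) * (starRingEnd ℂ) (e (t * s' ^ 2)) :=
          Finset.sum_comm
      _ = ∑ s' : F, ∑ h : F, e ((2 * t * s') * h + t * h ^ 2) := by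
          exact Finset.sum_congr rfl fun s' _ => step1 s'
      _ = ∑ h : F, ∑ s' : F, e (t * h ^ 2) * e ((2 * t * h) * s') := by
          rw [Finset.sum_comm]
          refine Finset.sum_congr rfl fun s' _ => Finset.sum_congr rfl fun h _ => ?_
          rw [← AddChar.map_add_eq_mul]
          congr 1
          ring
      _ = (Fintype.card F : ℂ) := by
          rw [Finset.sum_eq_single 0]
          · simp
          · intro h _ hh
            rw [← Finset.mul_sum, sum_e_mul e he (by
              exact mul_ne_zero (mul_ne_zero h2 ht) hh), mul_zero]
          · simp
  rw [Complex.mul_conj] at key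
  have h2' : Complex.normSq (∑ s : F, e (t * s ^ 2)) = (Fintype.card F : ℝ) := by
    exact_mod_cast key
  rw [Complex.norm_def, h2']

end Aux

/-- Evaluation of `(dσ)^∨` for the paraboloid `P ⊆ F^d` (points of `F^d` modeled as pairs
`(x̄, x_d) ∈ F^{d-1} × F`): with `(dσ)^∨(x) = |F|^{-(d-1)} ∑_{ξ∈P} e(x·ξ)` and Gauss sum
`𝒢(t) = ∑_{s∈F} e(t s²)`, one has `(dσ)^∨(0) = 1`, `(dσ)^∨(x) = 0` when `x_d = 0, x ≠ 0`,
`(dσ)^∨(x) = |F|^{-(d-1)} e(x̄·x̄/(−4x_d)) 𝒢(x_d)^{d-1}` when `x_d ≠ 0`, and consequently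
`|(dσ)^∨(x)| ≤ |F|^{(1-d)/2}` for all `x ≠ 0`. -/
theorem stmt14 (F : Type) [Field F] [Fintype F] (hchar : ringChar F ≠ 2)
    (e : AddChar F ℂ) (he : e ≠ 1) (d : ℕ) (hd : 2 ≤ d) :
    let dsv : ((Fin (d - 1) → F) × F) → ℂ := fun x =>
      ((Fintype.card F : ℂ) ^ (d - 1))⁻¹ *
        ∑ y : Fin (d - 1) → F, e (∑ i, x.1 i * y i + x.2 * ∑ i, y i * y i)
    let G : F → ℂ := fun t => ∑ s : F, e (t * s ^ 2)
    dsv 0 = 1 ∧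
    (∀ x : (Fin (d - 1) → F) × F, x.2 = 0 → x ≠ 0 → dsv x = 0) ∧
    (∀ x : (Fin (d - 1) → F) × F, x.2 ≠ 0 →
      dsv x = ((Fintype.card F : ℂ) ^ (d - 1))⁻¹ *
        e ((∑ i, x.1 i * x.1 i) * (-(4 * x.2))⁻¹) * (G x.2) ^ (d - 1)) ∧
    (∀ x : (Fin (d - 1) → F) × F, x ≠ 0 →
      ‖dsv x‖ ≤ (Fintype.card F : ℝ) ^ ((1 - (d : ℝ)) / 2)) := by
  intro dsv G
  have hq0 : (Fintype.card F : ℂ) ≠ 0 := Nat.cast_ne_zero.2 Fintype.card_ne_zero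
  have hqR : (0 : ℝ) < (Fintype.card F : ℝ) := by exact_mod_cast Fintype.card_pos
  have hdsv : ∀ x : (Fin (d - 1) → F) × F, dsv x = ((Fintype.card F : ℂ) ^ (d - 1))⁻¹ *
      ∑ y : Fin (d - 1) → F, e (∑ i, x.1 i * y i + x.2 * ∑ i, y i * y i) := fun _ => rfl
  have hG : ∀ t, G t = ∑ s : F, e (t * s ^ 2) := fun _ => rfl
  -- part 1
  have h1 : dsv 0 = 1 := by
    rw [hdsv]
    simp only [Prod.fst_zero, Prod.snd_zero, Pi.zero_apply, zero_mul, Finset.sum_const_zero,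
      add_zero, AddChar.map_zero_eq_one, Finset.sum_const, Finset.card_univ, Fintype.card_pi,
      Fintype.card_fin, Finset.prod_const, nsmul_eq_mul, mul_one]
    push_cast
    rw [inv_mul_cancel₀ (pow_ne_zero _ hq0)]
  -- part 2
  have h2 : ∀ x : (Fin (d - 1) → F) × F, x.2 = 0 → x ≠ 0 → dsv x = 0 := by
    intro x hx2 hx
    obtain ⟨i, hi⟩ : ∃ i, x.1 i ≠ 0 := by
      by_contra h
      push_neg at h
      exact hx (Prod.ext (funext h) hx2)
    have hz : ∑ s : F, e (x.1 i * s + x.2 * (s * s)) = 0 := by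
      simp only [hx2, zero_mul, add_zero]
      exact sum_e_mul e he hi
    rw [hdsv, factorize, Finset.prod_eq_zero (Finset.mem_univ i) hz, mul_zero]
  -- part 3
  have h3 : ∀ x : (Fin (d - 1) → F) × F, x.2 ≠ 0 →
      dsv x = ((Fintype.card F : ℂ) ^ (d - 1))⁻¹ *
        e ((∑ i, x.1 i * x.1 i) * (-(4 * x.2))⁻¹) * (G x.2) ^ (d - 1) := by
    intro x hx2
    rw [hdsv, factorize,
      Finset.prod_congr rfl (fun i _ => complete_square e hchar (x.1 i) hx2),
      Finset.prod_mul_distrib, Finset.prod_const, Finset.card_univ, Fintype.card_fin,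
      ← addChar_map_sum, ← Finset.sum_mul, hG, mul_assoc]
  refine ⟨h1, h2, h3, ?_⟩
  -- part 4
  intro x hx
  by_cases hx2 : x.2 = 0
  · rw [h2 x hx2 hx, norm_zero]
    positivity
  · rw [h3 x hx2, norm_mul, norm_mul, norm_inv, norm_pow, norm_pow,
      Complex.norm_natCast, AddChar.norm_apply, mul_one, hG, gauss_norm e he hchar hx2]
    apply le_of_eq
    have hcast : ((d - 1 : ℕ) : ℝ) = (d : ℝ) - 1 := by
      push_cast [Nat.cast_sub (by omega : 1 ≤ d)]; ring
    rw [Real.sqrt_eq_rpow, ← Real.rpow_natCast (((Fintype.card F : ℝ)) ^ ((1:ℝ)/2)) (d-1),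
      ← Real.rpow_mul hqR.le, ← Real.rpow_natCast ((Fintype.card F : ℝ)) (d-1),
      ← Real.rpow_neg hqR.le, ← Real.rpow_add hqR, hcast]
    congr 1
    ring
end

section
/- Let F be a finite field of odd characteristic, e a nontrivial additive character of F, d ≥ 2, and 𝒢(t) = ∑_{s∈F} e(t s²). Define K : F^d → ℂ by K(x) = |F|^{-(d-1)} e( x̄·x̄ / (−4 x_d) ) 𝒢(x_d)^{d-1} when x_d ≠ 0 and K(x) = 0 when x_d = 0. Let S ⊆ F^{d-1}, z ∈ F, let u : F^d → ℂ be the indicator function of S × {z}, and let f_S : P → {0,1} be the indicator of the lifted set {(x̄, x̄·x̄) : x̄ ∈ S} ⊆ P. Then ∑_{x∈F^d} |(u * K)(x)|⁴ ≤ |F|^{2d-2} ∑_{x∈F^d} |(f_S dσ)^∨(x)|⁴, where (u*K)(x) = ∑_{y∈F^d} u(y) K(x−y). -/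
open Finset

lemma gauss_norm_sq {F : Type} [Field F] [Fintype F] [DecidableEq F]
    (hchar : ringChar F ≠ 2) (e : AddChar F ℂ) (he : e ≠ 1) {t : F} (ht : t ≠ 0) :
    ‖∑ s : F, e (t * s ^ 2)‖ ^ 2 = (Fintype.card F : ℝ) := by
  have h2 : (2 : F) ≠ 0 := Ring.two_ne_zero hchar
  have h4 : (4 : F) ≠ 0 := by
    have : (4 : F) = 2 * 2 := by norm_num
    rw [this]; exact mul_ne_zero h2 h2
  have hprim : e.IsPrimitive := AddChar.IsPrimitive.of_ne_one he
  have key : (∑ s : F, e (t * s ^ 2)) * (starRingEnd ℂ) (∑ s : F, e (t * s ^ 2))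
      = (Fintype.card F : ℂ) := by
    rw [map_sum]
    have hconj : ∀ s : F, (starRingEnd ℂ) (e (t * s ^ 2)) = e (-(t * s ^ 2)) := by
      intro s
      rw [← AddChar.inv_apply_eq_conj, ← AddChar.map_neg_eq_inv]
    simp_rw [hconj]
    rw [Fintype.sum_mul_sum]
    simp_rw [← AddChar.map_add_eq_mul]
    rw [show (∑ x : F, ∑ y : F, e (t * x ^ 2 + -(t * y ^ 2)))
        = ∑ p : F × F, e (t * p.1 ^ 2 + -(t * p.2 ^ 2)) from (Fintype.sum_prod_type
          (f := fun p : F × F => e (t * p.1 ^ 2 + -(t * p.2 ^ 2)))).symm]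
    -- reindex by (u,v) ↦ (u+v, u-v)
    have hbij : Function.Bijective (fun p : F × F => (p.1 + p.2, p.1 - p.2)) := by
      constructor
      · rintro ⟨a, b⟩ ⟨a', b'⟩ h
        simp only [Prod.mk.injEq] at h
        obtain ⟨h1, h2'⟩ := h
        have ha : 2 * a = 2 * a' := by linear_combination h1 + h2'
        have hb : 2 * b = 2 * b' := by linear_combination h1 - h2'
        exact Prod.ext (mul_left_cancel₀ h2 ha) (mul_left_cancel₀ h2 hb)
      · rintro ⟨s, s'⟩
        refine ⟨((s + s') / 2, (s - s') / 2), ?_⟩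
        simp only [Prod.mk.injEq]
        constructor <;> field_simp <;> ring
    rw [← Function.Bijective.sum_comp hbij (fun p => e (t * p.1 ^ 2 + -(t * p.2 ^ 2)))]
    have hsimp : ∀ p : F × F,
        e (t * (p.1 + p.2) ^ 2 + -(t * (p.1 - p.2) ^ 2)) = e (p.2 * (4 * t * p.1)) := by
      intro p; congr 1; ring
    simp_rw [hsimp]
    rw [Fintype.sum_prod_type]
    have hinner : ∀ u : F, (∑ v : F, e (v * (4 * t * u)))
        = if (4 * t * u) = 0 then (Fintype.card F : ℂ) else 0 := by
      intro u
      exact_mod_cast AddChar.sum_mulShift (4 * t * u) hprim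
    simp_rw [hinner]
    have hcond : ∀ u : F, ((4 * t * u) = 0) ↔ (u = 0) := by
      intro u
      constructor
      · intro h
        rcases mul_eq_zero.mp h with h' | h'
        · exact absurd h' (mul_ne_zero h4 ht)
        · exact h'
      · intro h; rw [h, mul_zero]
    simp only [hcond]
    simp [Finset.sum_ite_eq']
  rw [Complex.mul_conj'] at key
  exact_mod_cast key

/-- With `K(x) = |F|^{-(d-1)} e(x̄·x̄/(−4x_d)) 𝒢(x_d)^{d-1}` for `x_d ≠ 0` (and `K(x) = 0`
for `x_d = 0`), `u` the indicator of `S × {z}` for `S ⊆ F^{d-1}`, and `f_S` the indicator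
of the lift of `S` to the paraboloid,
`∑_x |(u * K)(x)|⁴ ≤ |F|^{2d-2} ∑_x |(f_S dσ)^∨(x)|⁴`. -/
theorem stmt15 (F : Type) [Field F] [Fintype F] [DecidableEq F]
    (hchar : ringChar F ≠ 2) (e : AddChar F ℂ) (he : e ≠ 1) (d : ℕ) (hd : 2 ≤ d)
    (S : Finset (Fin (d - 1) → F)) (z : F) :
    let K : ((Fin (d - 1) → F) × F) → ℂ := fun x =>
      if x.2 = 0 then 0 else
        ((Fintype.card F : ℂ) ^ (d - 1))⁻¹ *
          e ((∑ i, x.1 i * x.1 i) * (-(4 * x.2))⁻¹) * (∑ s : F, e (x.2 * s ^ 2)) ^ (d - 1)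
    let u : ((Fin (d - 1) → F) × F) → ℂ := fun x => if x.1 ∈ S ∧ x.2 = z then 1 else 0
    let fS : (Fin (d - 1) → F) → ℂ := fun w => if w ∈ S then 1 else 0
    ∑ x : (Fin (d - 1) → F) × F, ‖∑ y : (Fin (d - 1) → F) × F, u y * K (x - y)‖ ^ 4
      ≤ (Fintype.card F : ℝ) ^ (2 * d - 2) *
          ∑ x : (Fin (d - 1) → F) × F, ‖extOp e fS x‖ ^ 4 := by
  intro K u fS
  have h2 : (2 : F) ≠ 0 := Ring.two_ne_zero hchar
  have h4 : (4 : F) ≠ 0 := by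
    have h : (4 : F) = 2 * 2 := by norm_num
    rw [h]; exact mul_ne_zero h2 h2
  -- Step 1: rewrite the convolution
  have hconv : ∀ x : (Fin (d - 1) → F) × F,
      (∑ y : (Fin (d - 1) → F) × F, u y * K (x - y)) = ∑ a ∈ S, K (x.1 - a, x.2 - z) := by
    intro x
    rw [Fintype.sum_prod_type]
    simp only [u, ite_mul, one_mul, zero_mul]
    have h1 : ∀ a : Fin (d - 1) → F,
        (∑ w : F, if a ∈ S ∧ w = z then K (x - (a, w)) else 0)
          = if a ∈ S then K (x.1 - a, x.2 - z) else 0 := by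
      intro a
      by_cases ha : a ∈ S
      · simp only [ha, true_and, if_true]
        rw [Finset.sum_ite_eq' Finset.univ z (fun w => K (x - (a, w)))]
        simp only [Finset.mem_univ, if_true]
        rfl
      · simp [ha]
    simp_rw [h1]
    rw [Finset.sum_ite_mem, Finset.univ_inter]
  -- Step 2: key pointwise identity
  have hkey : ∀ x : (Fin (d - 1) → F) × F, x.2 ≠ z →
      (∑ a ∈ S, K (x.1 - a, x.2 - z))
        = (∑ s : F, e ((x.2 - z) * s ^ 2)) ^ (d - 1) *
            (e ((∑ i, x.1 i * x.1 i) * (-(4 * (x.2 - z)))⁻¹) *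
              extOp e fS
                ((fun i => -(2 * (-(4 * (x.2 - z)))⁻¹) * x.1 i, (-(4 * (x.2 - z)))⁻¹))) := by
    intro x hx
    have ht : x.2 - z ≠ 0 := sub_ne_zero.mpr hx
    set c : F := (-(4 * (x.2 - z)))⁻¹ with hc
    have hext : extOp e fS ((fun i => -(2 * c) * x.1 i, c) : (Fin (d - 1) → F) × F)
        = ((Fintype.card F : ℂ) ^ (d - 1))⁻¹ *
            ∑ a ∈ S, e (∑ i, (-(2 * c) * x.1 i) * a i + c * ∑ i, a i * a i) := by
      rw [extOp]
      congr 1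
      simp only [fS, ite_mul, one_mul, zero_mul]
      rw [Finset.sum_ite_mem, Finset.univ_inter]
    have hK : ∀ a : Fin (d - 1) → F, K (x.1 - a, x.2 - z)
        = ((Fintype.card F : ℂ) ^ (d - 1))⁻¹ *
            e ((∑ i, (x.1 i - a i) * (x.1 i - a i)) * c) *
            (∑ s : F, e ((x.2 - z) * s ^ 2)) ^ (d - 1) := by
      intro a
      simp only [K, if_neg ht, Pi.sub_apply]
      rfl
    rw [hext]
    simp_rw [hK]
    rw [Finset.mul_sum, Finset.mul_sum, Finset.mul_sum]
    refine Finset.sum_congr rfl fun a _ => ?_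
    have hF : (∑ i, (x.1 i - a i) * (x.1 i - a i)) * c
        = (∑ i, x.1 i * x.1 i) * c
            + (∑ i, (-(2 * c) * x.1 i) * a i + c * ∑ i, a i * a i) := by
      have e1 : (∑ i, (x.1 i - a i) * (x.1 i - a i))
          = (∑ i, x.1 i * x.1 i) - 2 * (∑ i, x.1 i * a i) + (∑ i, a i * a i) := by
        rw [Finset.mul_sum, ← Finset.sum_sub_distrib, ← Finset.sum_add_distrib]
        exact Finset.sum_congr rfl fun i _ => by ring
      have e2 : (∑ i, (-(2 * c) * x.1 i) * a i) = -(2 * c) * ∑ i, x.1 i * a i := by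
        rw [Finset.mul_sum]
        exact Finset.sum_congr rfl fun i _ => by ring
      rw [e1, e2]; ring
    rw [show e ((∑ i, (x.1 i - a i) * (x.1 i - a i)) * c)
        = e ((∑ i, x.1 i * x.1 i) * c)
            * e (∑ i, (-(2 * c) * x.1 i) * a i + c * ∑ i, a i * a i) by
      rw [← AddChar.map_add_eq_mul, hF]]
    ring
  -- the substitution map
  set φ : ((Fin (d - 1) → F) × F) → ((Fin (d - 1) → F) × F) :=
    fun x => ((fun i => -(2 * (-(4 * (x.2 - z)))⁻¹) * x.1 i, (-(4 * (x.2 - z)))⁻¹)) with hφ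
  -- Step 3: norm identity
  have hnorm : ∀ x : (Fin (d - 1) → F) × F, x.2 ≠ z →
      ‖∑ a ∈ S, K (x.1 - a, x.2 - z)‖ ^ 4
        = (Fintype.card F : ℝ) ^ (2 * d - 2) * ‖extOp e fS (φ x)‖ ^ 4 := by
    intro x hx
    have ht : x.2 - z ≠ 0 := sub_ne_zero.mpr hx
    rw [hkey x hx, norm_mul, norm_mul, norm_pow, AddChar.norm_apply, one_mul, mul_pow,
      ← pow_mul, show (d - 1) * 4 = 2 * (2 * d - 2) from by omega, pow_mul,
      gauss_norm_sq hchar e he ht]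
  -- x.2 = z gives zero
  have hzero : ∀ x : (Fin (d - 1) → F) × F, x.2 = z →
      (∑ a ∈ S, K (x.1 - a, x.2 - z)) = 0 := by
    intro x hx
    refine Finset.sum_eq_zero fun a _ => ?_
    simp [K, hx]
  -- injectivity
  have hinj : ∀ x ∈ Finset.univ.filter (fun x : (Fin (d - 1) → F) × F => x.2 ≠ z),
      ∀ y ∈ Finset.univ.filter (fun x : (Fin (d - 1) → F) × F => x.2 ≠ z),
        φ x = φ y → x = y := by
    intro x hx y hy hxy
    have hx2 : x.2 ≠ z := (Finset.mem_filter.mp hx).2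
    have hy2 : y.2 ≠ z := (Finset.mem_filter.mp hy).2
    have htx : -(4 * (x.2 - z)) ≠ 0 := neg_ne_zero.mpr (mul_ne_zero h4 (sub_ne_zero.mpr hx2))
    have hsnd : (-(4 * (x.2 - z)))⁻¹ = (-(4 * (y.2 - z)))⁻¹ := congrArg Prod.snd hxy
    have hbase : -(4 * (x.2 - z)) = -(4 * (y.2 - z)) := inv_injective hsnd
    have h22 : x.2 = y.2 := by
      have := mul_left_cancel₀ h4 (neg_injective hbase)
      exact sub_left_injective this
    have hcne : (-(4 * (x.2 - z)))⁻¹ ≠ 0 := inv_ne_zero htx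
    have hfst := congrArg Prod.fst hxy
    refine Prod.ext (funext fun i => ?_) h22
    have hi := congrFun hfst i
    simp only [hφ] at hi
    rw [← h22] at hi
    exact mul_left_cancel₀ (neg_ne_zero.mpr (mul_ne_zero h2 hcne)) hi
  -- Assemble
  simp_rw [hconv]
  calc ∑ x : (Fin (d - 1) → F) × F, ‖∑ a ∈ S, K (x.1 - a, x.2 - z)‖ ^ 4
      = ∑ x ∈ Finset.univ.filter (fun x : (Fin (d - 1) → F) × F => x.2 ≠ z),
          ‖∑ a ∈ S, K (x.1 - a, x.2 - z)‖ ^ 4 := by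
        refine (Finset.sum_filter_of_ne fun x _ hne => ?_).symm
        intro hxz
        exact hne (by rw [hzero x hxz, norm_zero]; norm_num)
    _ = ∑ x ∈ Finset.univ.filter (fun x : (Fin (d - 1) → F) × F => x.2 ≠ z),
          (Fintype.card F : ℝ) ^ (2 * d - 2) * ‖extOp e fS (φ x)‖ ^ 4 :=
        Finset.sum_congr rfl fun x hx => hnorm x (Finset.mem_filter.mp hx).2
    _ = (Fintype.card F : ℝ) ^ (2 * d - 2) *
          ∑ x ∈ Finset.univ.filter (fun x : (Fin (d - 1) → F) × F => x.2 ≠ z),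
            ‖extOp e fS (φ x)‖ ^ 4 := (Finset.mul_sum _ _ _).symm
    _ = (Fintype.card F : ℝ) ^ (2 * d - 2) *
          ∑ y ∈ (Finset.univ.filter (fun x : (Fin (d - 1) → F) × F => x.2 ≠ z)).image φ,
            ‖extOp e fS y‖ ^ 4 := by rw [Finset.sum_image hinj]
    _ ≤ (Fintype.card F : ℝ) ^ (2 * d - 2) *
          ∑ x : (Fin (d - 1) → F) × F, ‖extOp e fS x‖ ^ 4 := by
        refine mul_le_mul_of_nonneg_left ?_ (by positivity)
        refine Finset.sum_le_sum_of_subset_of_nonneg (Finset.subset_univ _) ?_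
        intros
        positivity
end

section
/- Let d ≥ 4 be an even integer. There exists a constant C = C(d) > 0 such that for every finite field F of odd characteristic and every subset E of the paraboloid P ⊆ F^d, the number of triples (x,y,z) ∈ E³ with x − z + y ∈ P and (z̄ − ȳ)·(z̄ − ȳ) ≠ 0 is at most C ( |F|^{-1} |E|³ + |F|^{(d-2)/2} |E|² ). -/
open Finset

set_option linter.unusedSectionVars false
set_option maxHeartbeats 2000000

section helpers
variable {F : Type} [Field F] [Fintype F] [DecidableEq F] {n : ℕ}

/-- dot product on `Fin n → F` -/
def dt (u w : Fin n → F) : F := ∑ i, u i * w i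

lemma dt_sub_left (a b v : Fin n → F) : dt (a - b) v = dt a v - dt b v := by
  simp [dt, ← Finset.sum_sub_distrib, sub_mul]

lemma dt_add_left (a b v : Fin n → F) : dt (a + b) v = dt a v + dt b v := by
  simp [dt, ← Finset.sum_add_distrib, add_mul]

lemma dt_smul_left (l : F) (a v : Fin n → F) : dt (l • a) v = l * dt a v := by
  simp [dt, Finset.mul_sum]; exact Finset.sum_congr rfl fun i _ => by ring

lemma dt_smul_right (l : F) (a v : Fin n → F) : dt a (l • v) = l * dt a v := by
  simp [dt, Finset.mul_sum]; exact Finset.sum_congr rfl fun i _ => by ring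

lemma dt_single_left (j : Fin n) (w : Fin n → F) : dt (Pi.single j 1) w = w j := by
  rw [dt, Finset.sum_eq_single j]
  · simp
  · intro i _ hij; simp [Pi.single_apply, hij]
  · intro h; exact absurd (mem_univ j) h

lemma dt_zero_left (v : Fin n → F) : dt (0 : Fin n → F) v = 0 := by simp [dt]

/-- kernel cardinality bound -/
lemma ker_card_le (Δ : Fin n → F) (hΔ : Δ ≠ 0) :
    (univ.filter fun v : Fin n → F => dt Δ v = 0).card ≤ Fintype.card F ^ (n - 1) := by
  obtain ⟨j, hj⟩ : ∃ j, Δ j ≠ 0 := Function.ne_iff.mp hΔ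
  have : ((univ.filter fun v : Fin n → F => dt Δ v = 0).card : ℕ)
      ≤ (Finset.univ : Finset ({i : Fin n // i ≠ j} → F)).card := by
    apply Finset.card_le_card_of_injOn (fun v => fun i => v i.1) (fun _ _ => mem_univ _)
    intro v hv w hw hvw
    simp only [mem_coe, mem_filter, mem_univ, true_and] at hv hw
    have hcoord : ∀ i, i ≠ j → v i = w i := by
      intro i hi
      exact congrFun hvw ⟨i, hi⟩
    have hsum : ∀ u : Fin n → F, dt Δ u = Δ j * u j + ∑ i ∈ univ.erase j, Δ i * u i := by
      intro u
      rw [dt, ← Finset.sum_erase_add _ _ (mem_univ j)]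
      ring
    have herase : ∑ i ∈ univ.erase j, Δ i * v i = ∑ i ∈ univ.erase j, Δ i * w i := by
      apply Finset.sum_congr rfl
      intro i hi
      rw [hcoord i (Finset.ne_of_mem_erase hi)]
    have : Δ j * v j = Δ j * w j := by
      have h1 := hsum v; have h2 := hsum w
      rw [hv] at h1; rw [hw] at h2
      rw [herase] at h1
      linear_combination h2 - h1
    have hj' : v j = w j := mul_left_cancel₀ hj this
    funext i
    by_cases hij : i = j
    · subst hij; exact hj'
    · exact hcoord i hij
  calc (univ.filter fun v : Fin n → F => dt Δ v = 0).card
      ≤ (Finset.univ : Finset ({i : Fin n // i ≠ j} → F)).card := this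
    _ = Fintype.card F ^ (n - 1) := by
        have : Fintype.card {i : Fin n // i ≠ j} = n - 1 := by
          rw [Fintype.card_subtype_compl, Fintype.card_fin, Fintype.card_subtype_eq]
        rw [Finset.card_univ, Fintype.card_fun, this]

/-- sum over c of squared fiber counts equals count of pairs with equal dot products -/
lemma sum_sq_fiber (A : Finset (Fin n → F)) (v : Fin n → F) :
    ∑ c : F, ((A.filter fun a => dt a v = c).card) ^ 2
      = ((A ×ˢ A).filter fun ab => dt ab.1 v = dt ab.2 v).card := by
  rw [Finset.card_eq_sum_card_fiberwise
    (f := fun ab => dt ab.1 v) (t := (univ : Finset F)) (fun x _ => mem_univ _)]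
  apply Finset.sum_congr rfl
  intro c _
  have : ((A ×ˢ A).filter fun ab => dt ab.1 v = dt ab.2 v).filter
      (fun ab => dt ab.1 v = c)
      = (A.filter fun a => dt a v = c) ×ˢ (A.filter fun a => dt a v = c) := by
    ext ⟨a, b⟩
    simp only [mem_filter, mem_product]
    constructor
    · rintro ⟨⟨⟨ha, hb⟩, heq⟩, hc⟩
      exact ⟨⟨ha, hc⟩, ⟨hb, heq ▸ hc⟩⟩
    · rintro ⟨⟨ha, hc⟩, ⟨hb, hc'⟩⟩
      exact ⟨⟨⟨ha, hb⟩, by rw [hc, hc']⟩, hc⟩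
  rw [this, Finset.card_product, sq]

lemma var_bound (A : Finset (Fin n → F)) (hn : 1 ≤ n) :
    ∑ v ∈ univ.filter (fun v : Fin n → F => v ≠ 0), ∑ c : F,
      (((A.filter fun a => dt a v = c).card : ℝ) - (A.card : ℝ) / (Fintype.card F : ℝ)) ^ 2
    ≤ (Fintype.card F : ℝ) ^ n * (A.card : ℝ) := by
  classical
  set q := Fintype.card F with hq
  have hq1 : 1 < q := Fintype.one_lt_card
  have hq0 : (0 : ℝ) < (q : ℝ) := by positivity
  set μ : ℝ := (A.card : ℝ) / (q : ℝ) with hμ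
  set Dv := (univ.filter (fun v : Fin n → F => v ≠ 0)) with hDv
  have key : ∀ v : Fin n → F,
      (∑ c : F, (((A.filter fun a => dt a v = c).card : ℝ) - μ) ^ 2)
      = ((((A ×ˢ A).filter fun ab => dt ab.1 v = dt ab.2 v).card : ℝ))
        - (A.card : ℝ) ^ 2 / (q : ℝ) := by
    intro v
    have h1 : ∑ c : F, (((A.filter fun a => dt a v = c).card : ℕ)) = A.card :=
      (Finset.card_eq_sum_card_fiberwise (fun x _ => mem_univ _)).symm
    have h2 := sum_sq_fiber A v
    have expand : (∑ c : F, (((A.filter fun a => dt a v = c).card : ℝ) - μ) ^ 2)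
        = (∑ c : F, (((A.filter fun a => dt a v = c).card : ℝ)) ^ 2)
          - 2 * μ * (∑ c : F, (((A.filter fun a => dt a v = c).card : ℝ)))
          + (q : ℝ) * μ ^ 2 := by
      rw [Finset.mul_sum, ← Finset.sum_sub_distrib]
      have : ((q : ℝ)) * μ ^ 2 = ∑ _c : F, μ ^ 2 := by
        rw [Finset.sum_const, card_univ, nsmul_eq_mul]
      rw [this, ← Finset.sum_add_distrib]
      exact Finset.sum_congr rfl fun c _ => by ring
    have hc1 : (∑ c : F, (((A.filter fun a => dt a v = c).card : ℝ))) = (A.card : ℝ) := by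
      exact_mod_cast congrArg (Nat.cast : ℕ → ℝ) h1
    have hc2 : (∑ c : F, (((A.filter fun a => dt a v = c).card : ℝ)) ^ 2)
        = (((A ×ˢ A).filter fun ab => dt ab.1 v = dt ab.2 v).card : ℝ) := by
      exact_mod_cast congrArg (Nat.cast : ℕ → ℝ) h2
    rw [expand, hc1, hc2, hμ]
    field_simp
    ring
  rw [Finset.sum_congr rfl (fun v _ => key v)]
  rw [Finset.sum_sub_distrib, Finset.sum_const, nsmul_eq_mul]
  have hDvcard : Dv.card = q ^ n - 1 := by
    rw [hDv]
    rw [Finset.filter_ne' univ 0]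
    rw [Finset.card_erase_of_mem (mem_univ _), card_univ]
    simp [q, Fintype.card_fun]
  have hswap : ∑ v ∈ Dv, ((((A ×ˢ A).filter fun ab => dt ab.1 v = dt ab.2 v).card : ℝ))
      = ∑ ab ∈ A ×ˢ A, (((Dv.filter fun v => dt ab.1 v = dt ab.2 v).card : ℝ)) := by
    simp only [Finset.card_filter]
    push_cast
    rw [Finset.sum_comm]
  have hker : ∀ ab : (Fin n → F) × (Fin n → F), ab ∈ A ×ˢ A →
      (((Dv.filter fun v => dt ab.1 v = dt ab.2 v).card : ℝ))
        ≤ ((q : ℝ) ^ (n - 1) - 1) + (if ab.1 = ab.2 then (q : ℝ) ^ n else 0) := by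
    rintro ⟨a, b⟩ _
    by_cases hab : a = b
    · simp only [if_pos hab]
      have : (Dv.filter fun v => dt a v = dt b v).card ≤ q ^ n := by
        calc (Dv.filter fun v => dt a v = dt b v).card ≤ Dv.card := Finset.card_filter_le _ _
          _ ≤ (univ : Finset (Fin n → F)).card := Finset.card_filter_le _ _
          _ = q ^ n := by simp [q, Fintype.card_fun]
      have hpow : (1 : ℝ) ≤ (q : ℝ) ^ (n - 1) := one_le_pow₀ (by exact_mod_cast hq1.le)
      calc (((Dv.filter fun v => dt a v = dt b v).card : ℝ)) ≤ ((q : ℝ)) ^ n := by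
            exact_mod_cast this
        _ ≤ ((q : ℝ) ^ (n - 1) - 1) + (q : ℝ) ^ n := by linarith
    · simp only [if_neg hab]
      have hsub : (Dv.filter fun v => dt a v = dt b v)
          ⊆ (univ.filter fun v : Fin n → F => dt (a - b) v = 0).erase 0 := by
        intro v hv
        simp only [hDv, mem_filter, mem_erase, mem_univ, true_and, Finset.filter_filter] at hv ⊢
        exact ⟨hv.1, by rw [dt_sub_left, hv.2, sub_self]⟩
      have hcard : (Dv.filter fun v => dt a v = dt b v).card ≤ q ^ (n - 1) - 1 := by
        calc (Dv.filter fun v => dt a v = dt b v).card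
            ≤ ((univ.filter fun v : Fin n → F => dt (a - b) v = 0).erase 0).card :=
              Finset.card_le_card hsub
          _ = (univ.filter fun v : Fin n → F => dt (a - b) v = 0).card - 1 := by
              rw [Finset.card_erase_of_mem]
              simp [mem_filter, dt]
          _ ≤ q ^ (n - 1) - 1 :=
              Nat.sub_le_sub_right (ker_card_le (a - b) (sub_ne_zero_of_ne hab)) 1
      have hple : (1:ℕ) ≤ q ^ (n-1) := Nat.one_le_pow _ _ (by omega)
      calc (((Dv.filter fun v => dt a v = dt b v).card : ℝ)) ≤ ((q ^ (n-1) - 1 : ℕ) : ℝ) := by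
            exact_mod_cast hcard
        _ = (q : ℝ) ^ (n - 1) - 1 := by push_cast [hple]; ring
        _ ≤ ((q : ℝ) ^ (n - 1) - 1) + 0 := by linarith
  have hsum2 : ∑ ab ∈ A ×ˢ A, ((if ab.1 = ab.2 then (q : ℝ) ^ n else 0))
      ≤ (A.card : ℝ) * (q : ℝ) ^ n := by
    rw [Finset.sum_product]
    have : ∀ a ∈ A, (∑ b ∈ A, if a = b then (q : ℝ) ^ n else 0) ≤ (q : ℝ) ^ n := by
      intro a ha
      rw [Finset.sum_ite_eq A a (fun _ => (q : ℝ) ^ n)]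
      simp [ha]
    calc ∑ a ∈ A, (∑ b ∈ A, if a = b then (q : ℝ) ^ n else 0)
        ≤ ∑ _a ∈ A, (q : ℝ) ^ n := Finset.sum_le_sum this
      _ = (A.card : ℝ) * (q : ℝ) ^ n := by rw [Finset.sum_const, nsmul_eq_mul]
  have hAcard : ((A ×ˢ A).card : ℝ) = (A.card : ℝ) ^ 2 := by
    rw [Finset.card_product]; push_cast; ring
  have main : ∑ v ∈ Dv, ((((A ×ˢ A).filter fun ab => dt ab.1 v = dt ab.2 v).card : ℝ))
      ≤ (A.card : ℝ) ^ 2 * ((q : ℝ) ^ (n - 1) - 1) + (A.card : ℝ) * (q : ℝ) ^ n := by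
    rw [hswap]
    calc ∑ ab ∈ A ×ˢ A, (((Dv.filter fun v => dt ab.1 v = dt ab.2 v).card : ℝ))
        ≤ ∑ ab ∈ A ×ˢ A, (((q : ℝ) ^ (n - 1) - 1) + (if ab.1 = ab.2 then (q : ℝ) ^ n else 0)) :=
          Finset.sum_le_sum hker
      _ = ((A ×ˢ A).card : ℝ) * ((q : ℝ) ^ (n - 1) - 1)
          + ∑ ab ∈ A ×ˢ A, (if ab.1 = ab.2 then (q : ℝ) ^ n else 0) := by
          rw [Finset.sum_add_distrib, Finset.sum_const, nsmul_eq_mul]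
      _ ≤ (A.card : ℝ) ^ 2 * ((q : ℝ) ^ (n - 1) - 1) + (A.card : ℝ) * (q : ℝ) ^ n := by
          rw [hAcard]; linarith [hsum2]
  have hDvr : ((Dv.card : ℝ)) = (q : ℝ) ^ n - 1 := by
    rw [hDvcard]
    have : (1:ℕ) ≤ q ^ n := Nat.one_le_pow _ _ (by omega)
    push_cast [this]; ring
  rw [hDvr]
  have h1q : (1:ℝ) ≤ (q:ℝ) := by exact_mod_cast hq1.le
  have hqq : (q:ℝ) ^ (n-1) * (q:ℝ) = (q:ℝ) ^ n := by
    rw [← pow_succ]; congr 1; omega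
  have step : (A.card:ℝ)^2 * ((q:ℝ)^(n-1) - 1) ≤ ((q:ℝ)^n - 1) * ((A.card:ℝ)^2 / (q:ℝ)) := by
    rw [mul_comm ((q:ℝ)^n - 1), div_mul_eq_mul_div, le_div_iff₀ hq0]
    nlinarith [mul_nonneg (sq_nonneg ((A.card:ℝ))) (sub_nonneg.mpr h1q)]
  linarith [main, step]

/-- the paraboloid membership condition, rewritten -/
lemma parab_iff (h2 : (2 : F) ≠ 0) (x y z : (Fin n → F) × F)
    (hx : x.2 = ∑ i, x.1 i * x.1 i) (hy : y.2 = ∑ i, y.1 i * y.1 i)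
    (hz : z.2 = ∑ i, z.1 i * z.1 i) :
    ((x - z + y).2 = ∑ i, (x - z + y).1 i * (x - z + y).1 i)
      ↔ dt (x.1 - z.1) (z.1 - y.1) = 0 := by
  have hfst : (x - z + y).1 = x.1 - z.1 + y.1 := rfl
  have hsnd : (x - z + y).2 = x.2 - z.2 + y.2 := rfl
  rw [hfst, hsnd, hx, hy, hz]
  have key : (∑ i, (x.1 - z.1 + y.1) i * (x.1 - z.1 + y.1) i)
      - ((∑ i, x.1 i * x.1 i) - (∑ i, z.1 i * z.1 i) + ∑ i, y.1 i * y.1 i)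
      = (-2) * dt (x.1 - z.1) (z.1 - y.1) := by
    rw [dt, Finset.mul_sum, ← Finset.sum_sub_distrib, ← Finset.sum_add_distrib,
      ← Finset.sum_sub_distrib]
    exact Finset.sum_congr rfl fun i _ => by simp only [Pi.add_apply, Pi.sub_apply]; ring
  constructor
  · intro h
    have : (-2) * dt (x.1 - z.1) (z.1 - y.1) = 0 := by rw [← key, ← h]; ring
    rcases mul_eq_zero.mp this with h' | h'
    · exact absurd h' (by simpa using h2)
    · exact h'
  · intro h
    have : (∑ i, (x.1 - z.1 + y.1) i * (x.1 - z.1 + y.1) i)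
        - ((∑ i, x.1 i * x.1 i) - (∑ i, z.1 i * z.1 i) + ∑ i, y.1 i * y.1 i) = 0 := by
      rw [key, h]; ring
    linear_combination -this

/-- rigidity: two pairs generating the same hyperplane with the same y force equal z. -/
lemma plane_rigid (v v₁ v₂ zb z₁ z₂ y₁ : Fin n → F) (hv : dt v v ≠ 0)
    (hv₁ : v₁ = z₁ - y₁) (hv₂ : v₂ = z₂ - y₁)
    (h₁ : ∀ a, dt a v₁ = dt z₁ v₁ ↔ dt a v = dt zb v)
    (h₂ : ∀ a, dt a v₂ = dt z₂ v₂ ↔ dt a v = dt zb v) : z₁ = z₂ := by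
  have main : ∀ (v' z' : Fin n → F), (∀ a, dt a v' = dt z' v' ↔ dt a v = dt zb v) →
      (v' = (dt v v' / dt v v) • v ∧ dt z' v = dt zb v) := by
    intro v' z' h
    have hz' : dt z' v = dt zb v := (h z').mp rfl
    have hzmem : dt zb v' = dt z' v' := ((h zb).mpr rfl)
    have hker : ∀ w, dt w v = 0 → dt w v' = 0 := by
      intro w hw
      have h1 : dt (zb + w) v = dt zb v := by rw [dt_add_left, hw, add_zero]
      have h2' : dt (zb + w) v' = dt z' v' := (h (zb + w)).mpr h1
      have := dt_add_left zb w v'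
      rw [h2'] at this
      rw [hzmem] at this
      linear_combination -this
    have hprop : ∀ u, dt u v' = (dt u v / dt v v) * dt v v' := by
      intro u
      have h0 : dt (u - (dt u v / dt v v) • v) v = 0 := by
        rw [dt_sub_left, dt_smul_left, div_mul_cancel₀ _ hv, sub_self]
      have h1 := hker _ h0
      rw [dt_sub_left, dt_smul_left, sub_eq_zero] at h1
      exact h1
    constructor
    · funext j
      have h5 := hprop (Pi.single j 1)
      simp only [dt_single_left] at h5
      simp only [Pi.smul_apply, smul_eq_mul]
      rw [h5]; ring
    · exact hz'
  obtain ⟨hp1, hzz1⟩ := main v₁ z₁ h₁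
  obtain ⟨hp2, hzz2⟩ := main v₂ z₂ h₂
  have hdiff : z₁ - z₂ = v₁ - v₂ := by rw [hv₁, hv₂]; abel
  have hdz : dt (z₁ - z₂) v = 0 := by rw [dt_sub_left, hzz1, hzz2, sub_self]
  rw [hdiff, dt_sub_left] at hdz
  have e1 : dt v₁ v = dt v v₁ := by
    conv_lhs => rw [hp1]
    rw [dt_smul_left, div_mul_cancel₀ _ hv]
  have e2 : dt v₂ v = dt v v₂ := by
    conv_lhs => rw [hp2]
    rw [dt_smul_left, div_mul_cancel₀ _ hv]
  rw [e1, e2, sub_eq_zero] at hdz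
  have hv12 : v₁ = v₂ := by rw [hp1, hp2, hdz]
  have : z₁ - z₂ = 0 := by rw [hdiff, hv12, sub_self]
  exact sub_eq_zero.mp this

end helpers

/-- Let `d ≥ 4` be even. There is `C = C(d) > 0` such that for every finite field `F` of
odd characteristic and every subset `E` of the paraboloid
`P = {(x̄, x̄·x̄) : x̄ ∈ F^{d-1}} ⊆ F^d` (points of `F^d` modeled as pairs `(x̄, x_d)`),
the number of triples `(x,y,z) ∈ E³` with `x − z + y ∈ P` and
`(z̄ − ȳ)·(z̄ − ȳ) ≠ 0` is at most `C (|F|⁻¹ |E|³ + |F|^{(d-2)/2} |E|²)`. -/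
theorem stmt16 (d : ℕ) (hd : 4 ≤ d) (hdeven : Even d) :
    ∃ C : ℝ, 0 < C ∧
      ∀ (F : Type) [Field F] [Fintype F] [DecidableEq F], ringChar F ≠ 2 →
      ∀ E : Finset ((Fin (d - 1) → F) × F),
        (∀ p ∈ E, p.2 = ∑ i, p.1 i * p.1 i) →
        ((((E ×ˢ E ×ˢ E).filter (fun t =>
              (t.1 - t.2.2 + t.2.1).2 =
                (∑ i, (t.1 - t.2.2 + t.2.1).1 i * (t.1 - t.2.2 + t.2.1).1 i) ∧
              (∑ i, (t.2.2.1 i - t.2.1.1 i) * (t.2.2.1 i - t.2.1.1 i)) ≠ 0)).card : ℝ))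
          ≤ C * ((Fintype.card F : ℝ)⁻¹ * (E.card : ℝ) ^ 3 +
              (Fintype.card F : ℝ) ^ (((d : ℝ) - 2) / 2) * (E.card : ℝ) ^ 2) := by
  classical
  refine ⟨2, by norm_num, ?_⟩
  intro F _ _ _ hchar E hE
  have h2 : (2 : F) ≠ 0 := Ring.two_ne_zero hchar
  set q := Fintype.card F with hqdef
  have hq1 : 1 < q := Fintype.one_lt_card
  have hq0 : (0 : ℝ) < (q : ℝ) := by exact_mod_cast Nat.lt_of_lt_of_le Nat.zero_lt_one hq1.le
  -- abbreviations
  have injE : ∀ p ∈ E, ∀ p' ∈ E, p.1 = p'.1 → p = p' := by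
    intro p hp p' hp' h
    refine Prod.ext h ?_
    rw [hE p hp, hE p' hp']
    simp [h]
  set A : Finset (Fin (d - 1) → F) := E.image Prod.fst with hAdef
  have hA : A.card = E.card :=
    Finset.card_image_of_injOn (fun p hp p' hp' h => injE p hp p' hp' h)
  set vv : ((Fin (d - 1) → F) × F) × ((Fin (d - 1) → F) × F) → (Fin (d - 1) → F) :=
    fun p => p.2.1 - p.1.1 with hvv
  set cst : ((Fin (d - 1) → F) × F) × ((Fin (d - 1) → F) × F) → F := fun p => dt p.2.1 (vv p) with hcst
  set S : Finset (((Fin (d - 1) → F) × F) × ((Fin (d - 1) → F) × F)) := (E ×ˢ E).filter (fun p => dt (vv p) (vv p) ≠ 0)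
    with hS
  set cnt : ((Fin (d - 1) → F) × F) × ((Fin (d - 1) → F) × F) → ℕ :=
    fun p => (E.filter fun x => dt (x.1 - p.2.1) (vv p) = 0).card with hcnt
  set Φ : (Fin (d - 1) → F) × F → Finset (Fin (d - 1) → F) := fun vc => univ.filter (fun a => dt a vc.1 = vc.2) with hΦ
  set g : Finset (Fin (d - 1) → F) → ℝ :=
    fun H => |((A.filter (· ∈ H)).card : ℝ) - (E.card : ℝ) / (q : ℝ)| with hg
  set φf : ((Fin (d - 1) → F) × F) × ((Fin (d - 1) → F) × F) → Finset (Fin (d - 1) → F) := fun p => Φ (vv p, cst p) with hφf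
  set Dset : Finset ((Fin (d - 1) → F) × F) := (univ.filter (fun w : Fin (d - 1) → F => w ≠ 0)) ×ˢ (univ : Finset F)
    with hDset
  set t : Finset (Finset (Fin (d - 1) → F)) := Dset.image Φ with ht
  set m : Finset (Fin (d - 1) → F) → ℕ := fun H => (S.filter fun p => φf p = H).card with hm
  -- Step 1 : the triple count is at most ∑_{p ∈ S} cnt p
  have step1 : (((E ×ˢ E ×ˢ E).filter (fun t =>
        (t.1 - t.2.2 + t.2.1).2 =
          (∑ i, (t.1 - t.2.2 + t.2.1).1 i * (t.1 - t.2.2 + t.2.1).1 i) ∧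
        (∑ i, (t.2.2.1 i - t.2.1.1 i) * (t.2.2.1 i - t.2.1.1 i)) ≠ 0)).card
      ≤ ∑ p ∈ S, cnt p) := by
    rw [Finset.card_filter, Finset.sum_product, Finset.sum_comm]
    have inner : ∀ p ∈ E ×ˢ E,
        (∑ x ∈ E, if (((x - p.2 + p.1).2 =
              ∑ i, (x - p.2 + p.1).1 i * (x - p.2 + p.1).1 i) ∧
            (∑ i, (p.2.1 i - p.1.1 i) * (p.2.1 i - p.1.1 i)) ≠ 0) then 1 else 0)
          ≤ (if dt (vv p) (vv p) ≠ 0 then cnt p else 0) := by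
      intro p hp
      obtain ⟨hy, hz⟩ := Finset.mem_product.mp hp
      have hdd : dt (vv p) (vv p)
          = ∑ i, (p.2.1 i - p.1.1 i) * (p.2.1 i - p.1.1 i) := by
        simp only [hvv, dt, Pi.sub_apply]
      by_cases hr : dt (vv p) (vv p) = 0
      · rw [if_neg (not_not_intro hr)]
        have : ∀ x ∈ E, (if (((x - p.2 + p.1).2 =
              ∑ i, (x - p.2 + p.1).1 i * (x - p.2 + p.1).1 i) ∧
            (∑ i, (p.2.1 i - p.1.1 i) * (p.2.1 i - p.1.1 i)) ≠ 0) then 1 else 0) = 0 := by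
          intro x _
          rw [if_neg]
          intro hP
          exact hP.2 (hdd ▸ hr)
        rw [Finset.sum_eq_zero this]
      · rw [if_pos hr, ← Finset.card_filter]
        apply Finset.card_le_card
        intro x hx
        rw [Finset.mem_filter] at hx ⊢
        refine ⟨hx.1, ?_⟩
        have := (parab_iff h2 x p.1 p.2 (hE x hx.1) (hE p.1 hy) (hE p.2 hz)).mp hx.2.1
        exact this
    calc ∑ p ∈ E ×ˢ E, ∑ x ∈ E, (if (((x - p.2 + p.1).2 =
              ∑ i, (x - p.2 + p.1).1 i * (x - p.2 + p.1).1 i) ∧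
            (∑ i, (p.2.1 i - p.1.1 i) * (p.2.1 i - p.1.1 i)) ≠ 0) then 1 else 0)
        ≤ ∑ p ∈ E ×ˢ E, (if dt (vv p) (vv p) ≠ 0 then cnt p else 0) :=
          Finset.sum_le_sum inner
      _ = ∑ p ∈ S, cnt p := (Finset.sum_filter _ _).symm
  -- Step 3 : cnt p equals the count of A inside the hyperplane φf p
  have step3 : ∀ p ∈ S, cnt p = (A.filter (· ∈ φf p)).card := by
    intro p hp
    have e4 : A.filter (· ∈ φf p) = A.filter (fun a => dt a (vv p) = cst p) := by
      apply Finset.filter_congr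
      intro a _
      simp [hφf, hΦ, Finset.mem_filter]
    have e2 : A.filter (fun a => dt a (vv p) = cst p)
        = (E.filter fun x => dt x.1 (vv p) = cst p).image Prod.fst := by
      rw [hAdef]
      exact Finset.filter_image
    have e1 : (E.filter fun x => dt (x.1 - p.2.1) (vv p) = 0)
        = (E.filter fun x => dt x.1 (vv p) = cst p) := by
      apply Finset.filter_congr
      intro x _
      simp only [hcst, dt_sub_left, sub_eq_zero]
    have e3 : ((E.filter fun x => dt x.1 (vv p) = cst p).image Prod.fst).card
        = (E.filter fun x => dt x.1 (vv p) = cst p).card := by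
      apply Finset.card_image_of_injOn
      intro a ha b hb hab
      exact injE a (Finset.mem_of_mem_filter _ ha) b (Finset.mem_of_mem_filter _ hb) hab
    rw [e4, e2, e3, ← e1]
  -- Step 5 : fiberwise regrouping
  have hmaps : ∀ p ∈ S, φf p ∈ t := by
    intro p hp
    have hv0 : vv p ≠ 0 := by
      intro hv0
      rw [hS, Finset.mem_filter] at hp
      exact hp.2 (by rw [hv0, dt_zero_left])
    have hmem : (vv p, cst p) ∈ Dset := by
      rw [hDset]
      exact Finset.mem_product.mpr ⟨Finset.mem_filter.mpr ⟨mem_univ _, hv0⟩, mem_univ _⟩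
    exact Finset.mem_image_of_mem Φ hmem
  have step5 : ∑ p ∈ S, g (φf p) = ∑ H ∈ t, (m H : ℝ) * g H := by
    rw [← Finset.sum_fiberwise_of_maps_to hmaps (fun p => g (φf p))]
    apply Finset.sum_congr rfl
    intro H _
    have : ∀ p ∈ S.filter (fun p => φf p = H), g (φf p) = g H := by
      intro p hp
      rw [(Finset.mem_filter.mp hp).2]
    rw [Finset.sum_congr rfl this, Finset.sum_const, hm, nsmul_eq_mul]
  -- Step 7 : quadruple bound
  have step7 : (∑ H ∈ t, ((m H : ℝ)) ^ 2) ≤ (E.card : ℝ) ^ 3 := by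
    have hfib : ∑ H ∈ t, (m H) ^ 2 = ∑ p ∈ S, m (φf p) := by
      rw [← Finset.sum_fiberwise_of_maps_to hmaps (fun p => m (φf p))]
      apply Finset.sum_congr rfl
      intro H _
      have hcongr : ∀ p ∈ S.filter (fun p => φf p = H), m (φf p) = m H := by
        intro p hp
        rw [(Finset.mem_filter.mp hp).2]
      rw [Finset.sum_congr rfl hcongr, Finset.sum_const, smul_eq_mul, sq]
    have hQd : ∑ p ∈ S, m (φf p) = ((S ×ˢ S).filter (fun r => φf r.2 = φf r.1)).card := by
      rw [Finset.card_filter, Finset.sum_product]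
      apply Finset.sum_congr rfl
      intro p _
      rw [← Finset.card_filter]
    have hmemE : ∀ p, p ∈ S → p.1 ∈ E ∧ p.2 ∈ E := by
      intro p hp
      rw [hS, Finset.mem_filter] at hp
      exact Finset.mem_product.mp hp.1
    have hiff : ∀ p p', p ∈ S → φf p' = φf p →
        (∀ a, dt a (vv p') = dt p'.2.1 (vv p') ↔ dt a (vv p) = dt p.2.1 (vv p)) := by
      intro p p' _ hfe a
      have := Finset.ext_iff.mp hfe a
      simpa [hφf, hΦ, Finset.mem_filter, hcst] using this
    have hinj : ((S ×ˢ S).filter (fun r => φf r.2 = φf r.1)).card ≤ (E ×ˢ E ×ˢ E).card := by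
      apply Finset.card_le_card_of_injOn (fun r => (r.1.1, r.1.2, r.2.1))
      · intro r hr
        rw [Finset.mem_coe, Finset.mem_filter] at hr
        obtain ⟨hr1, hr2⟩ := Finset.mem_product.mp hr.1
        obtain ⟨h11, h12⟩ := hmemE _ hr1
        obtain ⟨h21, _⟩ := hmemE _ hr2
        exact Finset.mem_product.mpr ⟨h11, Finset.mem_product.mpr ⟨h12, h21⟩⟩
      · intro r hr r' hr' heq
        simp only [Finset.mem_coe, Finset.mem_filter] at hr hr'
        obtain ⟨hrS, hrφ⟩ := hr
        obtain ⟨hr'S, hr'φ⟩ := hr'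
        obtain ⟨hr1S, hr2S⟩ := Finset.mem_product.mp hrS
        obtain ⟨hr'1S, hr'2S⟩ := Finset.mem_product.mp hr'S
        have h11 : r.1.1 = r'.1.1 := congrArg (fun u => u.1) heq
        have h12 : r.1.2 = r'.1.2 := congrArg (fun u => u.2.1) heq
        have h21 : r.2.1 = r'.2.1 := congrArg (fun u => u.2.2) heq
        have hfst : r.1 = r'.1 := Prod.ext h11 h12
        have hv : dt (vv r.1) (vv r.1) ≠ 0 := by
          rw [hS, Finset.mem_filter] at hr1S
          exact hr1S.2
        have hiff1 := hiff r.1 r.2 hr1S hrφ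
        have hiff2 := hiff r.1 r'.2 hr1S (by rw [hr'φ, ← hfst])
        have hz : r.2.2.1 = r'.2.2.1 := by
          apply plane_rigid (vv r.1) (vv r.2) (vv r'.2) (r.1.2.1) (r.2.2.1) (r'.2.2.1)
            (r.2.1.1) hv rfl ?_ hiff1 hiff2
          rw [hvv]
          simp only []
          rw [h21]
        have h22 : r.2.2 = r'.2.2 := by
          apply injE _ _ _ _ hz
          · exact (hmemE _ hr2S).2
          · exact (hmemE _ hr'2S).2
        exact Prod.ext hfst (Prod.ext h21 h22)
    have hE3 : (E ×ˢ E ×ˢ E).card = E.card ^ 3 := by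
      rw [Finset.card_product, Finset.card_product]; ring
    have hnat : ∑ H ∈ t, (m H) ^ 2 ≤ E.card ^ 3 := by
      rw [hfib, hQd, ← hE3]; exact hinj
    calc ∑ H ∈ t, ((m H : ℝ)) ^ 2 = ((∑ H ∈ t, (m H) ^ 2 : ℕ) : ℝ) := by push_cast; rfl
      _ ≤ ((E.card ^ 3 : ℕ) : ℝ) := by exact_mod_cast hnat
      _ = (E.card : ℝ) ^ 3 := by push_cast; rfl
  -- Step 8 : variance bound
  have step8 : (∑ H ∈ t, (g H) ^ 2) ≤ 2 * (q : ℝ) ^ (d - 2) * (E.card : ℝ) := by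
    have hvar := var_bound A (n := d - 1) (by omega)
    have hgΦ : ∀ vc : (Fin (d - 1) → F) × F,
        g (Φ vc) ^ 2
          = (((A.filter fun a => dt a vc.1 = vc.2).card : ℝ) - (A.card : ℝ) / (q : ℝ)) ^ 2 := by
      intro vc
      have hfil : A.filter (· ∈ Φ vc) = A.filter (fun a => dt a vc.1 = vc.2) := by
        apply Finset.filter_congr
        intro a _
        simp [hΦ, Finset.mem_filter]
      rw [hg]
      simp only []
      rw [hfil, sq_abs, hA]
    have hTsum : ∑ vc ∈ Dset, g (Φ vc) ^ 2 ≤ (q : ℝ) ^ (d - 1) * (E.card : ℝ) := by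
      rw [hDset, Finset.sum_product]
      calc ∑ v ∈ univ.filter (fun w : Fin (d - 1) → F => w ≠ 0), ∑ c : F, g (Φ (v, c)) ^ 2
          = ∑ v ∈ univ.filter (fun w : Fin (d - 1) → F => w ≠ 0), ∑ c : F,
            (((A.filter fun a => dt a v = c).card : ℝ) - (A.card : ℝ) / (q : ℝ)) ^ 2 := by
            apply Finset.sum_congr rfl
            intro v _
            apply Finset.sum_congr rfl
            intro c _
            exact hgΦ (v, c)
        _ ≤ (q : ℝ) ^ (d - 1) * (A.card : ℝ) := hvar
        _ = (q : ℝ) ^ (d - 1) * (E.card : ℝ) := by rw [hA]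
    have hfibcard : ∀ H ∈ t, q - 1 ≤ (Dset.filter (fun vc => Φ vc = H)).card := by
      intro H hH
      obtain ⟨vc, hvcD, rfl⟩ := Finset.mem_image.mp hH
      have hv0 : vc.1 ≠ 0 := by
        rw [hDset, Finset.mem_product] at hvcD
        exact (Finset.mem_filter.mp hvcD.1).2
      have hcard : ((univ : Finset F).erase 0).card = q - 1 := by
        rw [Finset.card_erase_of_mem (mem_univ _), Finset.card_univ]
      rw [← hcard]
      apply Finset.card_le_card_of_injOn (fun l => (l • vc.1, l * vc.2))
      · intro l hl
        have hl0 : l ≠ 0 := Finset.ne_of_mem_erase hl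
        rw [Finset.mem_coe, Finset.mem_filter]
        constructor
        · rw [hDset, Finset.mem_product]
          exact ⟨Finset.mem_filter.mpr ⟨mem_univ _, smul_ne_zero hl0 hv0⟩, mem_univ _⟩
        · rw [hΦ]
          ext a
          simp only [Finset.mem_filter, mem_univ, true_and]
          rw [dt_smul_right]
          exact mul_right_inj' hl0
      · intro l hl l' hl' heq
        have hl0 : l ≠ 0 := Finset.ne_of_mem_erase hl
        obtain ⟨j, hj⟩ : ∃ j, vc.1 j ≠ 0 := Function.ne_iff.mp hv0
        have h1 : l • vc.1 = l' • vc.1 := congrArg Prod.fst heq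
        have := congrFun h1 j
        simp only [Pi.smul_apply, smul_eq_mul] at this
        exact mul_right_cancel₀ hj this
    have hregroup : ∑ vc ∈ Dset, g (Φ vc) ^ 2
        = ∑ H ∈ t, ((Dset.filter (fun vc => Φ vc = H)).card : ℝ) * g H ^ 2 := by
      rw [← Finset.sum_fiberwise_of_maps_to (fun vc hvc => Finset.mem_image_of_mem Φ hvc)
        (fun vc => g (Φ vc) ^ 2)]
      apply Finset.sum_congr rfl
      intro H _
      have hcongr : ∀ vc ∈ Dset.filter (fun vc => Φ vc = H), g (Φ vc) ^ 2 = g H ^ 2 := by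
        intro vc hvc
        rw [(Finset.mem_filter.mp hvc).2]
      rw [Finset.sum_congr rfl hcongr, Finset.sum_const, nsmul_eq_mul]
    have hq2 : (2 : ℝ) ≤ (q : ℝ) := by exact_mod_cast hq1
    have hlow : ((q : ℝ) - 1) * (∑ H ∈ t, (g H) ^ 2) ≤ (q : ℝ) ^ (d - 1) * (E.card : ℝ) := by
      rw [Finset.mul_sum]
      calc ∑ H ∈ t, ((q : ℝ) - 1) * (g H) ^ 2
          ≤ ∑ H ∈ t, ((Dset.filter (fun vc => Φ vc = H)).card : ℝ) * g H ^ 2 := by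
            apply Finset.sum_le_sum
            intro H hH
            apply mul_le_mul_of_nonneg_right _ (sq_nonneg _)
            have := hfibcard H hH
            have hcast : ((q - 1 : ℕ) : ℝ) ≤ ((Dset.filter (fun vc => Φ vc = H)).card : ℝ) := by
              exact_mod_cast this
            calc ((q : ℝ) - 1) = ((q - 1 : ℕ) : ℝ) := by
                  have : (1:ℕ) ≤ q := hq1.le
                  push_cast [this]; ring
              _ ≤ _ := hcast
        _ = ∑ vc ∈ Dset, g (Φ vc) ^ 2 := hregroup.symm
        _ ≤ (q : ℝ) ^ (d - 1) * (E.card : ℝ) := hTsum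
    have hpow : (q : ℝ) ^ (d - 1) = (q : ℝ) ^ (d - 2) * (q : ℝ) := by
      rw [← pow_succ]; congr 1; omega
    have hX0 : (0 : ℝ) ≤ ∑ H ∈ t, (g H) ^ 2 := Finset.sum_nonneg fun H _ => sq_nonneg _
    have hq10 : (0 : ℝ) < (q : ℝ) - 1 := by linarith
    rw [hpow] at hlow
    have hEnn : (0 : ℝ) ≤ (E.card : ℝ) := Nat.cast_nonneg _
    have hpnn : (0 : ℝ) ≤ (q : ℝ) ^ (d - 2) := by positivity
    have hfin : ((q : ℝ) - 1) * (∑ H ∈ t, (g H) ^ 2)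
        ≤ ((q : ℝ) - 1) * (2 * (q : ℝ) ^ (d - 2) * (E.card : ℝ)) := by
      nlinarith [mul_nonneg hpnn hEnn]
    exact le_of_mul_le_mul_left hfin hq10
  -- Step 6 : Cauchy-Schwarz and conclusion
  set B : ℝ := (q : ℝ) ^ (((d : ℝ) - 2) / 2) with hB
  have hB0 : 0 ≤ B := Real.rpow_nonneg hq0.le _
  have hEnn : (0 : ℝ) ≤ (E.card : ℝ) := Nat.cast_nonneg _
  have hBB : B * B = (q : ℝ) ^ (d - 2) := by
    rw [hB, ← Real.rpow_add hq0]
    have e : ((d : ℝ) - 2) / 2 + ((d : ℝ) - 2) / 2 = (((d - 2 : ℕ) : ℕ) : ℝ) := by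
      rw [Nat.cast_sub (by omega : 2 ≤ d)]
      push_cast
      ring
    rw [e, Real.rpow_natCast]
  have hCS : ∑ H ∈ t, (m H : ℝ) * g H ≤ 2 * B * (E.card : ℝ) ^ 2 := by
    have hsq := Finset.sum_mul_sq_le_sq_mul_sq t (fun H => (m H : ℝ)) g
    have hmg0 : 0 ≤ ∑ H ∈ t, (m H : ℝ) * g H :=
      Finset.sum_nonneg fun H _ => mul_nonneg (Nat.cast_nonneg _) (abs_nonneg _)
    have hg2nn : 0 ≤ ∑ H ∈ t, (g H) ^ 2 := Finset.sum_nonneg fun H _ => sq_nonneg _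
    have hstep : (∑ H ∈ t, (m H : ℝ) ^ 2) * (∑ H ∈ t, (g H) ^ 2)
        ≤ (E.card : ℝ) ^ 3 * (2 * (q : ℝ) ^ (d - 2) * (E.card : ℝ)) := by
      apply mul_le_mul step7 step8 hg2nn (by positivity)
    have hsqr : (E.card : ℝ) ^ 3 * (2 * (q : ℝ) ^ (d - 2) * (E.card : ℝ))
        ≤ (2 * B * (E.card : ℝ) ^ 2) ^ 2 := by
      have hexp : (2 * B * (E.card : ℝ) ^ 2) ^ 2 = 4 * (B * B) * (E.card : ℝ) ^ 4 := by ring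
      rw [hexp, hBB]
      have hx : (0:ℝ) ≤ (q : ℝ) ^ (d - 2) * (E.card : ℝ) ^ 4 := by positivity
      nlinarith [hx]
    have hfin2 : (∑ H ∈ t, (m H : ℝ) * g H) ^ 2 ≤ (2 * B * (E.card : ℝ) ^ 2) ^ 2 :=
      le_trans hsq (le_trans hstep hsqr)
    have h2B : (0:ℝ) ≤ 2 * B * (E.card : ℝ) ^ 2 := by positivity
    exact le_of_pow_le_pow_left₀ (by norm_num) h2B hfin2
  -- chain of inequalities
  have hchain1 : (((E ×ˢ E ×ˢ E).filter (fun t =>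
        (t.1 - t.2.2 + t.2.1).2 =
          (∑ i, (t.1 - t.2.2 + t.2.1).1 i * (t.1 - t.2.2 + t.2.1).1 i) ∧
        (∑ i, (t.2.2.1 i - t.2.1.1 i) * (t.2.2.1 i - t.2.1.1 i)) ≠ 0)).card : ℝ)
      ≤ ∑ p ∈ S, ((A.filter (· ∈ φf p)).card : ℝ) := by
    calc (((E ×ˢ E ×ˢ E).filter _).card : ℝ) ≤ ((∑ p ∈ S, cnt p : ℕ) : ℝ) := by
          exact_mod_cast step1
      _ = ∑ p ∈ S, ((A.filter (· ∈ φf p)).card : ℝ) := by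
          push_cast
          exact Finset.sum_congr rfl fun p hp => by exact_mod_cast step3 p hp
  have hpt : ∀ p ∈ S, ((A.filter (· ∈ φf p)).card : ℝ)
      ≤ (E.card : ℝ) / (q : ℝ) + g (φf p) := by
    intro p _
    have : g (φf p) = |((A.filter (· ∈ φf p)).card : ℝ) - (E.card : ℝ) / (q : ℝ)| := by
      rw [hg]
    have habs := le_abs_self (((A.filter (· ∈ φf p)).card : ℝ) - (E.card : ℝ) / (q : ℝ))
    rw [← this] at habs
    linarith
  have hScard : ((S.card : ℝ)) ≤ (E.card : ℝ) ^ 2 := by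
    have h1 : S.card ≤ (E ×ˢ E).card := by
      rw [hS]; exact Finset.card_filter_le _ _
    have h2 : (E ×ˢ E).card = E.card * E.card := Finset.card_product _ _
    have : S.card ≤ E.card * E.card := h2 ▸ h1
    calc ((S.card : ℝ)) ≤ ((E.card * E.card : ℕ) : ℝ) := by exact_mod_cast this
      _ = (E.card : ℝ) ^ 2 := by push_cast; ring
  have hchain2 : ∑ p ∈ S, ((A.filter (· ∈ φf p)).card : ℝ)
      ≤ (E.card : ℝ) ^ 2 * ((E.card : ℝ) / (q : ℝ)) + ∑ H ∈ t, (m H : ℝ) * g H := by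
    calc ∑ p ∈ S, ((A.filter (· ∈ φf p)).card : ℝ)
        ≤ ∑ p ∈ S, ((E.card : ℝ) / (q : ℝ) + g (φf p)) := Finset.sum_le_sum hpt
      _ = (S.card : ℝ) * ((E.card : ℝ) / (q : ℝ)) + ∑ p ∈ S, g (φf p) := by
          rw [Finset.sum_add_distrib, Finset.sum_const, nsmul_eq_mul]
      _ ≤ (E.card : ℝ) ^ 2 * ((E.card : ℝ) / (q : ℝ)) + ∑ H ∈ t, (m H : ℝ) * g H := by
          rw [step5]
          have : (0:ℝ) ≤ (E.card : ℝ) / (q : ℝ) := by positivity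
          nlinarith [hScard, this]
  have hfinal : (((E ×ˢ E ×ˢ E).filter (fun t =>
        (t.1 - t.2.2 + t.2.1).2 =
          (∑ i, (t.1 - t.2.2 + t.2.1).1 i * (t.1 - t.2.2 + t.2.1).1 i) ∧
        (∑ i, (t.2.2.1 i - t.2.1.1 i) * (t.2.2.1 i - t.2.1.1 i)) ≠ 0)).card : ℝ)
      ≤ (E.card : ℝ) ^ 2 * ((E.card : ℝ) / (q : ℝ)) + 2 * B * (E.card : ℝ) ^ 2 :=
    le_trans hchain1 (le_trans hchain2 (by linarith [hCS]))
  have hgoal : (E.card : ℝ) ^ 2 * ((E.card : ℝ) / (q : ℝ)) + 2 * B * (E.card : ℝ) ^ 2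
      ≤ 2 * ((q : ℝ)⁻¹ * (E.card : ℝ) ^ 3 + B * (E.card : ℝ) ^ 2) := by
    have e1 : (E.card : ℝ) ^ 2 * ((E.card : ℝ) / (q : ℝ)) = (q : ℝ)⁻¹ * (E.card : ℝ) ^ 3 := by
      field_simp
    rw [e1]
    have : (0:ℝ) ≤ (q : ℝ)⁻¹ * (E.card : ℝ) ^ 3 := by positivity
    linarith
  exact le_trans hfinal hgoal
end
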